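/- arXiv:1801.07220 — 7 statements merged into one kernel-verified Lean document; each statement's English description precedes it below -/
import Mathlib

section
/- Let Z be a density on a probability space (Ω, 𝓕, P). Then the Rényi entropy is nondecreasing in its order: for all q₁, q₂ ∈ ℝ with q₁ ≤ q₂ such that H_{q₁}(Z) and H_{q₂}(Z) are well defined and finite, one has H_{q₁}(Z) ≤ H_{q₂}(Z). -/
open MeasureTheory Real Filter

noncomputable section

variable {Ω : Type*} [MeasurableSpace Ω]

/-- `Z` is a probability density with respect to `P`. -/
def IsDensity (P : Measure Ω) (Z : Ω → ℝ) : Prop :=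
  Integrable Z P ∧ 0 ≤ᵐ[P] Z ∧ ∫ ω, Z ω ∂P = 1

/-- The Rényi entropy of order `q` of a density `Z`. -/
def renyiEntropy (P : Measure Ω) (Z : Ω → ℝ) (q : ℝ) : ℝ :=
  if q = 0 then -Real.log (P {ω | 0 < Z ω}).toReal
  else if q = 1 then ∫ ω, Z ω * Real.log (Z ω) ∂P
  else (q - 1)⁻¹ * Real.log (∫ ω, Z ω ^ q ∂P)

/-- The Rényi entropy of order `q` of `Z` is well defined and finite:
the defining expectation is finite, and for negative orders `Z > 0` a.s. -/
def RenyiFinite (P : Measure Ω) (Z : Ω → ℝ) (q : ℝ) : Prop :=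
  (q = 1 → Integrable (fun ω => Z ω * Real.log (Z ω)) P) ∧
  (q ≠ 0 → q ≠ 1 → Integrable (fun ω => Z ω ^ q) P) ∧
  (q < 0 → ∀ᵐ ω ∂P, 0 < Z ω)

/-! ### Auxiliary pointwise inequalities -/

lemma my_bernoulli_nonpos {t p : ℝ} (ht : 0 < t) (hp : p ≤ 0) :
    1 + p * (t - 1) ≤ t ^ p := by
  have h1 : 1 + p * Real.log t ≤ Real.exp (p * Real.log t) := by
    have := Real.add_one_le_exp (p * Real.log t); linarith
  have h2 : Real.log t ≤ t - 1 := Real.log_le_sub_one_of_pos ht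
  have h3 : p * (t - 1) ≤ p * Real.log t := mul_le_mul_of_nonpos_left h2 hp
  have h4 : Real.exp (p * Real.log t) = t ^ p := by
    rw [Real.rpow_def_of_pos ht, mul_comm]
  linarith

lemma my_tangent_le {x m p : ℝ} (hx : 0 < x) (hm : 0 < m) (hp : p ≤ 0 ∨ 1 ≤ p) :
    m ^ p + p * m ^ (p - 1) * (x - m) ≤ x ^ p := by
  have ht : 0 < x / m := div_pos hx hm
  have key : 1 + p * (x / m - 1) ≤ (x / m) ^ p := by
    rcases hp with hp | hp
    · exact my_bernoulli_nonpos ht hp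
    · have h := one_add_mul_self_le_rpow_one_add (s := x / m - 1) (by linarith) hp
      simpa using h
  have hmp : 0 < m ^ p := Real.rpow_pos_of_pos hm p
  have hxp : (x / m) ^ p = x ^ p / m ^ p := Real.div_rpow hx.le hm.le p
  have hm1 : m ^ (p - 1) = m ^ p / m := by
    rw [Real.rpow_sub hm, Real.rpow_one]
  have hmul := mul_le_mul_of_nonneg_left key hmp.le
  have e1 : m ^ p * (1 + p * (x / m - 1)) = m ^ p + p * m ^ (p - 1) * (x - m) := by
    rw [hm1]; field_simp
  have e2 : m ^ p * ((x / m) ^ p) = x ^ p := by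
    rw [hxp]; field_simp
  linarith [hmul, e1 ▸ hmul]

lemma my_tangent_ge {x m p : ℝ} (hx : 0 < x) (hm : 0 < m) (hp0 : 0 ≤ p) (hp1 : p ≤ 1) :
    x ^ p ≤ m ^ p + p * m ^ (p - 1) * (x - m) := by
  have key : (x / m) ^ p ≤ 1 + p * (x / m - 1) := by
    have h := rpow_one_add_le_one_add_mul_self (s := x / m - 1)
      (by have := div_pos hx hm; linarith) hp0 hp1
    simpa using h
  have hmp : 0 < m ^ p := Real.rpow_pos_of_pos hm p
  have hxp : (x / m) ^ p = x ^ p / m ^ p := Real.div_rpow hx.le hm.le p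
  have hm1 : m ^ (p - 1) = m ^ p / m := by
    rw [Real.rpow_sub hm, Real.rpow_one]
  have hmul := mul_le_mul_of_nonneg_left key hmp.le
  have e1 : m ^ p * (1 + p * (x / m - 1)) = m ^ p + p * m ^ (p - 1) * (x - m) := by
    rw [hm1]; field_simp
  have e2 : m ^ p * ((x / m) ^ p) = x ^ p := by
    rw [hxp]; field_simp
  linarith [hmul]

lemma mul_rpow_sub_one {x q : ℝ} (hx : 0 ≤ x) (hq : q ≠ 0) :
    x * x ^ (q - 1) = x ^ q := by
  rcases hx.eq_or_lt with h | h
  · rw [← h, Real.zero_rpow hq, zero_mul]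
  · have h2 := Real.rpow_add h 1 (q - 1)
    rw [Real.rpow_one] at h2
    have h3 : 1 + (q - 1) = q := by ring
    rw [h3] at h2
    exact h2.symm

/-! ### Weighted Jensen inequalities via tangent lines -/

lemma my_wjensen_convex (P : Measure Ω) [IsProbabilityMeasure P]
    (W g : Ω → ℝ) (p : ℝ)
    (hW0 : 0 ≤ᵐ[P] W) (hWint : Integrable W P) (hW1 : ∫ ω, W ω ∂P = 1)
    (hg : ∀ᵐ ω ∂P, 0 < W ω → 0 < g ω)
    (hp : p ≤ 0 ∨ 1 ≤ p)
    (hWg : Integrable (fun ω => W ω * g ω) P)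
    (hWgp : Integrable (fun ω => W ω * g ω ^ p) P)
    (hm : 0 < ∫ ω, W ω * g ω ∂P) :
    (∫ ω, W ω * g ω ∂P) ^ p ≤ ∫ ω, W ω * g ω ^ p ∂P := by
  set m := ∫ ω, W ω * g ω ∂P with hmdef
  set a := m ^ p - p * m ^ (p - 1) * m with hadef
  set b := p * m ^ (p - 1) with hbdef
  have key : (fun ω => a * W ω + b * (W ω * g ω)) ≤ᵐ[P] fun ω => W ω * g ω ^ p := by
    filter_upwards [hW0, hg] with ω h0 h1
    rcases h0.eq_or_lt with h | h
    · simp [← h]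
    · have ht := my_tangent_le (h1 h) hm hp
      have h2 := mul_le_mul_of_nonneg_left ht h.le
      calc a * W ω + b * (W ω * g ω)
          = W ω * (m ^ p + p * m ^ (p - 1) * (g ω - m)) := by rw [hadef, hbdef]; ring
        _ ≤ W ω * g ω ^ p := h2
  have hint : Integrable (fun ω => a * W ω + b * (W ω * g ω)) P :=
    (hWint.const_mul a).add (hWg.const_mul b)
  have hmono := integral_mono_ae hint hWgp key
  have hcalc : ∫ ω, (a * W ω + b * (W ω * g ω)) ∂P = a + b * m := by
    rw [integral_add (hWint.const_mul a) (hWg.const_mul b), integral_const_mul,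
      integral_const_mul, hW1, ← hmdef]; ring
  rw [hcalc] at hmono
  have he : a + b * m = m ^ p := by rw [hadef, hbdef]; ring
  linarith

lemma my_wjensen_concave (P : Measure Ω) [IsProbabilityMeasure P]
    (W g : Ω → ℝ) (p : ℝ)
    (hW0 : 0 ≤ᵐ[P] W) (hWint : Integrable W P) (hW1 : ∫ ω, W ω ∂P = 1)
    (hg : ∀ᵐ ω ∂P, 0 < W ω → 0 < g ω)
    (hp0 : 0 ≤ p) (hp1 : p ≤ 1)
    (hWg : Integrable (fun ω => W ω * g ω) P)
    (hWgp : Integrable (fun ω => W ω * g ω ^ p) P)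
    (hm : 0 < ∫ ω, W ω * g ω ∂P) :
    ∫ ω, W ω * g ω ^ p ∂P ≤ (∫ ω, W ω * g ω ∂P) ^ p := by
  set m := ∫ ω, W ω * g ω ∂P with hmdef
  set a := m ^ p - p * m ^ (p - 1) * m with hadef
  set b := p * m ^ (p - 1) with hbdef
  have key : (fun ω => W ω * g ω ^ p) ≤ᵐ[P] fun ω => a * W ω + b * (W ω * g ω) := by
    filter_upwards [hW0, hg] with ω h0 h1
    rcases h0.eq_or_lt with h | h
    · simp [← h]
    · have ht := my_tangent_ge (h1 h) hm hp0 hp1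
      have h2 := mul_le_mul_of_nonneg_left ht h.le
      calc W ω * g ω ^ p
          ≤ W ω * (m ^ p + p * m ^ (p - 1) * (g ω - m)) := h2
        _ = a * W ω + b * (W ω * g ω) := by rw [hadef, hbdef]; ring
  have hint : Integrable (fun ω => a * W ω + b * (W ω * g ω)) P :=
    (hWint.const_mul a).add (hWg.const_mul b)
  have hmono := integral_mono_ae hWgp hint key
  have hcalc : ∫ ω, (a * W ω + b * (W ω * g ω)) ∂P = a + b * m := by
    rw [integral_add (hWint.const_mul a) (hWg.const_mul b), integral_const_mul,
      integral_const_mul, hW1, ← hmdef]; ring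
  rw [hcalc] at hmono
  have he : a + b * m = m ^ p := by rw [hadef, hbdef]; ring
  linarith

lemma my_wjensen_log (P : Measure Ω) [IsProbabilityMeasure P]
    (W g : Ω → ℝ)
    (hW0 : 0 ≤ᵐ[P] W) (hWint : Integrable W P) (hW1 : ∫ ω, W ω ∂P = 1)
    (hg : ∀ᵐ ω ∂P, 0 < W ω → 0 < g ω)
    (hWg : Integrable (fun ω => W ω * g ω) P)
    (hWlg : Integrable (fun ω => W ω * Real.log (g ω)) P)
    (hm : 0 < ∫ ω, W ω * g ω ∂P) :
    ∫ ω, W ω * Real.log (g ω) ∂P ≤ Real.log (∫ ω, W ω * g ω ∂P) := by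
  set m := ∫ ω, W ω * g ω ∂P with hmdef
  set a := Real.log m - 1 with hadef
  set b := m⁻¹ with hbdef
  have key : (fun ω => W ω * Real.log (g ω)) ≤ᵐ[P] fun ω => a * W ω + b * (W ω * g ω) := by
    filter_upwards [hW0, hg] with ω h0 h1
    rcases h0.eq_or_lt with h | h
    · simp [← h]
    · have hgw := h1 h
      have hlog : Real.log (g ω / m) ≤ g ω / m - 1 :=
        Real.log_le_sub_one_of_pos (div_pos hgw hm)
      rw [Real.log_div hgw.ne' hm.ne'] at hlog
      have h2 : Real.log (g ω) ≤ Real.log m - 1 + m⁻¹ * g ω := by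
        have : g ω / m = m⁻¹ * g ω := by field_simp
        linarith [hlog, this ▸ hlog]
      have h3 := mul_le_mul_of_nonneg_left h2 h.le
      calc W ω * Real.log (g ω) ≤ W ω * (Real.log m - 1 + m⁻¹ * g ω) := h3
        _ = a * W ω + b * (W ω * g ω) := by rw [hadef, hbdef]; ring
  have hint : Integrable (fun ω => a * W ω + b * (W ω * g ω)) P :=
    (hWint.const_mul a).add (hWg.const_mul b)
  have hmono := integral_mono_ae hWlg hint key
  have hcalc : ∫ ω, (a * W ω + b * (W ω * g ω)) ∂P = a + b * m := by
    rw [integral_add (hWint.const_mul a) (hWg.const_mul b), integral_const_mul,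
      integral_const_mul, hW1, ← hmdef]; ring
  rw [hcalc] at hmono
  have he : a + b * m = Real.log m := by
    rw [hadef, hbdef]; field_simp; ring
  linarith

/-! ### Facts about densities -/

lemma my_density_support_pos (P : Measure Ω) [IsProbabilityMeasure P] {Z : Ω → ℝ}
    (hZ : IsDensity P Z) : 0 < P {ω | 0 < Z ω} := by
  obtain ⟨hint, h0, h1⟩ := hZ
  have hpos : 0 < ∫ ω, Z ω ∂P := by rw [h1]; norm_num
  rw [integral_pos_iff_support_of_nonneg_ae h0 hint] at hpos
  have hneg : P {ω | Z ω < 0} = 0 := by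
    have h2 := ae_iff.mp h0
    simpa [not_le] using h2
  have hsub : Function.support Z ⊆ {ω | 0 < Z ω} ∪ {ω | Z ω < 0} := by
    intro ω h
    rcases lt_trichotomy (Z ω) 0 with h' | h' | h'
    · exact Or.inr h'
    · exact absurd h' h
    · exact Or.inl h'
  have h4 : P (Function.support Z) ≤ P {ω | 0 < Z ω} + P {ω | Z ω < 0} :=
    le_trans (measure_mono hsub) (measure_union_le _ _)
  rw [hneg, add_zero] at h4
  exact lt_of_lt_of_le hpos h4

lemma my_integral_rpow_pos (P : Measure Ω) [IsProbabilityMeasure P] {Z : Ω → ℝ}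
    (hZ : IsDensity P Z) {q : ℝ} (hq : q ≠ 0)
    (hint : Integrable (fun ω => Z ω ^ q) P) : 0 < ∫ ω, Z ω ^ q ∂P := by
  have h0 : 0 ≤ᵐ[P] fun ω => Z ω ^ q := hZ.2.1.mono fun ω h => Real.rpow_nonneg h q
  rw [integral_pos_iff_support_of_nonneg_ae h0 hint]
  refine lt_of_lt_of_le (my_density_support_pos P hZ) (measure_mono ?_)
  intro ω h
  exact (Real.rpow_pos_of_pos h q).ne'

lemma my_mul_rpow_neg_one {Z : Ω → ℝ} {ω : Ω} (h0 : 0 ≤ Z ω) :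
    Z ω * Z ω ^ (-1 : ℝ) = ({ω | 0 < Z ω}).indicator (fun _ => (1 : ℝ)) ω := by
  rcases h0.eq_or_lt with h | h
  · rw [Set.indicator_of_notMem (by simp [← h])]
    rw [← h, zero_mul]
  · have hmem : ω ∈ {ω | 0 < Z ω} := h
    rw [Set.indicator_of_mem hmem, Real.rpow_neg_one]
    field_simp

lemma my_renyiEntropy_of_ne (P : Measure Ω) (Z : Ω → ℝ) {q : ℝ} (hq0 : q ≠ 0) (hq1 : q ≠ 1) :
    renyiEntropy P Z q = (q - 1)⁻¹ * Real.log (∫ ω, Z ω ^ q ∂P) := by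
  simp [renyiEntropy, hq0, hq1]

lemma my_renyiEntropy_zero (P : Measure Ω) (Z : Ω → ℝ) :
    renyiEntropy P Z 0 = -Real.log (P {ω | 0 < Z ω}).toReal := by
  simp [renyiEntropy]

lemma my_renyiEntropy_one (P : Measure Ω) (Z : Ω → ℝ) :
    renyiEntropy P Z 1 = ∫ ω, Z ω * Real.log (Z ω) ∂P := by
  norm_num [renyiEntropy]

/-! ### Main theorem for strongly measurable densities -/

theorem renyi_aux (P : Measure Ω) [IsProbabilityMeasure P] (Z : Ω → ℝ)
    (hsm : StronglyMeasurable Z)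
    (hZ : IsDensity P Z) (q₁ q₂ : ℝ) (hq : q₁ ≤ q₂)
    (h₁ : RenyiFinite P Z q₁) (h₂ : RenyiFinite P Z q₂) :
    renyiEntropy P Z q₁ ≤ renyiEntropy P Z q₂ := by
  rcases eq_or_lt_of_le hq with rfl | hlt
  · exact le_rfl
  obtain ⟨hZint, hZ0, hZ1⟩ := hZ
  have hZd : IsDensity P Z := ⟨hZint, hZ0, hZ1⟩
  have hA : MeasurableSet {ω | 0 < Z ω} := measurableSet_lt measurable_const hsm.measurable
  have hApos : 0 < P {ω | 0 < Z ω} := my_density_support_pos P hZd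
  have hrpos : 0 < (P {ω | 0 < Z ω}).toReal :=
    ENNReal.toReal_pos hApos.ne' (measure_ne_top _ _)
  have hE1 : ∀ q : ℝ, q ≠ 0 → (fun ω => Z ω * Z ω ^ (q - 1)) =ᵐ[P] fun ω => Z ω ^ q := by
    intro q hq0
    filter_upwards [hZ0] with ω h0
    exact mul_rpow_sub_one h0 hq0
  have hgpos : ∀ c : ℝ, ∀ᵐ ω ∂P, 0 < Z ω → 0 < Z ω ^ c :=
    fun c => Eventually.of_forall fun ω h => Real.rpow_pos_of_pos h c
  have hind : (fun ω => Z ω * Z ω ^ (-1 : ℝ)) =ᵐ[P]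
      ({ω | 0 < Z ω}).indicator (fun _ => (1 : ℝ)) := by
    filter_upwards [hZ0] with ω h0
    exact my_mul_rpow_neg_one h0
  have hindInt : Integrable (({ω | 0 < Z ω}).indicator (fun _ => (1 : ℝ))) P :=
    (integrable_const (1 : ℝ)).indicator hA
  have hindVal : ∫ ω, ({ω | 0 < Z ω}).indicator (fun _ => (1 : ℝ)) ω ∂P
      = (P {ω | 0 < Z ω}).toReal := by
    rw [integral_indicator_const (1 : ℝ) hA]
    simp
    rfl
  by_cases h20 : q₂ = 0
  · -- Case q₁ < q₂ = 0
    subst h20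
    have hq₁neg : q₁ < 0 := hlt
    have hq₁0 : q₁ ≠ 0 := ne_of_lt hq₁neg
    have hq₁1 : q₁ ≠ 1 := by linarith
    have hZpos := h₁.2.2 hq₁neg
    have hIint : Integrable (fun ω => Z ω ^ q₁) P := h₁.2.1 hq₁0 hq₁1
    have hIpos := my_integral_rpow_pos P hZd hq₁0 hIint
    have hP1 : P {ω | 0 < Z ω} = 1 := by
      rw [← prob_compl_eq_zero_iff hA]
      have h2 := ae_iff.mp hZpos
      simpa [Set.compl_setOf] using h2
    have hjen := my_wjensen_convex P (fun _ => (1 : ℝ)) Z q₁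
      (Eventually.of_forall fun _ => zero_le_one) (integrable_const 1) (by simp)
      (hZpos.mono fun ω h _ => h) (Or.inl hq₁neg.le)
      (by simpa using hZint) (by simpa using hIint)
      (by simp only [one_mul]; rw [hZ1]; norm_num)
    simp only [one_mul] at hjen
    rw [hZ1, Real.one_rpow] at hjen
    have hlog : 0 ≤ Real.log (∫ ω, Z ω ^ q₁ ∂P) := Real.log_nonneg hjen
    have hinv : (q₁ - 1)⁻¹ ≤ 0 := inv_nonpos.mpr (by linarith)
    rw [my_renyiEntropy_of_ne P Z hq₁0 hq₁1, my_renyiEntropy_zero P Z, hP1]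
    simp only [ENNReal.toReal_one, Real.log_one, neg_zero]
    exact mul_nonpos_iff.mpr (Or.inr ⟨hinv, hlog⟩)
  by_cases h21 : q₂ = 1
  · -- Case q₁ < q₂ = 1
    subst h21
    have hq₁1 : q₁ ≠ 1 := ne_of_lt hlt
    have hZlZ : Integrable (fun ω => Z ω * Real.log (Z ω)) P := h₂.1 rfl
    by_cases h10 : q₁ = 0
    · -- q₁ = 0, q₂ = 1
      subst h10
      have hWg : Integrable (fun ω => Z ω * Z ω ^ (-1 : ℝ)) P := hindInt.congr hind.symm
      have hlgeq : (fun ω => Z ω * Real.log (Z ω ^ (-1 : ℝ))) =ᵐ[P]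
          fun ω => -(Z ω * Real.log (Z ω)) := by
        filter_upwards [hZ0] with ω h0
        rcases h0.eq_or_lt with h | h
        · rw [← h]; simp
        · rw [Real.log_rpow h]; ring
      have hWlg : Integrable (fun ω => Z ω * Real.log (Z ω ^ (-1 : ℝ))) P :=
        hZlZ.neg.congr hlgeq.symm
      have hmval : ∫ ω, Z ω * Z ω ^ (-1 : ℝ) ∂P = (P {ω | 0 < Z ω}).toReal := by
        rw [integral_congr_ae hind, hindVal]
      have hjen := my_wjensen_log P Z (fun ω => Z ω ^ (-1 : ℝ)) hZ0 hZint hZ1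
        (hgpos (-1)) hWg hWlg (by rw [hmval]; exact hrpos)
      rw [hmval, integral_congr_ae hlgeq, integral_neg] at hjen
      rw [my_renyiEntropy_zero P Z, my_renyiEntropy_one P Z]
      linarith
    · -- 0 ≠ q₁ < 1 = q₂
      have hq₁lt : q₁ < 1 := hlt
      have hIint : Integrable (fun ω => Z ω ^ q₁) P := h₁.2.1 h10 hq₁1
      have hIpos := my_integral_rpow_pos P hZd h10 hIint
      have hWg : Integrable (fun ω => Z ω * Z ω ^ (q₁ - 1)) P :=
        hIint.congr (hE1 q₁ h10).symm
      have hlgeq : (fun ω => Z ω * Real.log (Z ω ^ (q₁ - 1))) =ᵐ[P]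
          fun ω => (q₁ - 1) * (Z ω * Real.log (Z ω)) := by
        filter_upwards [hZ0] with ω h0
        rcases h0.eq_or_lt with h | h
        · rw [← h]; simp
        · rw [Real.log_rpow h]; ring
      have hWlg : Integrable (fun ω => Z ω * Real.log (Z ω ^ (q₁ - 1))) P :=
        (hZlZ.const_mul (q₁ - 1)).congr hlgeq.symm
      have hmval : ∫ ω, Z ω * Z ω ^ (q₁ - 1) ∂P = ∫ ω, Z ω ^ q₁ ∂P :=
        integral_congr_ae (hE1 q₁ h10)
      have hjen := my_wjensen_log P Z (fun ω => Z ω ^ (q₁ - 1)) hZ0 hZint hZ1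
        (hgpos (q₁ - 1)) hWg hWlg (by rw [hmval]; exact hIpos)
      rw [hmval, integral_congr_ae hlgeq, integral_const_mul] at hjen
      -- hjen : (q₁ - 1) * ∫ Z log Z ≤ log I₁
      have hinv : (q₁ - 1)⁻¹ ≤ 0 := inv_nonpos.mpr (by linarith)
      have h5 := mul_le_mul_of_nonpos_left hjen hinv
      have h6 : (q₁ - 1)⁻¹ * ((q₁ - 1) * ∫ ω, Z ω * Real.log (Z ω) ∂P)
          = ∫ ω, Z ω * Real.log (Z ω) ∂P := by
        rw [← mul_assoc, inv_mul_cancel₀ (by intro h; apply hq₁1; linarith), one_mul]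
      rw [h6] at h5
      rw [my_renyiEntropy_of_ne P Z h10 hq₁1, my_renyiEntropy_one P Z]
      exact h5
  -- Now q₂ ∉ {0, 1}
  have hI2int : Integrable (fun ω => Z ω ^ q₂) P := h₂.2.1 h20 h21
  have hI2pos := my_integral_rpow_pos P hZd h20 hI2int
  have hq₂1' : q₂ - 1 ≠ 0 := fun h => h21 (by linarith)
  have hWg : Integrable (fun ω => Z ω * Z ω ^ (q₂ - 1)) P :=
    hI2int.congr (hE1 q₂ h20).symm
  have hmval : ∫ ω, Z ω * Z ω ^ (q₂ - 1) ∂P = ∫ ω, Z ω ^ q₂ ∂P :=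
    integral_congr_ae (hE1 q₂ h20)
  by_cases h10 : q₁ = 0
  · -- q₁ = 0 < q₂, q₂ ∉ {0,1}
    subst h10
    have hq₂pos : 0 < q₂ := hlt
    set p := -(q₂ - 1)⁻¹ with hpdef
    have hexp : (q₂ - 1) * p = -1 := by
      rw [hpdef]; field_simp
    have hp : p ≤ 0 ∨ 1 ≤ p := by
      rcases lt_or_gt_of_ne h21 with h | h
      · right
        rw [hpdef, ← inv_neg]
        rw [one_le_inv_iff₀]
        constructor <;> linarith
      · left
        rw [hpdef, neg_nonpos]
        exact inv_nonneg.mpr (by linarith)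
    have hWgp : Integrable (fun ω => Z ω * (Z ω ^ (q₂ - 1)) ^ p) P := by
      refine hindInt.congr ?_
      symm
      filter_upwards [hZ0] with ω h0
      rw [← Real.rpow_mul h0, hexp]
      exact my_mul_rpow_neg_one h0
    have hgpval : ∫ ω, Z ω * (Z ω ^ (q₂ - 1)) ^ p ∂P = (P {ω | 0 < Z ω}).toReal := by
      rw [← hindVal]
      refine integral_congr_ae ?_
      filter_upwards [hZ0] with ω h0
      rw [← Real.rpow_mul h0, hexp]
      exact my_mul_rpow_neg_one h0
    have hjen := my_wjensen_convex P Z (fun ω => Z ω ^ (q₂ - 1)) p hZ0 hZint hZ1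
      (hgpos (q₂ - 1)) hp hWg hWgp (by rw [hmval]; exact hI2pos)
    rw [hmval, hgpval] at hjen
    have hlog : Real.log ((∫ ω, Z ω ^ q₂ ∂P) ^ p) ≤ Real.log (P {ω | 0 < Z ω}).toReal :=
      (Real.log_le_log_iff (Real.rpow_pos_of_pos hI2pos p) hrpos).mpr hjen
    rw [Real.log_rpow hI2pos] at hlog
    rw [my_renyiEntropy_zero P Z, my_renyiEntropy_of_ne P Z h20 h21]
    rw [hpdef] at hlog
    linarith
  by_cases h11 : q₁ = 1
  · -- q₁ = 1 < q₂
    subst h11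
    have hZlZ : Integrable (fun ω => Z ω * Real.log (Z ω)) P := h₁.1 rfl
    have hlgeq : (fun ω => Z ω * Real.log (Z ω ^ (q₂ - 1))) =ᵐ[P]
        fun ω => (q₂ - 1) * (Z ω * Real.log (Z ω)) := by
      filter_upwards [hZ0] with ω h0
      rcases h0.eq_or_lt with h | h
      · rw [← h]; simp
      · rw [Real.log_rpow h]; ring
    have hWlg : Integrable (fun ω => Z ω * Real.log (Z ω ^ (q₂ - 1))) P :=
      (hZlZ.const_mul (q₂ - 1)).congr hlgeq.symm
    have hjen := my_wjensen_log P Z (fun ω => Z ω ^ (q₂ - 1)) hZ0 hZint hZ1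
      (hgpos (q₂ - 1)) hWg hWlg (by rw [hmval]; exact hI2pos)
    rw [hmval, integral_congr_ae hlgeq, integral_const_mul] at hjen
    have hq₂gt : 1 < q₂ := hlt
    have hinv : 0 ≤ (q₂ - 1)⁻¹ := inv_nonneg.mpr (by linarith)
    have h5 := mul_le_mul_of_nonneg_left hjen hinv
    have h6 : (q₂ - 1)⁻¹ * ((q₂ - 1) * ∫ ω, Z ω * Real.log (Z ω) ∂P)
        = ∫ ω, Z ω * Real.log (Z ω) ∂P := by
      rw [← mul_assoc, inv_mul_cancel₀ hq₂1', one_mul]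
    rw [h6] at h5
    rw [my_renyiEntropy_one P Z, my_renyiEntropy_of_ne P Z h20 h21]
    exact h5
  · -- generic case : q₁, q₂ ∉ {0, 1}
    have hq₁1' : q₁ - 1 ≠ 0 := fun h => h11 (by linarith)
    have hI1int : Integrable (fun ω => Z ω ^ q₁) P := h₁.2.1 h10 h11
    have hI1pos := my_integral_rpow_pos P hZd h10 hI1int
    set p := (q₁ - 1) / (q₂ - 1) with hpdef
    have hexp : (q₂ - 1) * p = q₁ - 1 := by
      rw [hpdef]; field_simp
    have hWgpeq : (fun ω => Z ω * (Z ω ^ (q₂ - 1)) ^ p) =ᵐ[P] fun ω => Z ω ^ q₁ := by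
      filter_upwards [hZ0] with ω h0
      rw [← Real.rpow_mul h0, hexp]
      exact mul_rpow_sub_one h0 h10
    have hWgp : Integrable (fun ω => Z ω * (Z ω ^ (q₂ - 1)) ^ p) P :=
      hI1int.congr hWgpeq.symm
    have hgpval : ∫ ω, Z ω * (Z ω ^ (q₂ - 1)) ^ p ∂P = ∫ ω, Z ω ^ q₁ ∂P :=
      integral_congr_ae hWgpeq
    rw [my_renyiEntropy_of_ne P Z h10 h11, my_renyiEntropy_of_ne P Z h20 h21]
    rcases lt_or_gt_of_ne h11 with hq₁lt | hq₁gt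
    · -- q₁ < 1 : convex case
      have hp : p ≤ 0 ∨ 1 ≤ p := by
        rcases lt_or_gt_of_ne h21 with h | h
        · right
          rw [hpdef, le_div_iff_of_neg (by linarith : q₂ - 1 < 0)]
          linarith
        · left
          exact le_of_lt (div_neg_of_neg_of_pos (by linarith) (by linarith))
      have hjen := my_wjensen_convex P Z (fun ω => Z ω ^ (q₂ - 1)) p hZ0 hZint hZ1
        (hgpos (q₂ - 1)) hp hWg hWgp (by rw [hmval]; exact hI2pos)
      rw [hmval, hgpval] at hjen
      have hlog : Real.log ((∫ ω, Z ω ^ q₂ ∂P) ^ p) ≤ Real.log (∫ ω, Z ω ^ q₁ ∂P) :=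
        (Real.log_le_log_iff (Real.rpow_pos_of_pos hI2pos p) hI1pos).mpr hjen
      rw [Real.log_rpow hI2pos] at hlog
      have hinv : (q₁ - 1)⁻¹ ≤ 0 := inv_nonpos.mpr (by linarith)
      have h5 := mul_le_mul_of_nonpos_left hlog hinv
      have h6 : (q₁ - 1)⁻¹ * (p * Real.log (∫ ω, Z ω ^ q₂ ∂P))
          = (q₂ - 1)⁻¹ * Real.log (∫ ω, Z ω ^ q₂ ∂P) := by
        rw [hpdef]
        field_simp
      rw [h6] at h5
      exact h5
    · -- 1 < q₁ < q₂ : concave case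
      have hq₂gt : 1 < q₂ := by linarith
      have hp0 : 0 ≤ p := le_of_lt (div_pos (by linarith) (by linarith))
      have hp1 : p ≤ 1 := by
        rw [hpdef, div_le_one (by linarith : (0:ℝ) < q₂ - 1)]
        linarith
      have hjen := my_wjensen_concave P Z (fun ω => Z ω ^ (q₂ - 1)) p hZ0 hZint hZ1
        (hgpos (q₂ - 1)) hp0 hp1 hWg hWgp (by rw [hmval]; exact hI2pos)
      rw [hmval, hgpval] at hjen
      have hlog : Real.log (∫ ω, Z ω ^ q₁ ∂P) ≤ Real.log ((∫ ω, Z ω ^ q₂ ∂P) ^ p) :=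
        (Real.log_le_log_iff hI1pos (Real.rpow_pos_of_pos hI2pos p)).mpr hjen
      rw [Real.log_rpow hI2pos] at hlog
      have hinv : 0 ≤ (q₁ - 1)⁻¹ := inv_nonneg.mpr (by linarith)
      have h5 := mul_le_mul_of_nonneg_left hlog hinv
      have h6 : (q₁ - 1)⁻¹ * (p * Real.log (∫ ω, Z ω ^ q₂ ∂P))
          = (q₂ - 1)⁻¹ * Real.log (∫ ω, Z ω ^ q₂ ∂P) := by
        rw [hpdef]
        field_simp
      rw [h6] at h5
      exact h5

/-! ### Transfer along a.e. equality and the main theorem -/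

lemma my_renyiEntropy_congr (P : Measure Ω) {Z Z' : Ω → ℝ} (h : Z =ᵐ[P] Z') (q : ℝ) :
    renyiEntropy P Z q = renyiEntropy P Z' q := by
  have hset : P {ω | 0 < Z ω} = P {ω | 0 < Z' ω} := by
    refine measure_congr ?_
    refine (eventuallyEq_set.mpr ?_)
    filter_upwards [h] with ω hω
    simp [hω]
  have hint1 : ∫ ω, Z ω * Real.log (Z ω) ∂P = ∫ ω, Z' ω * Real.log (Z' ω) ∂P := by
    refine integral_congr_ae ?_
    filter_upwards [h] with ω hω
    rw [hω]
  have hint2 : ∫ ω, Z ω ^ q ∂P = ∫ ω, Z' ω ^ q ∂P := by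
    refine integral_congr_ae ?_
    filter_upwards [h] with ω hω
    rw [hω]
  unfold renyiEntropy
  rw [hset, hint1, hint2]

/-- The Rényi entropy of a density is nondecreasing in its order. -/
theorem renyiEntropy_mono (P : Measure Ω) [IsProbabilityMeasure P] (Z : Ω → ℝ)
    (hZ : IsDensity P Z) (q₁ q₂ : ℝ) (hq : q₁ ≤ q₂)
    (h₁ : RenyiFinite P Z q₁) (h₂ : RenyiFinite P Z q₂) :
    renyiEntropy P Z q₁ ≤ renyiEntropy P Z q₂ := by
  obtain ⟨hZint, hZ0, hZ1⟩ := hZ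
  set Z' := hZint.aestronglyMeasurable.mk Z with hZ'def
  have hae : Z =ᵐ[P] Z' := hZint.aestronglyMeasurable.ae_eq_mk
  have hsm : StronglyMeasurable Z' := hZint.aestronglyMeasurable.stronglyMeasurable_mk
  have hZ' : IsDensity P Z' := by
    refine ⟨hZint.congr hae, ?_, ?_⟩
    · filter_upwards [hZ0, hae] with ω h1 h2
      rw [← h2]; exact h1
    · rw [← hZ1]
      exact (integral_congr_ae hae).symm
  have htrans : ∀ q : ℝ, RenyiFinite P Z q → RenyiFinite P Z' q := by
    intro q ⟨ha, hb, hc⟩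
    refine ⟨?_, ?_, ?_⟩
    · intro h
      exact (ha h).congr (by filter_upwards [hae] with ω hω; rw [hω])
    · intro h h'
      exact (hb h h').congr (by filter_upwards [hae] with ω hω; rw [hω])
    · intro h
      filter_upwards [hc h, hae] with ω h1 h2
      rw [← h2]; exact h1
  rw [my_renyiEntropy_congr P hae q₁, my_renyiEntropy_congr P hae q₂]
  exact renyi_aux P Z' hsm hZ' q₁ q₂ hq (htrans q₁ h₁) (htrans q₂ h₂)

end
end

section
/- Let α ∈ [0,1) and p ∈ (0,1). Then for every essentially bounded random variable Y on a probability space (Ω, 𝓕, P), the Entropic Value-at-Risk of order p collapses to the essential supremum: EVaR_α^p(Y) = sup{ E[YZ] : Z a density } = ess sup Y. -/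
open MeasureTheory Real Filter

noncomputable section

variable {Ω : Type*} [MeasurableSpace Ω]

/-- Entropic Value-at-Risk with Rényi-entropy constraint of (dual/conjugate) order `q`:
the supremum of `E[Y Z]` over all densities `Z` with well-defined Rényi entropy
`H_q(Z) ≤ log (1/(1-α))` (and `E[Y Z]` defined). -/
def EVaRd (P : Measure Ω) (α q : ℝ) (Y : Ω → ℝ) : EReal :=
  sSup {x : EReal | ∃ Z : Ω → ℝ, IsDensity P Z ∧ RenyiFinite P Z q ∧
    renyiEntropy P Z q ≤ Real.log (1 / (1 - α)) ∧
    Integrable (fun ω => Y ω * Z ω) P ∧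
    x = ((∫ ω, Y ω * Z ω ∂P : ℝ) : EReal)}

/-- The Average Value-at-Risk: the supremum of `E[Y Z]` over all densities
`Z ≤ 1/(1-α)` a.s. -/
def AVaR (P : Measure Ω) (α : ℝ) (Y : Ω → ℝ) : EReal :=
  sSup {x : EReal | ∃ Z : Ω → ℝ, IsDensity P Z ∧ (∀ᵐ ω ∂P, Z ω ≤ 1 / (1 - α)) ∧
    Integrable (fun ω => Y ω * Z ω) P ∧
    x = ((∫ ω, Y ω * Z ω ∂P : ℝ) : EReal)}

/-- The Entropic Value-at-Risk of (primal) order `p`, with the Rényi-entropy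
constraint of the Hölder-conjugate order `p' = p/(p-1)`; for `p = 1` it is the AV@R. -/
def EVaR (P : Measure Ω) (α p : ℝ) (Y : Ω → ℝ) : EReal :=
  if p = 1 then AVaR P α Y else EVaRd P α (p / (p - 1)) Y

/-- for `α ∈ [0,1)` and `p ∈ (0,1)` the Entropic Value-at-Risk of
order `p` of a bounded random variable collapses to the essential supremum:
`EVaR_α^p(Y) = sup{E[YZ] : Z a density} = ess sup Y`. -/
theorem evar_collapse (P : Measure Ω) [IsProbabilityMeasure P]
    (α p : ℝ) (hα : α ∈ Set.Ico (0 : ℝ) 1) (hp : p ∈ Set.Ioo (0 : ℝ) 1)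
    (Y : Ω → ℝ) (hY : MemLp Y ⊤ P) :
    EVaR P α p Y =
      sSup {x : EReal | ∃ Z : Ω → ℝ, IsDensity P Z ∧
        Integrable (fun ω => Y ω * Z ω) P ∧ x = ((∫ ω, Y ω * Z ω ∂P : ℝ) : EReal)} ∧
    EVaR P α p Y = ((essSup Y P : ℝ) : EReal) := by
  obtain ⟨hα0, hα1⟩ := hα
  obtain ⟨hp0, hp1⟩ := hp
  have hα1' : (0:ℝ) < 1 - α := by linarith
  set q : ℝ := p / (p - 1) with hq_def
  have hq : q < 0 := div_neg_of_pos_of_neg hp0 (by linarith)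
  have hq0 : q ≠ 0 := hq.ne
  have hq1 : q ≠ 1 := by linarith
  have hEV : EVaR P α p Y = EVaRd P α q Y := by rw [EVaR, if_neg hp1.ne]
  -- log (1/(1-α)) ≥ 0
  have hlog : (0:ℝ) ≤ Real.log (1 / (1 - α)) := by
    apply Real.log_nonneg
    rw [le_div_iff₀ hα1']; linarith
  -- boundedness of Y
  have hYint : Integrable Y P := hY.integrable le_top
  obtain ⟨C, hC0, hCb⟩ : ∃ C : ℝ, 0 ≤ C ∧ ∀ᵐ ω ∂P, |Y ω| ≤ C := by
    refine ⟨(eLpNormEssSup Y P).toReal, ENNReal.toReal_nonneg, ?_⟩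
    have h1 : eLpNormEssSup Y P ≠ ⊤ := by
      have := hY.2; rw [eLpNorm_exponent_top] at this; exact this.ne
    filter_upwards [ae_le_eLpNormEssSup (f := Y) (μ := P)] with ω hω
    calc |Y ω| = ((‖Y ω‖₊ : ENNReal)).toReal := by
          simp [Real.norm_eq_abs]
      _ ≤ (eLpNormEssSup Y P).toReal := ENNReal.toReal_mono h1 hω
  have hbddLe : IsBoundedUnder (· ≤ ·) (ae P) Y :=
    ⟨C, eventually_map.2 (by filter_upwards [hCb] with ω h; exact (abs_le.1 h).2)⟩
  have hbddGe : IsBoundedUnder (· ≥ ·) (ae P) Y :=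
    ⟨-C, eventually_map.2 (by filter_upwards [hCb] with ω h; exact (abs_le.1 h).1)⟩
  set M : ℝ := essSup Y P with hM_def
  have hYleM : ∀ᵐ ω ∂P, Y ω ≤ M := ae_le_essSup hbddLe
  have hYgeC : ∀ᵐ ω ∂P, -C ≤ Y ω := by filter_upwards [hCb] with ω h; exact (abs_le.1 h).1
  have hintY_lb : -C ≤ ∫ ω, Y ω ∂P := by
    have := integral_mono_ae (integrable_const (-C)) hYint hYgeC
    simpa using this
  -- measurable representative
  set g : Ω → ℝ := hY.1.mk Y with hg_def
  have hgm : Measurable g := hY.1.stronglyMeasurable_mk.measurable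
  have hYg : Y =ᵐ[P] g := hY.1.ae_eq_mk
  set Sfull : Set EReal := {x : EReal | ∃ Z : Ω → ℝ, IsDensity P Z ∧
      Integrable (fun ω => Y ω * Z ω) P ∧ x = ((∫ ω, Y ω * Z ω ∂P : ℝ) : EReal)} with hSfull
  set Scon : Set EReal := {x : EReal | ∃ Z : Ω → ℝ, IsDensity P Z ∧ RenyiFinite P Z q ∧
      renyiEntropy P Z q ≤ Real.log (1 / (1 - α)) ∧
      Integrable (fun ω => Y ω * Z ω) P ∧
      x = ((∫ ω, Y ω * Z ω ∂P : ℝ) : EReal)} with hScon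
  -- upper bound
  have hub : ∀ x ∈ Sfull, x ≤ ((M : ℝ) : EReal) := by
    rintro x ⟨Z, ⟨hZint, hZnn, hZ1⟩, hYZint, rfl⟩
    rw [EReal.coe_le_coe_iff]
    calc ∫ ω, Y ω * Z ω ∂P ≤ ∫ ω, M * Z ω ∂P := by
          refine integral_mono_ae hYZint (hZint.const_mul M) ?_
          filter_upwards [hYleM, hZnn] with ω h1 h2
          exact mul_le_mul_of_nonneg_right h1 h2
      _ = M := by rw [integral_const_mul, hZ1, mul_one]
  -- lower bound
  have hlb : ∀ x : ℝ, x < M → ∃ y ∈ Scon, (x : EReal) < y := by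
    intro x hx
    set ε : ℝ := (M - x) / 2 with hε_def
    have hε : 0 < ε := by simp only [hε_def]; linarith
    set t : ℝ := x + ε with ht_def
    set A : Set Ω := {ω | t < g ω} with hA_def
    have hAm : MeasurableSet A := measurableSet_lt measurable_const hgm
    have hA0 : P A ≠ 0 := by
      intro h0
      have hgle : ∀ᵐ ω ∂P, g ω ≤ t := by
        rw [ae_iff]; simpa [hA_def, not_le] using h0
      have hYle : ∀ᵐ ω ∂P, Y ω ≤ t := by
        filter_upwards [hgle, hYg] with ω h1 h2; rw [h2]; exact h1
      have : M ≤ t := limsup_le_of_le hbddGe.isCoboundedUnder_le hYle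
      simp only [ht_def, hε_def] at this; linarith
    by_cases hA1 : P Aᶜ = 0
    · -- A has full measure: take Z = 1
      have hmem : ∀ᵐ ω ∂P, ω ∈ A := by
        rw [ae_iff]; exact hA1
      have hYget : ∀ᵐ ω ∂P, t ≤ Y ω := by
        filter_upwards [hmem, hYg] with ω h1 h2
        rw [h2]; exact le_of_lt h1
      refine ⟨((∫ ω, Y ω * (fun _ => (1:ℝ)) ω ∂P : ℝ) : EReal), ⟨fun _ => 1, ?_, ?_, ?_, ?_, rfl⟩, ?_⟩
      · exact ⟨integrable_const 1, Eventually.of_forall (fun _ => zero_le_one), by simp⟩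
      · refine ⟨fun h => absurd h hq1, fun _ _ => ?_, fun _ => Eventually.of_forall fun _ => one_pos⟩
        simpa [Real.one_rpow] using (integrable_const (1:ℝ) (μ := P))
      · rw [renyiEntropy, if_neg hq0, if_neg hq1]
        simpa [Real.one_rpow] using hlog
      · simpa using hYint
      · rw [EReal.coe_lt_coe_iff]
        have : t ≤ ∫ ω, Y ω ∂P := by
          have := integral_mono_ae (integrable_const t) hYint hYget
          simpa using this
        simp only [mul_one]
        calc x < t := by simp only [ht_def]; linarith
          _ ≤ _ := this
    · -- 0 < P A < 1
      set a : ℝ := (P A).toReal with ha_def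
      have ha0 : 0 < a := ENNReal.toReal_pos hA0 (measure_ne_top P A)
      have hac : (P Aᶜ).toReal = 1 - a := by
        rw [measure_compl hAm (measure_ne_top P A), measure_univ,
          ENNReal.toReal_sub_of_le prob_le_one ENNReal.one_ne_top, ENNReal.toReal_one]
      have ha1 : a < 1 := by
        have h1 : 0 < (P Aᶜ).toReal := ENNReal.toReal_pos hA1 (measure_ne_top P Aᶜ)
        rw [hac] at h1; linarith
      set K : ℝ := |x| + ε + C + 1 with hK_def
      have hK : 0 < K := by positivity
      set s : ℝ := (1 - a) ^ (-1 / q) with hs_def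
      have hs : 0 < s := Real.rpow_pos_of_pos (by linarith) _
      set δ : ℝ := min (min (1/2) (ε / (2 * K))) s with hδ_def
      have hδ0 : 0 < δ := lt_min (lt_min one_half_pos (by positivity)) hs
      have hδhalf : δ ≤ 1/2 := le_trans (min_le_left _ _) (min_le_left _ _)
      have hδεK : δ ≤ ε / (2 * K) := le_trans (min_le_left _ _) (min_le_right _ _)
      have hδs : δ ≤ s := min_le_right _ _
      have hδ1 : δ < 1 := lt_of_le_of_lt hδhalf (by norm_num)
      set c : ℝ := (1 - δ) / a with hc_def
      have hc0 : 0 < c := div_pos (by linarith) ha0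
      have hac1 : a * c = 1 - δ := by
        rw [hc_def, mul_comm, div_mul_cancel₀ _ ha0.ne']
      set Z : Ω → ℝ := fun ω => A.indicator (fun _ => c) ω + δ with hZ_def
      have hZm : Measurable Z :=
        (measurable_const.indicator hAm).add measurable_const
      have hZlb : ∀ ω, δ ≤ Z ω := fun ω =>
        le_add_of_nonneg_left (Set.indicator_nonneg (fun _ _ => hc0.le) ω)
      have hZpos : ∀ ω, 0 < Z ω := fun ω => lt_of_lt_of_le hδ0 (hZlb ω)
      have hZub : ∀ ω, Z ω ≤ c + δ := by
        intro ω
        by_cases h : ω ∈ A <;>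
          simp [hZ_def, Set.indicator_of_mem, Set.indicator_of_notMem, h, hc0.le]
      have hZint : Integrable Z P :=
        ((integrable_const c).indicator hAm).add (integrable_const δ)
      have hZ1 : ∫ ω, Z ω ∂P = 1 := by
        rw [hZ_def]
        rw [integral_add ((integrable_const c).indicator hAm) (integrable_const δ)]
        rw [integral_indicator hAm, setIntegral_const, integral_const]
        simp only [smul_eq_mul, measureReal_def, measure_univ, ENNReal.toReal_one, one_mul]
        rw [← ha_def, hac1]; ring
      -- integrability of Z^q
      have hZq_nonneg : ∀ ω, 0 ≤ Z ω ^ q := fun ω => Real.rpow_nonneg (hZpos ω).le _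
      have hZq_ub : ∀ ω, Z ω ^ q ≤ δ ^ q := fun ω =>
        Real.rpow_le_rpow_of_nonpos hδ0 (hZlb ω) hq.le
      have hZqm : Measurable fun ω => Z ω ^ q := by fun_prop
      have hZqint : Integrable (fun ω => Z ω ^ q) P := by
        refine (integrable_const (δ ^ q)).mono' hZqm.aestronglyMeasurable ?_
        refine Eventually.of_forall fun ω => ?_
        rw [Real.norm_eq_abs, abs_of_nonneg (hZq_nonneg ω)]
        exact hZq_ub ω
      -- entropy bound: ∫ Z^q ≥ 1
      have hδq : (1 - a) * δ ^ q ≥ 1 := by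
        have h1 : s ^ q ≤ δ ^ q := Real.rpow_le_rpow_of_nonpos hδ0 hδs hq.le
        have h2 : s ^ q = (1 - a)⁻¹ := by
          rw [hs_def, ← Real.rpow_mul (by linarith : (0:ℝ) ≤ 1 - a),
            div_mul_cancel₀ _ hq0, Real.rpow_neg_one]
        have h3 : (1 - a)⁻¹ ≤ δ ^ q := h2 ▸ h1
        have h4 : (1 - a) * (1 - a)⁻¹ ≤ (1 - a) * δ ^ q :=
          mul_le_mul_of_nonneg_left h3 (by linarith)
        rwa [mul_inv_cancel₀ (by linarith : (1:ℝ) - a ≠ 0)] at h4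
      have hZq_int_ge : 1 ≤ ∫ ω, Z ω ^ q ∂P := by
        have hpt : ∀ ω, Aᶜ.indicator (fun _ => δ ^ q) ω ≤ Z ω ^ q := by
          intro ω
          by_cases h : ω ∈ A
          · rw [Set.indicator_of_notMem (by simpa using h)]
            exact hZq_nonneg ω
          · rw [Set.indicator_of_mem (by simpa using h)]
            have : Z ω = δ := by
              simp [hZ_def, Set.indicator_of_notMem h]
            rw [this]
        have hind : ∫ ω, Aᶜ.indicator (fun _ => δ ^ q) ω ∂P = (1 - a) * δ ^ q := by
          rw [integral_indicator hAm.compl, setIntegral_const, smul_eq_mul, measureReal_def, hac]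
        calc (1:ℝ) ≤ (1 - a) * δ ^ q := hδq
          _ = ∫ ω, Aᶜ.indicator (fun _ => δ ^ q) ω ∂P := hind.symm
          _ ≤ ∫ ω, Z ω ^ q ∂P := by
              refine integral_mono_ae ((integrable_const _).indicator hAm.compl) hZqint ?_
              exact Eventually.of_forall hpt
      have hent : renyiEntropy P Z q ≤ Real.log (1 / (1 - α)) := by
        rw [renyiEntropy, if_neg hq0, if_neg hq1]
        refine le_trans ?_ hlog
        exact mul_nonpos_of_nonpos_of_nonneg (inv_nonpos.2 (by linarith)) (Real.log_nonneg hZq_int_ge)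
      -- integrability of Y * Z
      have hyz_eq : (fun ω => Y ω * Z ω) =
          fun ω => A.indicator (fun ω' => Y ω' * c) ω + δ * Y ω := by
        funext ω
        by_cases h : ω ∈ A <;>
          simp [hZ_def, Set.indicator_of_mem, Set.indicator_of_notMem, h] <;> ring
      have hYZint : Integrable (fun ω => Y ω * Z ω) P := by
        rw [hyz_eq]
        exact ((hYint.mul_const c).indicator hAm).add (hYint.const_mul δ)
      -- value bound
      have hval : x < ∫ ω, Y ω * Z ω ∂P := by
        have hsplit : ∫ ω, Y ω * Z ω ∂P =
            (∫ ω in A, Y ω * c ∂P) + δ * ∫ ω, Y ω ∂P := by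
          rw [hyz_eq, integral_add ((hYint.mul_const c).indicator hAm) (hYint.const_mul δ),
            integral_indicator hAm, integral_const_mul]
        have hA_lb : a * (t * c) ≤ ∫ ω in A, Y ω * c ∂P := by
          have hres : ∀ᵐ ω ∂(P.restrict A), t * c ≤ Y ω * c := by
            filter_upwards [ae_restrict_mem hAm, ae_restrict_of_ae hYg] with ω h1 h2
            have : t ≤ Y ω := by rw [h2]; exact le_of_lt h1
            exact mul_le_mul_of_nonneg_right this hc0.le
          have := setIntegral_mono_ae_restrict
            (integrableOn_const (measure_ne_top _ _))
            (hYint.mul_const c).integrableOn hres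
          simpa [smul_eq_mul, measureReal_def, ha_def] using this
        have hY_lb : δ * (-C) ≤ δ * ∫ ω, Y ω ∂P :=
          mul_le_mul_of_nonneg_left hintY_lb hδ0.le
        have hcomb : a * (t * c) + δ * (-C) ≤ ∫ ω, Y ω * Z ω ∂P := by
          rw [hsplit]; exact add_le_add hA_lb hY_lb
        have hval2 : x < a * (t * c) + δ * (-C) := by
          have h1 : a * (t * c) = t * (1 - δ) := by
            rw [show a * (t * c) = t * (a * c) by ring, hac1]
          rw [h1]
          have hxK : x + ε + C ≤ K := by
            have := le_abs_self x; simp only [hK_def]; linarith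
          have hδK : δ * K ≤ ε / 2 := by
            have := mul_le_mul_of_nonneg_right hδεK hK.le
            calc δ * K ≤ ε / (2 * K) * K := this
              _ = ε / 2 := by
                  rw [div_mul_eq_mul_div, mul_comm 2 K, ← div_div,
                    mul_div_assoc, div_self hK.ne', mul_one]
          have hδtC : δ * (x + ε + C) ≤ ε / 2 := by
            calc δ * (x + ε + C) ≤ δ * K := mul_le_mul_of_nonneg_left hxK hδ0.le
              _ ≤ ε / 2 := hδK
          have hexp : t * (1 - δ) + δ * (-C) = x + ε - δ * (x + ε + C) := by
            rw [ht_def]; ring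
          rw [hexp]; linarith
        linarith [hcomb, hval2]
      refine ⟨((∫ ω, Y ω * Z ω ∂P : ℝ) : EReal), ⟨Z, ?_, ?_, hent, hYZint, rfl⟩, ?_⟩
      · exact ⟨hZint, Eventually.of_forall (fun ω => (hZpos ω).le), hZ1⟩
      · exact ⟨fun h => absurd h hq1, fun _ _ => hZqint,
          fun _ => Eventually.of_forall hZpos⟩
      · exact EReal.coe_lt_coe_iff.2 hval
  -- assemble
  have hsub : Scon ⊆ Sfull := by
    rintro x ⟨Z, h1, _, _, h4, h5⟩; exact ⟨Z, h1, h4, h5⟩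
  have h1 : sSup Sfull ≤ ((M : ℝ) : EReal) := sSup_le hub
  have h2 : ((M : ℝ) : EReal) ≤ sSup Scon := by
    refine le_of_forall_lt fun cc hcc => ?_
    induction cc using EReal.rec with
    | bot =>
      obtain ⟨y, hy, hxy⟩ := hlb (M - 1) (by linarith)
      exact lt_sSup_iff.2 ⟨y, hy, lt_of_le_of_lt bot_le hxy⟩
    | coe r =>
      obtain ⟨y, hy, hxy⟩ := hlb r (EReal.coe_lt_coe_iff.1 hcc)
      exact lt_sSup_iff.2 ⟨y, hy, hxy⟩
    | top => exact absurd hcc (not_top_lt)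
  have h3 : sSup Scon ≤ sSup Sfull := sSup_le_sSup hsub
  have hcon : EVaR P α p Y = sSup Scon := hEV.trans rfl
  have hconM : sSup Scon = ((M : ℝ) : EReal) := le_antisymm (h3.trans h1) h2
  have hfullM : sSup Sfull = ((M : ℝ) : EReal) := le_antisymm h1 (h2.trans h3)
  exact ⟨hcon.trans (hconM.trans hfullM.symm), hcon.trans hconM⟩

end
end

section
/- Let α ∈ (0,1) and p < 0. Then for a nonnegative random variable Y on a probability space (Ω, 𝓕, P), EVaR_α^p(Y) < ∞ if and only if Y is essentially bounded. In particular, if Y is not essentially bounded then EVaR_α^p(Y) = ∞. -/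
open MeasureTheory Real Filter

noncomputable section

variable {Ω : Type*} [MeasurableSpace Ω]

/-- If `Y` is essentially bounded, then `EVaRd` is finite. -/
lemma evar_aux_bdd (P : Measure Ω) [IsProbabilityMeasure P] (α q : ℝ) (Y : Ω → ℝ)
    (hY : MemLp Y ⊤ P) : EVaRd P α q Y < ⊤ := by
  set C := (eLpNormEssSup Y P).toReal with hCdef
  have hfin : eLpNormEssSup Y P ≠ ⊤ := by
    have := hY.2
    rwa [eLpNorm_exponent_top, lt_top_iff_ne_top] at this
  have hC : ∀ᵐ ω ∂P, ‖Y ω‖ ≤ C := by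
    filter_upwards [ae_le_eLpNormEssSup (f := Y) (μ := P)] with ω h
    have := ENNReal.toReal_mono hfin h
    simpa [coe_nnnorm] using this
  refine lt_of_le_of_lt (sSup_le ?_) (EReal.coe_lt_top C)
  rintro x ⟨Z, hZd, -, -, hint, rfl⟩
  have hle : ∫ ω, Y ω * Z ω ∂P ≤ C := by
    have h1 : ∫ ω, Y ω * Z ω ∂P ≤ ∫ ω, C * Z ω ∂P := by
      refine integral_mono_ae hint (hZd.1.const_mul C) ?_
      filter_upwards [hC, hZd.2.1] with ω h1 h2
      exact mul_le_mul_of_nonneg_right (le_trans (le_abs_self _)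
        (by rwa [Real.norm_eq_abs] at h1)) h2
    calc ∫ ω, Y ω * Z ω ∂P ≤ ∫ ω, C * Z ω ∂P := h1
      _ = C * ∫ ω, Z ω ∂P := integral_const_mul _ _
      _ = C := by rw [hZd.2.2, mul_one]
  exact_mod_cast EReal.coe_le_coe_iff.2 hle

/-- If `Y ≥ 0` is not essentially bounded, then `EVaRd` of order `q ∈ (0,1)` is infinite. -/
lemma evar_aux_top (P : Measure Ω) [IsProbabilityMeasure P]
    (α q : ℝ) (hα : α ∈ Set.Ioo (0 : ℝ) 1) (hq0 : 0 < q) (hq1 : q < 1)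
    (Y : Ω → ℝ) (hYm : AEStronglyMeasurable Y P) (hY : 0 ≤ᵐ[P] Y)
    (hub : ¬ MemLp Y ⊤ P) : EVaRd P α q Y = ⊤ := by
  obtain ⟨hα0, hα1⟩ := hα
  obtain ⟨β, hβdef⟩ : ∃ x : ℝ, x = 1 - α := ⟨_, rfl⟩
  have hβ0 : 0 < β := by rw [hβdef]; linarith
  have hβ1 : β < 1 := by rw [hβdef]; linarith
  -- measurable representative
  obtain ⟨Y', hY'def⟩ : ∃ g : Ω → ℝ, g = hYm.mk Y := ⟨_, rfl⟩
  have hYY' : Y =ᵐ[P] Y' := hY'def ▸ hYm.ae_eq_mk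
  have hY'meas : Measurable Y' := hY'def ▸ hYm.measurable_mk
  have hY'nn : ∀ᵐ ω ∂P, 0 ≤ Y' ω := by
    filter_upwards [hY, hYY'] with ω h1 h2
    exact le_of_le_of_eq h1 h2
  -- unboundedness of Y'
  have hub' : ∀ N : ℝ, 0 < N → P {ω | N < Y' ω} ≠ 0 := by
    intro N hNpos hN
    apply hub
    have h1 : ∀ᵐ ω ∂P, Y' ω ≤ N := by
      rw [ae_iff]; simpa only [not_le] using hN
    refine memLp_top_of_bound hYm N ?_
    filter_upwards [hYY', hY, h1] with ω he hnn hle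
    have hnn' : 0 ≤ Y' ω := le_of_le_of_eq hnn he
    rw [he, Real.norm_eq_abs, abs_of_nonneg hnn']
    exact hle
  -- choose c with P {Y' ≤ c} ≥ β^(1/2)
  obtain ⟨r, hrdef⟩ : ∃ x : ℝ, x = β ^ ((1:ℝ)/2) := ⟨_, rfl⟩
  have hr0 : 0 < r := hrdef ▸ Real.rpow_pos_of_pos hβ0 _
  have hr1 : r < 1 := hrdef ▸ Real.rpow_lt_one hβ0.le hβ1 (by norm_num)
  obtain ⟨S, hSdef⟩ : ∃ f : ℕ → Set Ω, f = fun n : ℕ => {ω | (n : ℝ) < Y' ω} := ⟨_, rfl⟩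
  have hSm : ∀ n, MeasurableSet (S n) := by
    intro n; rw [hSdef]; exact measurableSet_lt measurable_const hY'meas
  have hanti : Antitone S := by
    intro m n hmn ω hω
    simp only [hSdef, Set.mem_setOf_eq] at hω ⊢
    exact lt_of_le_of_lt (by exact_mod_cast hmn) hω
  have hiInter : ⋂ n, S n = ∅ := by
    rw [hSdef]
    ext ω
    simp only [Set.mem_iInter, Set.mem_setOf_eq, Set.mem_empty_iff_false, iff_false, not_forall,
      not_lt]
    obtain ⟨n, hn⟩ := exists_nat_gt (Y' ω)
    exact ⟨n, hn.le⟩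
  have htend : Tendsto (fun n => P (S n)) atTop (nhds 0) := by
    have := tendsto_measure_iInter_atTop (μ := P) (fun n => (hSm n).nullMeasurableSet)
      hanti ⟨0, measure_ne_top P _⟩
    rwa [hiInter, measure_empty] at this
  have hεpos : (0 : ENNReal) < ENNReal.ofReal (1 - r) := by
    rw [ENNReal.ofReal_pos]; linarith
  obtain ⟨c, hc⟩ := (htend.eventually_lt_const hεpos).exists
  obtain ⟨B, hBdef⟩ : ∃ s : Set Ω, s = {ω | Y' ω ≤ (c : ℝ)} := ⟨_, rfl⟩
  have hBmeas : MeasurableSet B := hBdef ▸ measurableSet_le hY'meas measurable_const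
  have hBcompl : B = (S c)ᶜ := by
    rw [hBdef, hSdef]
    ext ω; simp [not_lt]
  obtain ⟨b, hbdef⟩ : ∃ x : ℝ, x = (P B).toReal := ⟨_, rfl⟩
  have hb : r ≤ b := by
    have h1 : (P (S c)).toReal < 1 - r := ENNReal.toReal_lt_of_lt_ofReal hc
    have h2 : P B = 1 - P (S c) := by rw [hBcompl, prob_compl_eq_one_sub (hSm c)]
    have h3 : (P B).toReal = 1 - (P (S c)).toReal := by
      rw [h2, ENNReal.toReal_sub_of_le prob_le_one ENNReal.one_ne_top, ENNReal.toReal_one]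
    rw [hbdef, h3]; linarith
  have hb0 : 0 < b := lt_of_lt_of_le hr0 hb
  -- weights
  obtain ⟨s, hsdef⟩ : ∃ x : ℝ, x = β ^ ((1 - q) / (2 * q)) := ⟨_, rfl⟩
  have hexp0 : 0 < (1 - q) / (2 * q) := div_pos (by linarith) (by linarith)
  have hs0 : 0 < s := hsdef ▸ Real.rpow_pos_of_pos hβ0 _
  have hs1 : s < 1 := hsdef ▸ Real.rpow_lt_one hβ0.le hβ1 hexp0
  obtain ⟨t, htdef⟩ : ∃ x : ℝ, x = 1 - s := ⟨_, rfl⟩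
  have ht0 : 0 < t := by rw [htdef]; linarith
  have ht1 : t < 1 := by rw [htdef]; linarith
  -- main construction
  rw [EVaRd, sSup_eq_top]
  intro x hx
  obtain ⟨M, hxM, -⟩ := EReal.exists_between_coe_real hx
  obtain ⟨N, hNdef⟩ : ∃ x : ℝ, x = max (c : ℝ) (M / t) + 1 := ⟨_, rfl⟩
  have hmax0 : (0:ℝ) ≤ max (c : ℝ) (M / t) := le_trans (Nat.cast_nonneg c) (le_max_left _ _)
  have hN1 : 1 ≤ N := by rw [hNdef]; linarith
  have hNc : (c : ℝ) < N := by
    rw [hNdef]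
    have := le_max_left (c : ℝ) (M / t)
    linarith
  have hNM : M < N * t := by
    have h1 : M / t + 1 ≤ N := by
      rw [hNdef]
      have := le_max_right (c : ℝ) (M / t)
      linarith
    have h2 : (M / t + 1) * t ≤ N * t := mul_le_mul_of_nonneg_right h1 ht0.le
    have h3 : (M / t + 1) * t = M + t := by field_simp
    linarith
  -- find the set A
  obtain ⟨k, hk⟩ : ∃ k : ℕ, P {ω | N < Y' ω ∧ Y' ω ≤ N + (k : ℝ) + 1} ≠ 0 := by
    by_contra h
    push_neg at h
    apply hub' N (by linarith)
    have hcup : {ω | N < Y' ω} = ⋃ k : ℕ, {ω | N < Y' ω ∧ Y' ω ≤ N + (k : ℝ) + 1} := by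
      ext ω
      simp only [Set.mem_setOf_eq, Set.mem_iUnion]
      constructor
      · intro hω
        obtain ⟨k, hk⟩ := exists_nat_ge (Y' ω - N - 1)
        exact ⟨k, hω, by linarith⟩
      · rintro ⟨k, hk, -⟩; exact hk
    rw [hcup]
    exact measure_iUnion_null h
  obtain ⟨A, hAdef⟩ : ∃ s : Set Ω, s = {ω | N < Y' ω ∧ Y' ω ≤ N + (k : ℝ) + 1} := ⟨_, rfl⟩
  have hAmeas : MeasurableSet A := hAdef ▸
    (measurableSet_lt measurable_const hY'meas).inter (measurableSet_le hY'meas measurable_const)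
  obtain ⟨a, hadef⟩ : ∃ x : ℝ, x = (P A).toReal := ⟨_, rfl⟩
  have ha0 : 0 < a := hadef ▸ ENNReal.toReal_pos (hAdef ▸ hk) (measure_ne_top P _)
  have ha0' : a ≠ 0 := ha0.ne'
  have hb0' : b ≠ 0 := hb0.ne'
  have hmemA : ∀ ω, ω ∈ A → N < Y' ω ∧ Y' ω ≤ N + (k : ℝ) + 1 := by
    intro ω hω; rwa [hAdef] at hω
  have hmemB : ∀ ω, ω ∈ B → Y' ω ≤ (c : ℝ) := by
    intro ω hω; rwa [hBdef] at hω
  have hABdisj : ∀ ω, ω ∈ A → ω ∉ B := by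
    intro ω hωA hωB
    have h1 := (hmemA ω hωA).1
    have h2 := hmemB ω hωB
    linarith
  -- the density
  obtain ⟨Z, hZdef⟩ : ∃ f : Ω → ℝ, f = fun ω =>
      A.indicator (fun _ => t / a) ω + B.indicator (fun _ => s / b) ω := ⟨_, rfl⟩
  have hZA : ∀ ω ∈ A, Z ω = t / a := by
    intro ω hω
    rw [hZdef]
    simp [Set.indicator_of_mem hω, Set.indicator_of_notMem (hABdisj ω hω)]
  have hZB : ∀ ω ∈ B, Z ω = s / b := by
    intro ω hω
    have hωA : ω ∉ A := fun h => hABdisj ω h hω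
    rw [hZdef]
    simp [Set.indicator_of_mem hω, Set.indicator_of_notMem hωA]
  have hZ0 : ∀ ω, ω ∉ A → ω ∉ B → Z ω = 0 := by
    intro ω h1 h2
    rw [hZdef]
    simp [Set.indicator_of_notMem h1, Set.indicator_of_notMem h2]
  have hZnn : ∀ ω, 0 ≤ Z ω := by
    intro ω
    by_cases h1 : ω ∈ A
    · rw [hZA ω h1]; positivity
    by_cases h2 : ω ∈ B
    · rw [hZB ω h2]; positivity
    · rw [hZ0 ω h1 h2]
  have hZint : Integrable Z P := by
    rw [hZdef]
    exact ((integrable_const _).indicator hAmeas).add ((integrable_const _).indicator hBmeas)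
  have hZint1 : ∫ ω, Z ω ∂P = 1 := by
    rw [hZdef]
    rw [integral_add ((integrable_const _).indicator hAmeas)
      ((integrable_const _).indicator hBmeas),
      integral_indicator_const _ hAmeas, integral_indicator_const _ hBmeas,
      smul_eq_mul, smul_eq_mul, measureReal_def, measureReal_def, ← hadef, ← hbdef]
    have e1 : a * (t / a) = t := by field_simp
    have e2 : b * (s / b) = s := by field_simp
    rw [e1, e2, htdef]; ring
  have hZdens : IsDensity P Z := ⟨hZint, ae_of_all _ hZnn, hZint1⟩
  -- Z^q
  have hZq : (fun ω => Z ω ^ q) = fun ω =>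
      A.indicator (fun _ => (t / a) ^ q) ω + B.indicator (fun _ => (s / b) ^ q) ω := by
    funext ω
    by_cases h1 : ω ∈ A
    · rw [hZA ω h1, Set.indicator_of_mem h1, Set.indicator_of_notMem (hABdisj ω h1), add_zero]
    by_cases h2 : ω ∈ B
    · rw [hZB ω h2, Set.indicator_of_mem h2, Set.indicator_of_notMem h1, zero_add]
    · rw [hZ0 ω h1 h2, Set.indicator_of_notMem h1, Set.indicator_of_notMem h2, add_zero,
        Real.zero_rpow hq0.ne']
  have hZqint : Integrable (fun ω => Z ω ^ q) P := by
    rw [hZq]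
    exact ((integrable_const _).indicator hAmeas).add ((integrable_const _).indicator hBmeas)
  have hRF : RenyiFinite P Z q :=
    ⟨fun h => absurd h (by linarith), fun _ _ => hZqint, fun h => absurd h (not_lt.2 hq0.le)⟩
  -- entropy bound
  have hIval : ∫ ω, Z ω ^ q ∂P = a * (t / a) ^ q + b * (s / b) ^ q := by
    rw [hZq, integral_add ((integrable_const _).indicator hAmeas)
      ((integrable_const _).indicator hBmeas),
      integral_indicator_const _ hAmeas, integral_indicator_const _ hBmeas,
      smul_eq_mul, smul_eq_mul, measureReal_def, measureReal_def, ← hadef, ← hbdef]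
  have hbterm : b * (s / b) ^ q = s ^ q * b ^ (1 - q) := by
    rw [Real.div_rpow hs0.le hb0.le, Real.rpow_sub hb0, Real.rpow_one]
    have hbq0 : b ^ q ≠ 0 := (Real.rpow_pos_of_pos hb0 q).ne'
    field_simp
  have hsq : s ^ q = β ^ ((1 - q) / 2) := by
    rw [hsdef, ← Real.rpow_mul hβ0.le]
    congr 1
    field_simp
  have hbq : β ^ ((1 - q) / 2) ≤ b ^ (1 - q) := by
    have h1 : r ^ (1 - q) ≤ b ^ (1 - q) :=
      Real.rpow_le_rpow hr0.le hb (by linarith)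
    have h2 : r ^ (1 - q) = β ^ ((1 - q) / 2) := by
      rw [hrdef, ← Real.rpow_mul hβ0.le]
      congr 1
      ring
    linarith [h1, h2.symm.le]
  have hIlb : β ^ (1 - q) ≤ ∫ ω, Z ω ^ q ∂P := by
    have h1 : β ^ ((1 - q) / 2) * β ^ ((1 - q) / 2) = β ^ (1 - q) := by
      rw [← Real.rpow_add hβ0]
      congr 1
      ring
    have h2 : β ^ ((1 - q) / 2) * β ^ ((1 - q) / 2) ≤ s ^ q * b ^ (1 - q) := by
      rw [hsq]
      exact mul_le_mul_of_nonneg_left hbq (Real.rpow_nonneg hβ0.le _)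
    have h3 : 0 ≤ a * (t / a) ^ q := by positivity
    rw [hIval, hbterm]
    linarith
  have hβpow : (0:ℝ) < β ^ (1 - q) := Real.rpow_pos_of_pos hβ0 _
  have hEnt : renyiEntropy P Z q ≤ Real.log (1 / (1 - α)) := by
    rw [renyiEntropy, if_neg hq0.ne', if_neg (by linarith : q ≠ 1)]
    have hlog : (1 - q) * Real.log β ≤ Real.log (∫ ω, Z ω ^ q ∂P) := by
      rw [← Real.log_rpow hβ0]
      exact Real.log_le_log hβpow hIlb
    have hinv : (q - 1)⁻¹ ≤ 0 := inv_nonpos.2 (by linarith)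
    have h1 : (q - 1)⁻¹ * Real.log (∫ ω, Z ω ^ q ∂P) ≤ (q - 1)⁻¹ * ((1 - q) * Real.log β) :=
      mul_le_mul_of_nonpos_left hlog hinv
    have h2 : (q - 1)⁻¹ * ((1 - q) * Real.log β) = Real.log (1 / (1 - α)) := by
      rw [← hβdef, one_div, Real.log_inv]
      have hq1' : q - 1 ≠ 0 := sub_ne_zero_of_ne (by linarith)
      field_simp
      ring
    linarith
  -- integrability of Y * Z
  have hZmeas : Measurable Z := hZdef ▸
    (measurable_const.indicator hAmeas).add (measurable_const.indicator hBmeas)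
  obtain ⟨C, hCdef⟩ : ∃ x : ℝ, x = (N + (k : ℝ) + 1) * (t / a) + (c : ℝ) * (s / b) := ⟨_, rfl⟩
  have hY'Zbound : ∀ ω, 0 ≤ Y' ω → ‖Y' ω * Z ω‖ ≤ C := by
    intro ω hnn
    have hc0 : (0:ℝ) ≤ (c : ℝ) := Nat.cast_nonneg c
    by_cases h1 : ω ∈ A
    · rw [hZA ω h1, Real.norm_eq_abs, abs_of_nonneg (by positivity)]
      have h2 : Y' ω * (t / a) ≤ (N + (k : ℝ) + 1) * (t / a) :=
        mul_le_mul_of_nonneg_right (hmemA ω h1).2 (by positivity)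
      have hpos : (0:ℝ) ≤ (c : ℝ) * (s / b) := by positivity
      rw [hCdef]; linarith
    by_cases h2 : ω ∈ B
    · rw [hZB ω h2, Real.norm_eq_abs, abs_of_nonneg (by positivity)]
      have h3 : Y' ω * (s / b) ≤ (c : ℝ) * (s / b) :=
        mul_le_mul_of_nonneg_right (hmemB ω h2) (by positivity)
      have hN0 : (0:ℝ) ≤ N := by linarith
      have hpos : (0:ℝ) ≤ (N + (k : ℝ) + 1) * (t / a) := by positivity
      rw [hCdef]; linarith
    · rw [hZ0 ω h1 h2, mul_zero, norm_zero, hCdef]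
      have hN0 : (0:ℝ) ≤ N := by linarith
      positivity
  have hY'Zint : Integrable (fun ω => Y' ω * Z ω) P := by
    refine Integrable.mono' (integrable_const C) ((hY'meas.mul hZmeas).aestronglyMeasurable) ?_
    filter_upwards [hY'nn] with ω h using hY'Zbound ω h
  have hYZint : Integrable (fun ω => Y ω * Z ω) P := by
    refine hY'Zint.congr ?_
    filter_upwards [hYY'] with ω h using by rw [h]
  -- lower bound on the integral
  have hintle : N * t ≤ ∫ ω, Y' ω * Z ω ∂P := by
    have hle : A.indicator (fun _ => N * (t / a)) ≤ᵐ[P] fun ω => Y' ω * Z ω := by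
      filter_upwards [hY'nn] with ω hnn
      by_cases h1 : ω ∈ A
      · rw [Set.indicator_of_mem h1, hZA ω h1]
        exact mul_le_mul_of_nonneg_right (hmemA ω h1).1.le (by positivity)
      · rw [Set.indicator_of_notMem h1]
        exact mul_nonneg hnn (hZnn ω)
    have h2 := integral_mono_ae ((integrable_const _).indicator hAmeas) hY'Zint hle
    have h3 : a * (N * (t / a)) = N * t := by field_simp
    rwa [integral_indicator_const _ hAmeas, smul_eq_mul, measureReal_def, ← hadef, h3] at h2
  have hint_eq : ∫ ω, Y ω * Z ω ∂P = ∫ ω, Y' ω * Z ω ∂P := by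
    refine integral_congr_ae ?_
    filter_upwards [hYY'] with ω h using by rw [h]
  refine ⟨((∫ ω, Y ω * Z ω ∂P : ℝ) : EReal), ⟨Z, hZdens, hRF, hEnt, hYZint, rfl⟩, ?_⟩
  refine lt_trans hxM ?_
  rw [EReal.coe_lt_coe_iff, hint_eq]
  linarith

/-- for `α ∈ (0,1)`, `p < 0` and `Y ≥ 0`, `EVaR_α^p(Y) < ∞` if and only
if `Y` is essentially bounded; in particular `EVaR_α^p(Y) = ⊤` for unbounded `Y`. -/
theorem evar_lt_top_iff (P : Measure Ω) [IsProbabilityMeasure P]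
    (α p : ℝ) (hα : α ∈ Set.Ioo (0 : ℝ) 1) (hp : p < 0)
    (Y : Ω → ℝ) (hYm : AEStronglyMeasurable Y P) (hY : 0 ≤ᵐ[P] Y) :
    (EVaR P α p Y < ⊤ ↔ MemLp Y ⊤ P) ∧ (¬ MemLp Y ⊤ P → EVaR P α p Y = ⊤) := by
  have hp1 : p - 1 < 0 := by linarith
  have hq0 : 0 < p / (p - 1) := div_pos_of_neg_of_neg hp hp1
  have hq1 : p / (p - 1) < 1 := by
    rw [div_lt_iff_of_neg hp1]; linarith
  have hEVaR : EVaR P α p Y = EVaRd P α (p / (p - 1)) Y := by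
    rw [EVaR, if_neg (by intro h; linarith)]
  have htop : ¬ MemLp Y ⊤ P → EVaR P α p Y = ⊤ := by
    intro h
    rw [hEVaR]
    exact evar_aux_top P α _ hα hq0 hq1 Y hYm hY h
  refine ⟨⟨?_, ?_⟩, htop⟩
  · intro hlt
    by_contra h
    rw [htop h] at hlt
    exact lt_irrefl _ hlt
  · intro h
    rw [hEVaR]
    exact evar_aux_bdd P α _ Y h

end
end

section
/- Let α ∈ (0,1) and let Y be an essentially bounded random variable on (Ω, 𝓕, P). Then EVaR_α^p(|Y|) → ‖Y‖_∞ as p ↑ 0 (i.e. p → 0 through negative values), where ‖Y‖_∞ is the essential supremum of |Y|. -/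
set_option maxHeartbeats 1000000


open MeasureTheory Real Filter

noncomputable section

variable {Ω : Type*} [MeasurableSpace Ω]

lemma indc_integrable (P : Measure Ω) [IsFiniteMeasure P] {A : Set Ω} (hA : MeasurableSet A)
    (a b : ℝ) : Integrable (fun ω => A.indicator (fun _ => a) ω + b) P :=
  ((integrable_const a).indicator hA).add (integrable_const b)

lemma indc_integral (P : Measure Ω) [IsProbabilityMeasure P] {A : Set Ω} (hA : MeasurableSet A)
    (a b : ℝ) : ∫ ω, (A.indicator (fun _ => a) ω + b) ∂P = a * (P A).toReal + b := by
  rw [integral_add ((integrable_const a).indicator hA) (integrable_const b),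
    integral_indicator_const _ hA]
  simp [mul_comm, measureReal_def]

lemma bdd_ae (P : Measure Ω) (Y : Ω → ℝ) (hY : MemLp Y ⊤ P) :
    IsBoundedUnder (· ≤ ·) (ae P) fun ω => |Y ω| := by
  have h := hY.eLpNorm_lt_top
  rw [eLpNorm_exponent_top, eLpNormEssSup_lt_top_iff_isBoundedUnder] at h
  obtain ⟨C, hC⟩ := h
  refine ⟨(C : ℝ), ?_⟩
  rw [eventually_map] at hC ⊢
  filter_upwards [hC] with ω hω
  simpa [Real.norm_eq_abs] using (show (‖Y ω‖₊ : ℝ) ≤ C from hω)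

lemma EVaR_of_ne_one (P : Measure Ω) (α p : ℝ) (Y : Ω → ℝ) (hp : p ≠ 1) :
    EVaR P α p Y = EVaRd P α (p / (p - 1)) Y := if_neg hp

lemma evard_le (P : Measure Ω) [IsProbabilityMeasure P] (α q : ℝ) (Y : Ω → ℝ) (M : ℝ)
    (hM : ∀ᵐ ω ∂P, |Y ω| ≤ M) : EVaRd P α q (fun ω => |Y ω|) ≤ (M : EReal) := by
  apply sSup_le
  rintro x ⟨Z, ⟨hZint, hZpos, hZone⟩, -, -, hint, rfl⟩
  rw [EReal.coe_le_coe_iff]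
  calc ∫ ω, |Y ω| * Z ω ∂P ≤ ∫ ω, M * Z ω ∂P := by
        refine integral_mono_ae hint (hZint.const_mul M) ?_
        filter_upwards [hM, hZpos] with ω h1 h2
        exact mul_le_mul_of_nonneg_right h1 (by simpa using h2)
    _ = M := by rw [integral_const_mul, hZone, mul_one]


/-- `EVaR_α^p(|Y|) → ‖Y‖_∞` as `p ↑ 0`, for bounded `Y`. -/
theorem evar_tendsto_esssup (P : Measure Ω) [IsProbabilityMeasure P]
    (α : ℝ) (hα : α ∈ Set.Ioo (0 : ℝ) 1)
    (Y : Ω → ℝ) (hY : MemLp Y ⊤ P) :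
    Tendsto (fun p : ℝ => EVaR P α p (fun ω => |Y ω|)) (nhdsWithin 0 (Set.Iio 0))
      (nhds ((essSup (fun ω => |Y ω|) P : ℝ) : EReal)) := by
  obtain ⟨hα0, hα1⟩ := hα
  haveI : (ae P).NeBot := ae_neBot.2 (IsProbabilityMeasure.ne_zero P)
  set M : ℝ := essSup (fun ω => |Y ω|) P with hMdef
  have hbdd := bdd_ae P Y hY
  have hMlim : M = limsup (fun ω => |Y ω|) (ae P) := rfl
  have hae_le : ∀ᵐ ω ∂P, |Y ω| ≤ M := by
    rw [hMlim]; exact eventually_le_limsup hbdd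
  have hYint : Integrable Y P := hY.integrable le_top
  set L : ℝ := Real.log (1 / (1 - α)) with hLdef
  have hL : 0 < L := Real.log_pos (one_lt_one_div (by linarith) (by linarith))
  have hub : ∀ p : ℝ, p < 0 → EVaR P α p (fun ω => |Y ω|) ≤ (M : EReal) := by
    intro p hp
    rw [EVaR_of_ne_one P α p _ (by linarith)]
    exact evard_le P α _ Y M hae_le
  refine tendsto_order.2 ⟨?_, ?_⟩
  · intro b hb
    by_cases hb0 : b < 0
    · -- witness Z = 1
      filter_upwards [self_mem_nhdsWithin] with p hp
      have hp0 : p < (0:ℝ) := hp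
      have hq0 : p / (p - 1) ≠ 0 := by
        apply div_ne_zero (by linarith) (by linarith)
      have hq1 : p / (p - 1) ≠ 1 := by
        intro h
        have := (div_eq_one_iff_eq (by linarith : p - 1 ≠ 0)).1 h
        linarith
      have hmem : ((∫ ω, |Y ω| * (1:ℝ) ∂P : ℝ) : EReal) ∈
          {x : EReal | ∃ Z : Ω → ℝ, IsDensity P Z ∧ RenyiFinite P Z (p/(p-1)) ∧
            renyiEntropy P Z (p/(p-1)) ≤ Real.log (1 / (1 - α)) ∧
            Integrable (fun ω => |Y ω| * Z ω) P ∧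
            x = ((∫ ω, |Y ω| * Z ω ∂P : ℝ) : EReal)} := by
        refine ⟨fun _ => 1, ⟨integrable_const 1, ae_of_all _ (fun ω => by norm_num), by simp⟩,
          ⟨fun _ => by simpa using (integrable_const (0:ℝ)),
           fun _ _ => by simpa [Real.one_rpow] using (integrable_const (1:ℝ)),
           fun _ => ae_of_all _ (fun ω => one_pos)⟩, ?_, by simpa using hYint.abs, rfl⟩
        rw [renyiEntropy, if_neg hq0, if_neg hq1]
        simp only [Real.one_rpow]
        rw [integral_const]
        simp only [probReal_univ, smul_eq_mul, mul_one, Real.log_one, mul_zero]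
        exact hL.le
      rw [EVaR_of_ne_one P α p _ (by linarith)]
      refine lt_of_lt_of_le ?_ (le_sSup hmem)
      refine lt_of_lt_of_le hb0 ?_
      rw [← EReal.coe_zero, EReal.coe_le_coe_iff]
      exact integral_nonneg (fun ω => by positivity)
    · push_neg at hb0
      have hbT : b ≠ ⊤ := (hb.trans_le le_top).ne
      have hbB : b ≠ ⊥ := fun h => by simp [h] at hb0
      set c : ℝ := b.toReal with hcdef
      have hbc : b = (c : EReal) := (EReal.coe_toReal hbT hbB).symm
      have hc0 : 0 ≤ c := by
        rw [hbc] at hb0; exact_mod_cast hb0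
      have hcM : c < M := by
        rw [hbc] at hb; exact_mod_cast hb
      clear_value c
      set v : ℝ := (c + M) / 2 with hvdef
      have hv1 : c < v := by rw [hvdef]; linarith
      have hv2 : v < M := by rw [hvdef]; linarith
      have hv0 : 0 < v := lt_of_le_of_lt hc0 hv1
      clear_value v
      -- measurable representative
      set g : Ω → ℝ := hY.1.mk Y with hgdef
      have hg : StronglyMeasurable g := hY.1.stronglyMeasurable_mk
      have hYg : Y =ᵐ[P] g := hY.1.ae_eq_mk
      set A : Set Ω := {ω | v < |g ω|} with hAdef
      have hAmeas : MeasurableSet A := measurableSet_lt measurable_const hg.measurable.abs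
      have hPA0 : P A ≠ 0 := by
          intro hA0
          have hcompl : ∀ᵐ ω ∂P, |g ω| ≤ v := by
            have : ∀ᵐ ω ∂P, ω ∉ A := (ae_iff).2 (by simpa [hAdef, not_le] using hA0)
            filter_upwards [this] with ω hω
            simpa [hAdef, not_lt] using hω
          have hYv : ∀ᵐ ω ∂P, |Y ω| ≤ v := by
            filter_upwards [hcompl, hYg] with ω h1 h2
            rw [h2]; exact h1
          have : M ≤ v := by
            rw [hMlim]
            exact limsup_le_of_le (isCoboundedUnder_le_of_le (ae P) (fun ω => abs_nonneg (Y ω))) hYv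
          linarith
      have hApos : 0 < (P A).toReal := ENNReal.toReal_pos hPA0 (measure_lt_top P A).ne
      set t : ℝ := (P A).toReal with htdef
      have ht0 : 0 < t := hApos
      have ht1 : t ≤ 1 := by
        rw [htdef]
        exact ENNReal.toReal_le_of_le_ofReal zero_le_one (by simpa using prob_le_one)
      clear_value t
      set ε0 : ℝ := (v - c) / (2 * v) with hε0def
      have hε0pos : 0 < ε0 := div_pos (by linarith) (by linarith)
      have hε0lt1 : ε0 < 1 := by
        rw [hε0def, div_lt_one (by linarith)]; linarith
      have hvε : v * ε0 = (v - c) / 2 := by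
        rw [hε0def]; field_simp
      clear_value ε0
      set a : ℝ := (1 - ε0 * (1 - t)) / t with hadef
      have hnum : 0 < 1 - ε0 * (1 - t) := by
        have h : ε0 * (1 - t) ≤ ε0 := by
          calc ε0 * (1 - t) ≤ ε0 * 1 := mul_le_mul_of_nonneg_left (by linarith) hε0pos.le
            _ = ε0 := mul_one _
        linarith only [h, hε0lt1]
      have ha0 : 0 < a := div_pos hnum ht0
      have hat : a * t = 1 - ε0 * (1 - t) := by
        rw [hadef, div_mul_cancel₀ _ ht0.ne']
      clear_value a
      set Z : Ω → ℝ := fun ω => A.indicator (fun _ => a - ε0) ω + ε0 with hZdef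
      have hZa : ∀ ω ∈ A, Z ω = a := fun ω hω => by
        simp [hZdef, Set.indicator_of_mem hω]
      have hZb : ∀ ω ∉ A, Z ω = ε0 := fun ω hω => by
        simp [hZdef, Set.indicator_of_notMem hω]
      set m : ℝ := min a ε0 with hmdef
      have hm0 : 0 < m := lt_min ha0 hε0pos
      have hma : m ≤ a := min_le_left _ _
      have hmε : m ≤ ε0 := min_le_right _ _
      clear_value m
      have hZmin : ∀ ω, m ≤ Z ω := by
        intro ω
        by_cases hω : ω ∈ A
        · rw [hZa ω hω]; exact hma
        · rw [hZb ω hω]; exact hmε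
      have hZnonneg : ∀ ω, 0 ≤ Z ω := fun ω => le_trans hm0.le (hZmin ω)
      have hZint : Integrable Z P := indc_integrable P hAmeas _ _
      have hZone : ∫ ω, Z ω ∂P = 1 := by
        rw [hZdef, indc_integral P hAmeas, ← htdef]
        linear_combination hat
      have hZmeas : AEStronglyMeasurable Z P :=
        ((measurable_const.indicator hAmeas).add measurable_const).aestronglyMeasurable
      have hZbd : ∃ C, ∀ ω, ‖Z ω‖ ≤ C := by
        refine ⟨|a| + |ε0|, fun ω => ?_⟩
        by_cases hω : ω ∈ A
        · rw [hZa ω hω, Real.norm_eq_abs]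
          have := abs_nonneg ε0; linarith
        · rw [hZb ω hω, Real.norm_eq_abs]
          have := abs_nonneg a; linarith
      have hYZint : Integrable (fun ω => |Y ω| * Z ω) P := by
        have h : (fun ω => |Y ω| * Z ω) = fun ω => Z ω * |Y ω| := by
          funext ω; ring
        rw [h]
        exact hYint.abs.bdd_mul hZmeas (ae_of_all _ hZbd.choose_spec)
      have hlow : v * a * t ≤ ∫ ω, |Y ω| * Z ω ∂P := by
        have hind : ∫ ω, A.indicator (fun _ => v * a) ω ∂P = v * a * t := by
          rw [integral_indicator_const _ hAmeas, measureReal_def, ← htdef, smul_eq_mul]; ring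
        rw [← hind]
        refine integral_mono_ae ((integrable_const (v*a)).indicator hAmeas) hYZint ?_
        filter_upwards [hYg] with ω hω
        by_cases hωA : ω ∈ A
        · rw [Set.indicator_of_mem hωA, hZa ω hωA]
          have hvY : v ≤ |Y ω| := by
            rw [hω]; exact le_of_lt hωA
          exact mul_le_mul_of_nonneg_right hvY ha0.le
        · rw [Set.indicator_of_notMem hωA]
          exact mul_nonneg (abs_nonneg _) (hZnonneg ω)
      have hval : c < ∫ ω, |Y ω| * Z ω ∂P := by
        refine lt_of_lt_of_le ?_ hlow
        have hrw : v * a * t = v * (a * t) := by ring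
        rw [hrw, hat]
        have hvε0 : 0 ≤ v * ε0 := by linarith only [hvε, hv1]
        have p2 : 0 ≤ v * ε0 * t := mul_nonneg hvε0 ht0.le
        have expand : v * (1 - ε0 * (1 - t)) = v - v * ε0 + v * ε0 * t := by ring
        rw [expand]
        linarith only [hvε, p2, hv1]
      -- the threshold for q
      set q0 : ℝ := L / (L + |Real.log m| + 1) with hq0def
      have hden : 0 < L + |Real.log m| + 1 := by
        have := abs_nonneg (Real.log m); linarith
      have hq0pos : 0 < q0 := div_pos hL hden
      have hq0key : q0 * (L + |Real.log m| + 1) = L := div_mul_cancel₀ _ hden.ne'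
      filter_upwards [Ioo_mem_nhdsLT_of_mem
        (show (0:ℝ) ∈ Set.Ioc (-q0) 0 from ⟨by linarith, le_refl 0⟩)] with p hp
      obtain ⟨hp1, hp2⟩ := hp
      have hp2 : p < 0 := hp2
      set q : ℝ := p / (p - 1) with hqdef
      have hkey : q * (p - 1) = p := div_mul_cancel₀ _ (by linarith)
      have hq_pos : 0 < q := div_pos_iff.2 (Or.inr ⟨by linarith, by linarith⟩)
      clear_value q
      have hq_lt1 : q < 1 := by
        by_contra h
        push_neg at h
        have h2 : q * (p - 1) ≤ 1 * (p - 1) := mul_le_mul_of_nonpos_right h (by linarith)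
        rw [hkey, one_mul] at h2
        linarith
      have hq_lt : q < q0 := by
        have hkey' : q * p - q = p := by linear_combination hkey
        have hqp : q * p < 0 := mul_neg_of_pos_of_neg hq_pos hp2
        linarith only [hkey', hqp, hp1]
      have hqne0 : q ≠ 0 := ne_of_gt hq_pos
      have hqne1 : q ≠ 1 := ne_of_lt hq_lt1
      -- Z^q
      have hZq : (fun ω => Z ω ^ q) = fun ω => A.indicator (fun _ => a ^ q - ε0 ^ q) ω + ε0 ^ q := by
        funext ω
        by_cases hω : ω ∈ A
        · rw [hZa ω hω, Set.indicator_of_mem hω]; ring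
        · rw [hZb ω hω, Set.indicator_of_notMem hω]; ring
      have hZqint : Integrable (fun ω => Z ω ^ q) P := by
        rw [hZq]; exact indc_integrable P hAmeas _ _
      have hElb : m ^ q ≤ ∫ ω, Z ω ^ q ∂P := by
        have : m ^ q = ∫ _ω, m ^ q ∂P := by rw [integral_const]; simp
        rw [this]
        exact integral_mono (integrable_const _) hZqint
          (fun ω => Real.rpow_le_rpow hm0.le (hZmin ω) hq_pos.le)
      have hEpos : 0 < ∫ ω, Z ω ^ q ∂P :=
        lt_of_lt_of_le (Real.rpow_pos_of_pos hm0 q) hElb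
      have hlogE : q * Real.log m ≤ Real.log (∫ ω, Z ω ^ q ∂P) := by
        rw [← Real.log_rpow hm0]
        exact Real.log_le_log (Real.rpow_pos_of_pos hm0 q) hElb
      have hLkey : L * (q - 1) ≤ q * Real.log m := by
        have habs : (0:ℝ) ≤ |Real.log m| := abs_nonneg _
        have h1 : q * (-|Real.log m|) ≤ q * Real.log m :=
          mul_le_mul_of_nonneg_left (neg_abs_le _) hq_pos.le
        have h2 : q * (L + |Real.log m|) ≤ q0 * (L + |Real.log m|) :=
          mul_le_mul_of_nonneg_right hq_lt.le (by linarith only [habs, hL])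
        linarith only [h1, h2, hq0key, hq0pos]
      have hentropy : renyiEntropy P Z q ≤ Real.log (1 / (1 - α)) := by
        rw [renyiEntropy, if_neg hqne0, if_neg hqne1, ← hLdef]
        rw [mul_comm, ← div_eq_mul_inv, div_le_iff_of_neg (by linarith : q - 1 < 0)]
        exact hLkey.trans hlogE
      have hmem : ((∫ ω, |Y ω| * Z ω ∂P : ℝ) : EReal) ∈
          {x : EReal | ∃ Z' : Ω → ℝ, IsDensity P Z' ∧ RenyiFinite P Z' q ∧
            renyiEntropy P Z' q ≤ Real.log (1 / (1 - α)) ∧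
            Integrable (fun ω => |Y ω| * Z' ω) P ∧
            x = ((∫ ω, |Y ω| * Z' ω ∂P : ℝ) : EReal)} :=
        ⟨Z, ⟨hZint, ae_of_all _ hZnonneg, hZone⟩,
         ⟨fun h => absurd h hqne1, fun _ _ => hZqint,
          fun h => absurd h (not_lt.2 hq_pos.le)⟩, hentropy, hYZint, rfl⟩
      rw [EVaR_of_ne_one P α p _ (by linarith), ← hqdef]
      refine lt_of_lt_of_le ?_ (le_sSup hmem)
      rw [hbc, EReal.coe_lt_coe_iff]
      exact hval
  · intro b hbM
    filter_upwards [self_mem_nhdsWithin] with p hp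
    exact lt_of_le_of_lt (hub p hp) hbM

end
end

section
/- Let α ∈ (0,1), let p₁' < 0 < p₂' < 1 ≤ p₃' ≤ p₄' and set p_i = p_i'/(p_i' − 1) (the Hölder conjugates). Then for every essentially bounded random variable Y on (Ω, 𝓕, P): AVaR_α(Y) ≤ EVaR_α^{p₄}(Y) ≤ EVaR_α^{p₃}(Y) ≤ EVaR_α^∞(Y) ≤ EVaR_α^{p₂}(Y) ≤ EVaR_α^{p₁}(Y) = ess sup Y. -/
open MeasureTheory Real Filter

noncomputable section

variable {Ω : Type*} [MeasurableSpace Ω]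

lemma IsDensity.ae_nonneg {P : Measure Ω} {Z : Ω → ℝ} (hZ : IsDensity P Z) :
    ∀ᵐ ω ∂P, 0 ≤ Z ω := by
  filter_upwards [hZ.2.1] with ω h using by simpa using h

lemma integral_rpow_pos {P : Measure Ω} [IsProbabilityMeasure P] {Z : Ω → ℝ}
    (hZ : IsDensity P Z) {q : ℝ}
    (hint : Integrable (fun ω => Z ω ^ q) P) : 0 < ∫ ω, Z ω ^ q ∂P := by
  have hnn : 0 ≤ᵐ[P] fun ω => Z ω ^ q := by
    filter_upwards [hZ.ae_nonneg] with ω h using Real.rpow_nonneg h q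
  rcases (integral_nonneg_of_ae hnn).lt_or_eq with h | h
  · exact h
  · exfalso
    have h0 : (fun ω => Z ω ^ q) =ᵐ[P] 0 :=
      (integral_eq_zero_iff_of_nonneg_ae hnn hint).1 h.symm
    have hZ0 : Z =ᵐ[P] 0 := by
      filter_upwards [h0, hZ.ae_nonneg] with ω h1 h2
      rcases h2.lt_or_eq with h3 | h3
      · exact absurd h1 (ne_of_gt (Real.rpow_pos_of_pos h3 q))
      · exact h3.symm
    have : (1 : ℝ) = 0 := by
      rw [← hZ.2.2, integral_congr_ae hZ0]
      simp
    norm_num at this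

lemma kl_vs_rpow {P : Measure Ω} [IsProbabilityMeasure P] {Z : Ω → ℝ}
    (hZ : IsDensity P Z) {q : ℝ} (hq0 : 0 < q)
    (hq : Integrable (fun ω => Z ω ^ q) P)
    (hkl : Integrable (fun ω => Z ω * Real.log (Z ω)) P)
    (hm : 0 < ∫ ω, Z ω ^ q ∂P) :
    (q - 1) * ∫ ω, Z ω * Real.log (Z ω) ∂P ≤ Real.log (∫ ω, Z ω ^ q ∂P) := by
  set m := ∫ ω, Z ω ^ q ∂P with hmdef
  have hpt : ∀ᵐ ω ∂P, (q - 1) * (Z ω * Real.log (Z ω)) ≤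
      Z ω * Real.log m + Z ω ^ q / m - Z ω := by
    filter_upwards [hZ.ae_nonneg] with ω hz
    rcases hz.lt_or_eq with hz' | hz'
    · have h1 : Real.log (Z ω ^ (q - 1) / m) ≤ Z ω ^ (q - 1) / m - 1 :=
        Real.log_le_sub_one_of_pos (div_pos (Real.rpow_pos_of_pos hz' _) hm)
      rw [Real.log_div (ne_of_gt (Real.rpow_pos_of_pos hz' _)) (ne_of_gt hm),
        Real.log_rpow hz'] at h1
      have h2 : (q - 1) * Real.log (Z ω) ≤ Real.log m + Z ω ^ (q - 1) / m - 1 := by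
        linarith
      have h3 := mul_le_mul_of_nonneg_left h2 hz
      have h4 : Z ω ^ q = Z ω * Z ω ^ (q - 1) := by
        nth_rewrite 2 [← Real.rpow_one (Z ω)]
        rw [← Real.rpow_add hz']
        ring_nf
      have h5 : Z ω * (Real.log m + Z ω ^ (q - 1) / m - 1)
          = Z ω * Real.log m + Z ω ^ q / m - Z ω := by rw [h4]; ring
      have h6 : (q - 1) * (Z ω * Real.log (Z ω))
          = Z ω * ((q - 1) * Real.log (Z ω)) := by ring
      rw [h6, ← h5]; exact h3
    · simp [← hz', Real.zero_rpow (ne_of_gt hq0)]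
  have hf1 : Integrable (fun ω => Z ω * Real.log m + Z ω ^ q / m) P :=
    (hZ.1.mul_const _).add (hq.div_const _)
  have hint2 : Integrable (fun ω => Z ω * Real.log m + Z ω ^ q / m - Z ω) P :=
    hf1.sub hZ.1
  have key := integral_mono_ae (hkl.const_mul (q - 1)) hint2 hpt
  rw [integral_const_mul] at key
  have eadd : ∫ ω, (Z ω * Real.log m + Z ω ^ q / m) ∂P = Real.log m + 1 := by
    rw [integral_add (hZ.1.mul_const _) (hq.div_const _), integral_mul_const,
      integral_div, hZ.2.2, ← hmdef]
    field_simp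
  have esub : ∫ ω, (Z ω * Real.log m + Z ω ^ q / m) - Z ω ∂P = Real.log m := by
    rw [integral_sub hf1 hZ.1, eadd, hZ.2.2]
    ring
  linarith [key, esub.symm ▸ key]

lemma young_pointwise {z m θ q₁ q₂ : ℝ} (hz : 0 ≤ z) (hm : 0 < m)
    (hθ0 : 0 < θ) (hθ1 : θ < 1) (hq₁ : q₁ ≠ 0) (hsum : θ + (1 - θ) * q₂ = q₁) :
    z ^ q₁ ≤ θ * (m ^ (1 - θ) * z) + (1 - θ) * (m ^ (-θ) * z ^ q₂) := by
  have hθne : θ ≠ 0 := ne_of_gt hθ0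
  have h1θ : (1 - θ) ≠ 0 := by intro h; rw [sub_eq_zero] at h; linarith
  have hpq : (1/θ).HolderConjugate (1/(1-θ)) := by
    constructor
    · simp only [one_div, inv_inv, inv_one]; ring
    · positivity
    · have : 0 < 1 - θ := by linarith
      positivity
  have ha : 0 ≤ z ^ θ * m ^ (θ * (1 - θ)) :=
    mul_nonneg (Real.rpow_nonneg hz _) (Real.rpow_nonneg hm.le _)
  have hb : 0 ≤ z ^ ((1 - θ) * q₂) * m ^ (-(θ * (1 - θ))) :=
    mul_nonneg (Real.rpow_nonneg hz _) (Real.rpow_nonneg hm.le _)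
  have key := Real.young_inequality_of_nonneg ha hb hpq
  have hab : z ^ θ * m ^ (θ * (1 - θ)) * (z ^ ((1 - θ) * q₂) * m ^ (-(θ * (1 - θ)))) = z ^ q₁ := by
    rw [mul_mul_mul_comm, ← Real.rpow_add' hz (by rw [hsum]; exact hq₁),
      ← Real.rpow_add hm, hsum]
    simp
  have hA : (z ^ θ * m ^ (θ * (1 - θ))) ^ (1/θ) / (1/θ) = θ * (m ^ (1 - θ) * z) := by
    rw [Real.mul_rpow (Real.rpow_nonneg hz _) (Real.rpow_nonneg hm.le _),
      ← Real.rpow_mul hz, ← Real.rpow_mul hm.le]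
    rw [show θ * (1/θ) = 1 by field_simp, show θ * (1 - θ) * (1/θ) = 1 - θ by field_simp]
    rw [Real.rpow_one]
    field_simp
  have hB : (z ^ ((1 - θ) * q₂) * m ^ (-(θ * (1 - θ)))) ^ (1/(1-θ)) / (1/(1-θ))
      = (1 - θ) * (m ^ (-θ) * z ^ q₂) := by
    rw [Real.mul_rpow (Real.rpow_nonneg hz _) (Real.rpow_nonneg hm.le _),
      ← Real.rpow_mul hz, ← Real.rpow_mul hm.le]
    rw [show (1 - θ) * q₂ * (1/(1-θ)) = q₂ by field_simp,
      show -(θ * (1 - θ)) * (1/(1-θ)) = -θ by field_simp]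
    field_simp
  rw [hab, hA, hB] at key
  exact key

lemma rpow_le_one_add_rpow {z q₁ q₂ : ℝ} (hz : 0 ≤ z) (h0 : 0 < q₁) (h12 : q₁ ≤ q₂) :
    z ^ q₁ ≤ 1 + z ^ q₂ := by
  rcases le_or_gt z 1 with h | h
  · have := Real.rpow_le_one hz h h0.le
    have h2 : 0 ≤ z ^ q₂ := Real.rpow_nonneg hz _
    linarith
  · have := Real.rpow_le_rpow_of_exponent_le h.le h12
    have h2 : (0:ℝ) ≤ 1 := zero_le_one
    linarith

lemma abs_mul_log_le {z q : ℝ} (hz : 0 ≤ z) (hq : 1 < q) :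
    |z * Real.log z| ≤ 1 + z ^ q / (q - 1) := by
  have hrn : 0 ≤ z ^ q / (q - 1) := div_nonneg (Real.rpow_nonneg hz _) (by linarith)
  rcases eq_or_lt_of_le hz with h | h
  · simp [← h, Real.zero_rpow (ne_of_gt (lt_trans zero_lt_one hq))]
  rcases le_or_gt z 1 with h1 | h1
  · have hlog : Real.log z ≤ 0 := Real.log_nonpos hz h1
    have habs : |z * Real.log z| = z * (-Real.log z) := by
      rw [abs_of_nonpos (mul_nonpos_of_nonneg_of_nonpos hz hlog)]; ring
    have hli : -Real.log z = Real.log z⁻¹ := (Real.log_inv z).symm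
    have hb : Real.log z⁻¹ ≤ z⁻¹ - 1 := Real.log_le_sub_one_of_pos (by positivity)
    have hmul : z * (-Real.log z) ≤ z * (z⁻¹ - 1) :=
      mul_le_mul_of_nonneg_left (by rw [hli]; exact hb) hz
    have hz1 : z * (z⁻¹ - 1) = 1 - z := by field_simp
    rw [habs]
    calc z * (-Real.log z) ≤ z * (z⁻¹ - 1) := hmul
      _ = 1 - z := hz1
      _ ≤ 1 + z ^ q / (q - 1) := by linarith
  · have hlog : 0 ≤ Real.log z := Real.log_nonneg h1.le
    have habs : |z * Real.log z| = z * Real.log z := abs_of_nonneg (mul_nonneg hz hlog)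
    have hb : Real.log (z ^ (q-1)) ≤ z ^ (q-1) - 1 :=
      Real.log_le_sub_one_of_pos (Real.rpow_pos_of_pos h _)
    rw [Real.log_rpow h] at hb
    have h2 : Real.log z ≤ z ^ (q-1) / (q - 1) := by
      rw [le_div_iff₀ (by linarith : (0:ℝ) < q - 1)]
      nlinarith [hb]
    have h3 : z * Real.log z ≤ z * (z ^ (q-1) / (q-1)) :=
      mul_le_mul_of_nonneg_left h2 hz
    have h4 : z * z ^ (q - 1) = z ^ q := by
      nth_rewrite 1 [← Real.rpow_one z]
      rw [← Real.rpow_add h]; ring_nf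
    rw [habs]
    calc z * Real.log z ≤ z * (z ^ (q-1) / (q-1)) := h3
      _ = z ^ q / (q - 1) := by rw [← h4]; ring
      _ ≤ 1 + z ^ q / (q - 1) := by linarith

lemma integrable_rpow_of_le {P : Measure Ω} [IsProbabilityMeasure P] {Z : Ω → ℝ}
    (hZ : IsDensity P Z) {q₁ q₂ : ℝ} (h0 : 0 < q₁) (h12 : q₁ ≤ q₂)
    (h2 : Integrable (fun ω => Z ω ^ q₂) P) :
    Integrable (fun ω => Z ω ^ q₁) P := by
  refine ((integrable_const (1:ℝ)).add h2).mono' ?_ ?_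
  · exact (hZ.1.aemeasurable.pow aemeasurable_const).aestronglyMeasurable
  · filter_upwards [hZ.ae_nonneg] with ω hz
    rw [Real.norm_eq_abs, abs_of_nonneg (Real.rpow_nonneg hz _)]
    exact rpow_le_one_add_rpow hz h0 h12

lemma integrable_mul_log_of_rpow {P : Measure Ω} [IsProbabilityMeasure P] {Z : Ω → ℝ}
    (hZ : IsDensity P Z) {q : ℝ} (hq : 1 < q)
    (h2 : Integrable (fun ω => Z ω ^ q) P) :
    Integrable (fun ω => Z ω * Real.log (Z ω)) P := by
  refine ((integrable_const (1:ℝ)).add (h2.div_const (q-1))).mono' ?_ ?_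
  · exact Real.continuous_mul_log.comp_aestronglyMeasurable hZ.1.aestronglyMeasurable
  · filter_upwards [hZ.ae_nonneg] with ω hz
    rw [Real.norm_eq_abs]
    exact (abs_mul_log_le hz hq).trans (le_refl _)

lemma feasible_mono {P : Measure Ω} [IsProbabilityMeasure P] {Z : Ω → ℝ}
    (hZ : IsDensity P Z) {q₁ q₂ c : ℝ}
    (h0 : 0 < q₁) (h12 : q₁ ≤ q₂) (h2 : 1 ≤ q₂) (h3 : q₁ < 1 → q₂ = 1)
    (hfin : RenyiFinite P Z q₂) (hent : renyiEntropy P Z q₂ ≤ c) :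
    RenyiFinite P Z q₁ ∧ renyiEntropy P Z q₁ ≤ c := by
  have hq₂0 : 0 < q₂ := lt_of_lt_of_le zero_lt_one h2
  by_cases hq₁1 : q₁ = 1
  · subst hq₁1
    by_cases hq₂1 : q₂ = 1
    · subst hq₂1; exact ⟨hfin, hent⟩
    · have hq₂gt : 1 < q₂ := lt_of_le_of_ne h2 (Ne.symm hq₂1)
      have hint2 : Integrable (fun ω => Z ω ^ q₂) P :=
        hfin.2.1 (ne_of_gt hq₂0) hq₂1
      have hm2 : 0 < ∫ ω, Z ω ^ q₂ ∂P := integral_rpow_pos hZ hint2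
      have hkl : Integrable (fun ω => Z ω * Real.log (Z ω)) P :=
        integrable_mul_log_of_rpow hZ hq₂gt hint2
      have key := kl_vs_rpow hZ hq₂0 hint2 hkl hm2
      have hent2 : (q₂ - 1)⁻¹ * Real.log (∫ ω, Z ω ^ q₂ ∂P) ≤ c := by
        have := hent
        rwa [renyiEntropy, if_neg (ne_of_gt hq₂0), if_neg hq₂1] at this
      have hkl_le : ∫ ω, Z ω * Real.log (Z ω) ∂P
          ≤ (q₂ - 1)⁻¹ * Real.log (∫ ω, Z ω ^ q₂ ∂P) := by
        rw [inv_mul_eq_div, le_div_iff₀ (by linarith : (0:ℝ) < q₂ - 1)]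
        linarith [key]
      constructor
      · exact ⟨fun _ => hkl, fun _ h => absurd rfl h, fun h => absurd h (by norm_num)⟩
      · rw [renyiEntropy, if_neg one_ne_zero, if_pos rfl]
        exact hkl_le.trans hent2
  · by_cases hlt : q₁ < 1
    · have hq₂1 : q₂ = 1 := h3 hlt
      subst hq₂1
      have hkl : Integrable (fun ω => Z ω * Real.log (Z ω)) P := hfin.1 rfl
      have hZ1 : Integrable (fun ω => Z ω ^ (1:ℝ)) P := by
        simp only [Real.rpow_one]; exact hZ.1
      have hint1 : Integrable (fun ω => Z ω ^ q₁) P :=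
        integrable_rpow_of_le hZ h0 hlt.le hZ1
      have hm1 : 0 < ∫ ω, Z ω ^ q₁ ∂P := integral_rpow_pos hZ hint1
      have key := kl_vs_rpow hZ h0 hint1 hkl hm1
      have hentKL : ∫ ω, Z ω * Real.log (Z ω) ∂P ≤ c := by
        have := hent
        rwa [renyiEntropy, if_neg one_ne_zero, if_pos rfl] at this
      constructor
      · exact ⟨fun h => absurd h hq₁1, fun _ _ => hint1,
          fun h => absurd h (not_lt.2 h0.le)⟩
      · rw [renyiEntropy, if_neg (ne_of_gt h0), if_neg hq₁1]
        have : (q₁ - 1)⁻¹ * Real.log (∫ ω, Z ω ^ q₁ ∂P)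
            ≤ ∫ ω, Z ω * Real.log (Z ω) ∂P := by
          rw [inv_mul_eq_div, div_le_iff_of_neg (by linarith : q₁ - 1 < 0)]
          linarith [key]
        exact this.trans hentKL
    · have hq₁gt : 1 < q₁ := lt_of_le_of_ne (not_lt.1 hlt) (Ne.symm hq₁1)
      by_cases heq : q₁ = q₂
      · subst heq; exact ⟨hfin, hent⟩
      · have hq12 : q₁ < q₂ := lt_of_le_of_ne h12 heq
        have hq₂gt : 1 < q₂ := lt_trans hq₁gt hq12
        have hint2 : Integrable (fun ω => Z ω ^ q₂) P :=
          hfin.2.1 (ne_of_gt hq₂0) (ne_of_gt hq₂gt)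
        have hint1 : Integrable (fun ω => Z ω ^ q₁) P :=
          integrable_rpow_of_le hZ h0 h12 hint2
        have hm2 : 0 < ∫ ω, Z ω ^ q₂ ∂P := integral_rpow_pos hZ hint2
        have hm1 : 0 < ∫ ω, Z ω ^ q₁ ∂P := integral_rpow_pos hZ hint1
        set m := ∫ ω, Z ω ^ q₂ ∂P with hmdef
        set θ := (q₂ - q₁) / (q₂ - 1) with hθdef
        have hden : (0:ℝ) < q₂ - 1 := by linarith
        have hθ0 : 0 < θ := div_pos (by linarith) hden
        have hθ1 : θ < 1 := by
          rw [hθdef, div_lt_one hden]; linarith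
        have hsum : θ + (1 - θ) * q₂ = q₁ := by
          rw [hθdef]; field_simp; ring
        have hpt : ∀ᵐ ω ∂P, Z ω ^ q₁ ≤
            θ * (m ^ (1 - θ) * Z ω) + (1 - θ) * (m ^ (-θ) * Z ω ^ q₂) := by
          filter_upwards [hZ.ae_nonneg] with ω hz
          exact young_pointwise hz hm2 hθ0 hθ1 (ne_of_gt h0) hsum
        have hintr : Integrable
            (fun ω => θ * (m ^ (1 - θ) * Z ω) + (1 - θ) * (m ^ (-θ) * Z ω ^ q₂)) P :=
          ((hZ.1.const_mul _).const_mul _).add ((hint2.const_mul _).const_mul _)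
        have hkey := integral_mono_ae hint1 hintr hpt
        have hrhs : ∫ ω, (θ * (m ^ (1 - θ) * Z ω) + (1 - θ) * (m ^ (-θ) * Z ω ^ q₂)) ∂P
            = m ^ (1 - θ) := by
          rw [integral_add ((hZ.1.const_mul _).const_mul _) ((hint2.const_mul _).const_mul _),
            integral_const_mul, integral_const_mul, integral_const_mul, integral_const_mul,
            hZ.2.2, ← hmdef]
          have hmm : m ^ (-θ) * m = m ^ (1 - θ) := by
            nth_rewrite 2 [← Real.rpow_one m]
            rw [← Real.rpow_add hm2]; ring_nf
          rw [hmm]; ring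
        rw [hrhs] at hkey
        have hlog : Real.log (∫ ω, Z ω ^ q₁ ∂P) ≤ (1 - θ) * Real.log m := by
          rw [← Real.log_rpow hm2]
          exact Real.log_le_log hm1 hkey
        have hent2 : (q₂ - 1)⁻¹ * Real.log m ≤ c := by
          have := hent
          rwa [renyiEntropy, if_neg (ne_of_gt hq₂0), if_neg (ne_of_gt hq₂gt), ← hmdef] at this
        constructor
        · exact ⟨fun h => absurd h hq₁1, fun _ _ => hint1,
            fun h => absurd h (not_lt.2 h0.le)⟩
        · rw [renyiEntropy, if_neg (ne_of_gt h0), if_neg hq₁1]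
          have hstep : (q₁ - 1)⁻¹ * Real.log (∫ ω, Z ω ^ q₁ ∂P)
              ≤ (q₁ - 1)⁻¹ * ((1 - θ) * Real.log m) :=
            mul_le_mul_of_nonneg_left hlog (inv_nonneg.2 (by linarith))
          have hco : (q₁ - 1)⁻¹ * ((1 - θ) * Real.log m) = (q₂ - 1)⁻¹ * Real.log m := by
            have h1 : (1 - θ) = (q₁ - 1) / (q₂ - 1) := by
              rw [hθdef]; field_simp; ring
            have ha : q₁ - 1 ≠ 0 := ne_of_gt (by linarith)
            have hb : q₂ - 1 ≠ 0 := ne_of_gt hden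
            rw [h1]
            field_simp
          rw [hco] at hstep
          exact hstep.trans hent2

lemma avar_feasible {P : Measure Ω} [IsProbabilityMeasure P] {Z : Ω → ℝ}
    (hZ : IsDensity P Z) {c q : ℝ} (hc : 1 < c)
    (hb : ∀ᵐ ω ∂P, Z ω ≤ c) (hq : 1 ≤ q) :
    RenyiFinite P Z q ∧ renyiEntropy P Z q ≤ Real.log c := by
  have hc0 : (0:ℝ) < c := lt_trans zero_lt_one hc
  by_cases h1 : q = 1
  · subst h1
    have hkl : Integrable (fun ω => Z ω * Real.log (Z ω)) P := by
      refine (integrable_const (1 + c ^ (2:ℝ))).mono' ?_ ?_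
      · exact Real.continuous_mul_log.comp_aestronglyMeasurable hZ.1.aestronglyMeasurable
      · filter_upwards [hZ.ae_nonneg, hb] with ω hz hzc
        rw [Real.norm_eq_abs]
        calc |Z ω * Real.log (Z ω)| ≤ 1 + Z ω ^ (2:ℝ) / (2 - 1) :=
              abs_mul_log_le hz one_lt_two
          _ ≤ 1 + c ^ (2:ℝ) := by
              have h5 := Real.rpow_le_rpow hz hzc (by norm_num : (0:ℝ) ≤ 2)
              have h6 : (2:ℝ) - 1 = 1 := by norm_num
              rw [h6, div_one]
              linarith
    have hent : ∫ ω, Z ω * Real.log (Z ω) ∂P ≤ Real.log c := by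
      have hpt : ∀ᵐ ω ∂P, Z ω * Real.log (Z ω) ≤ Z ω * Real.log c := by
        filter_upwards [hZ.ae_nonneg, hb] with ω hz hzc
        rcases hz.lt_or_eq with hz' | hz'
        · exact mul_le_mul_of_nonneg_left (Real.log_le_log hz' hzc) hz
        · simp [← hz']
      have := integral_mono_ae hkl (hZ.1.mul_const _) hpt
      rwa [integral_mul_const, hZ.2.2, one_mul] at this
    refine ⟨⟨fun _ => hkl, fun _ h => absurd rfl h, fun h => absurd h (by norm_num)⟩, ?_⟩
    rw [renyiEntropy, if_neg one_ne_zero, if_pos rfl]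
    exact hent
  · have hqgt : 1 < q := lt_of_le_of_ne hq (Ne.symm h1)
    have hq0 : 0 < q := lt_trans zero_lt_one hqgt
    have hint : Integrable (fun ω => Z ω ^ q) P := by
      refine (integrable_const (c ^ q)).mono' ?_ ?_
      · exact (hZ.1.aemeasurable.pow aemeasurable_const).aestronglyMeasurable
      · filter_upwards [hZ.ae_nonneg, hb] with ω hz hzc
        rw [Real.norm_eq_abs, abs_of_nonneg (Real.rpow_nonneg hz _)]
        exact Real.rpow_le_rpow hz hzc hq0.le
    have hub : ∫ ω, Z ω ^ q ∂P ≤ c ^ (q - 1) := by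
      have hpt : ∀ᵐ ω ∂P, Z ω ^ q ≤ Z ω * c ^ (q - 1) := by
        filter_upwards [hZ.ae_nonneg, hb] with ω hz hzc
        rcases hz.lt_or_eq with hz' | hz'
        · have h4 : Z ω ^ q = Z ω * Z ω ^ (q - 1) := by
            nth_rewrite 2 [← Real.rpow_one (Z ω)]
            rw [← Real.rpow_add hz']
            ring_nf
          rw [h4]
          exact mul_le_mul_of_nonneg_left
            (Real.rpow_le_rpow hz hzc (by linarith)) hz
        · rw [← hz', Real.zero_rpow (ne_of_gt hq0), zero_mul]
      have := integral_mono_ae hint (hZ.1.mul_const _) hpt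
      rwa [integral_mul_const, hZ.2.2, one_mul] at this
    have hm : 0 < ∫ ω, Z ω ^ q ∂P := integral_rpow_pos hZ hint
    refine ⟨⟨fun h => absurd h h1, fun _ _ => hint,
      fun h => absurd h (not_lt.2 hq0.le)⟩, ?_⟩
    rw [renyiEntropy, if_neg (ne_of_gt hq0), if_neg h1]
    have hlog : Real.log (∫ ω, Z ω ^ q ∂P) ≤ (q - 1) * Real.log c := by
      rw [← Real.log_rpow hc0]
      exact Real.log_le_log hm hub
    have hstep := mul_le_mul_of_nonneg_left hlog (inv_nonneg.2 (by linarith : (0:ℝ) ≤ q - 1))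
    have : (q - 1)⁻¹ * ((q - 1) * Real.log c) = Real.log c := by
      have hne : q - 1 ≠ 0 := ne_of_gt (by linarith)
      field_simp
    linarith [hstep, this ▸ hstep]

lemma ae_norm_le_of_memLtop {P : Measure Ω} [IsProbabilityMeasure P] {Y : Ω → ℝ}
    (hY : MemLp Y ⊤ P) :
    ∀ᵐ ω ∂P, ‖Y ω‖ ≤ (eLpNormEssSup Y P).toReal := by
  have hKlt : eLpNormEssSup Y P ≠ ⊤ := by
    have := hY.2
    rw [eLpNorm_exponent_top] at this
    exact this.ne
  filter_upwards [ae_le_eLpNormEssSup (f := Y) (μ := P)] with ω h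
  have h2 := ENNReal.toReal_mono hKlt h
  simpa using h2

lemma isBoundedUnder_of_memLtop {P : Measure Ω} [IsProbabilityMeasure P] {Y : Ω → ℝ}
    (hY : MemLp Y ⊤ P) : IsBoundedUnder (· ≤ ·) (ae P) Y := by
  refine ⟨(eLpNormEssSup Y P).toReal, ?_⟩
  rw [eventually_map]
  filter_upwards [ae_norm_le_of_memLtop hY] with ω h
  exact (le_abs_self _).trans (by simpa [Real.norm_eq_abs] using h)

lemma integral_mul_density_le_essSup {P : Measure Ω} [IsProbabilityMeasure P]
    {Y Z : Ω → ℝ} (hY : MemLp Y ⊤ P) (hZ : IsDensity P Z)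
    (hint : Integrable (fun ω => Y ω * Z ω) P) :
    ∫ ω, Y ω * Z ω ∂P ≤ essSup Y P := by
  have hub := ae_le_essSup (isBoundedUnder_of_memLtop hY)
  have hpt : ∀ᵐ ω ∂P, Y ω * Z ω ≤ essSup Y P * Z ω := by
    filter_upwards [hub, hZ.ae_nonneg] with ω h1 h2
    exact mul_le_mul_of_nonneg_right h1 h2
  have := integral_mono_ae hint (hZ.1.const_mul _) hpt
  rwa [integral_const_mul, hZ.2.2, mul_one] at this

lemma exists_feasible_close {P : Measure Ω} [IsProbabilityMeasure P] {α q : ℝ}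
    (hα : α ∈ Set.Ioo (0:ℝ) 1) (hq : q < 0) {Y : Ω → ℝ} (hY : MemLp Y ⊤ P)
    {ε : ℝ} (hε : 0 < ε) :
    ∃ Z : Ω → ℝ, IsDensity P Z ∧ RenyiFinite P Z q ∧
      renyiEntropy P Z q ≤ Real.log (1 / (1 - α)) ∧
      Integrable (fun ω => Y ω * Z ω) P ∧
      essSup Y P - ε ≤ ∫ ω, Y ω * Z ω ∂P := by
  classical
  set M := essSup Y P with hMdef
  set K := (eLpNormEssSup Y P).toReal with hKdef
  have hK0 : 0 ≤ K := ENNReal.toReal_nonneg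
  have hbK : ∀ᵐ ω ∂P, ‖Y ω‖ ≤ K := ae_norm_le_of_memLtop hY
  have hYint : Integrable Y P :=
    (integrable_const K).mono' hY.aestronglyMeasurable hbK
  set Y' := (hY.aestronglyMeasurable.aemeasurable).mk Y with hY'def
  have hY'meas : Measurable Y' := (hY.aestronglyMeasurable.aemeasurable).measurable_mk
  have hYY' : Y =ᵐ[P] Y' := (hY.aestronglyMeasurable.aemeasurable).ae_eq_mk
  set A : Set Ω := {ω | M - ε / 2 < Y' ω} with hAdef
  have hA : MeasurableSet A := measurableSet_lt measurable_const hY'meas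
  have haepos : 0 < P A := by
    by_contra h
    push_neg at h
    have hA0 : P A = 0 := le_antisymm (by simpa using h) zero_le
    have hae : ∀ᵐ ω ∂P, Y' ω ≤ M - ε / 2 := by
      rw [ae_iff]
      convert hA0 using 2
      ext ω
      simp [hAdef, not_le]
    have haeY : ∀ᵐ ω ∂P, Y ω ≤ M - ε / 2 := by
      filter_upwards [hae, hYY'] with ω h1 h2
      rw [h2]; exact h1
    haveI : (ae P).NeBot := by
      rw [ae_neBot]
      intro h0
      have h1 : P Set.univ = 1 := measure_univ
      rw [h0] at h1
      simp at h1
    have hle : essSup Y P ≤ M - ε / 2 := by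
      rw [essSup]
      refine limsup_le_of_le ?_ haeY
      refine isCoboundedUnder_le_of_eventually_le (ae P) (x := -K) ?_
      filter_upwards [hbK] with ω h
      have := abs_le.1 (by simpa [Real.norm_eq_abs] using h)
      linarith [this.1]
    rw [← hMdef] at hle
    linarith
  set a := (P A).toReal with hadef
  have ha0 : 0 < a := ENNReal.toReal_pos (ne_of_gt haepos) (measure_ne_top _ _)
  set D := |M - ε / 2| + K + 1 with hDdef
  have hD0 : 0 < D := by positivity
  set δ := min (1/2 : ℝ) (ε / (2 * D)) with hδdef
  have hδ0 : 0 < δ := lt_min (by norm_num) (by positivity)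
  have hδhalf : δ ≤ 1/2 := min_le_left _ _
  have hδ1 : δ < 1 := lt_of_le_of_lt hδhalf (by norm_num)
  set Z : Ω → ℝ := fun ω => A.indicator (fun _ => (1 - δ) / a) ω + δ with hZdef
  have hZmeas : Measurable Z := (measurable_const.indicator hA).add measurable_const
  have hZlb : ∀ ω, δ ≤ Z ω := by
    intro ω
    rw [hZdef]
    by_cases h : ω ∈ A
    · simp only [Set.indicator_of_mem h]
      have : 0 ≤ (1 - δ) / a := div_nonneg (by linarith) ha0.le
      linarith
    · simp [Set.indicator_of_notMem h]
  have hZub : ∀ ω, Z ω ≤ (1 - δ) / a + δ := by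
    intro ω
    rw [hZdef]
    by_cases h : ω ∈ A
    · simp [Set.indicator_of_mem h]
    · simp only [Set.indicator_of_notMem h]
      have : 0 ≤ (1 - δ) / a := div_nonneg (by linarith) ha0.le
      linarith
  have hZint : Integrable Z P :=
    ((integrable_const _).indicator hA).add (integrable_const δ)
  have hZone : ∫ ω, Z ω ∂P = 1 := by
    rw [hZdef]
    rw [integral_add ((integrable_const _).indicator hA) (integrable_const δ),
      integral_indicator_const _ hA, integral_const]
    simp only [measureReal_def, measure_univ, ENNReal.toReal_one, smul_eq_mul, one_mul, one_smul]
    rw [← hadef]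
    field_simp
    ring
  have hZdens : IsDensity P Z := by
    refine ⟨hZint, ?_, hZone⟩
    filter_upwards with ω
    exact le_trans hδ0.le (hZlb ω)
  have hZq_int : Integrable (fun ω => Z ω ^ q) P := by
    refine (integrable_const (δ ^ q)).mono' ?_ ?_
    · exact (hZmeas.pow measurable_const).aestronglyMeasurable
    · filter_upwards with ω
      rw [Real.norm_eq_abs, abs_of_nonneg (Real.rpow_nonneg (le_trans hδ0.le (hZlb ω)) _)]
      exact Real.rpow_le_rpow_of_nonpos hδ0 (hZlb ω) hq.le
  have hfin : RenyiFinite P Z q := by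
    refine ⟨fun h => absurd h (by linarith), fun _ _ => hZq_int, fun _ => ?_⟩
    filter_upwards with ω
    exact lt_of_lt_of_le hδ0 (hZlb ω)
  have hent : renyiEntropy P Z q ≤ Real.log (1 / (1 - α)) := by
    have hone : (1:ℝ) ≤ ∫ ω, Z ω ^ q ∂P := by
      have hpt : ∀ᵐ ω ∂P, 1 + q * (Z ω - 1) ≤ Z ω ^ q := by
        filter_upwards with ω
        have hz : 0 < Z ω := lt_of_lt_of_le hδ0 (hZlb ω)
        have h1 : Z ω ^ q = Real.exp (q * Real.log (Z ω)) := by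
          rw [Real.rpow_def_of_pos hz]; ring_nf
        have h2 : q * Real.log (Z ω) + 1 ≤ Real.exp (q * Real.log (Z ω)) :=
          Real.add_one_le_exp _
        have h3 : Real.log (Z ω) ≤ Z ω - 1 := Real.log_le_sub_one_of_pos hz
        have h4 : q * (Z ω - 1) ≤ q * Real.log (Z ω) :=
          mul_le_mul_of_nonpos_left h3 hq.le
        rw [h1]
        linarith
      have hintl : Integrable (fun ω => 1 + q * (Z ω - 1)) P :=
        (integrable_const 1).add (((hZint.sub (integrable_const 1)).const_mul q))
      have := integral_mono_ae hintl hZq_int hpt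
      have heq : ∫ ω, (1 + q * (Z ω - 1)) ∂P = 1 := by
        have hfe : (fun ω => 1 + q * (Z ω - 1)) = fun ω => (1 - q) + q * Z ω := by
          funext ω; ring
        rw [hfe, integral_add (integrable_const _) (hZint.const_mul q),
          integral_const_mul, hZone, integral_const]
        simp
      rw [heq] at this
      exact this
    rw [renyiEntropy, if_neg (ne_of_lt hq), if_neg (by linarith)]
    have hlogpos : 0 ≤ Real.log (∫ ω, Z ω ^ q ∂P) := Real.log_nonneg hone
    have hinv : (q - 1)⁻¹ ≤ 0 := inv_nonpos.2 (by linarith)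
    have h5 : (q - 1)⁻¹ * Real.log (∫ ω, Z ω ^ q ∂P) ≤ 0 :=
      mul_nonpos_of_nonpos_of_nonneg hinv hlogpos
    have h6 : 0 < Real.log (1 / (1 - α)) :=
      Real.log_pos (one_lt_one_div (by linarith [hα.2] : (0:ℝ) < 1 - α)
        (by linarith [hα.1] : 1 - α < 1))
    linarith
  have hYZint : Integrable (fun ω => Y ω * Z ω) P := by
    refine (integrable_const (K * ((1 - δ) / a + δ))).mono'
      (hY.aestronglyMeasurable.mul hZmeas.aestronglyMeasurable) ?_
    filter_upwards [hbK] with ω h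
    rw [norm_mul]
    have hz0 : 0 ≤ Z ω := le_trans hδ0.le (hZlb ω)
    rw [Real.norm_eq_abs (Z ω), abs_of_nonneg hz0]
    exact mul_le_mul h (hZub ω) hz0 hK0
  refine ⟨Z, hZdens, hfin, hent, hYZint, ?_⟩
  -- lower bound on the integral
  have hsplit : ∫ ω, Y ω * Z ω ∂P
      = (1 - δ) / a * ∫ ω in A, Y ω ∂P + δ * ∫ ω, Y ω ∂P := by
    have hptw : (fun ω => Y ω * Z ω)
        = fun ω => A.indicator (fun x => (1 - δ) / a * Y x) ω + δ * Y ω := by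
      funext ω
      rw [hZdef]
      by_cases h : ω ∈ A
      · simp only [Set.indicator_of_mem h]; ring
      · simp only [Set.indicator_of_notMem h]; ring
    rw [hptw]
    have hind : Integrable (fun ω => A.indicator (fun x => (1 - δ) / a * Y x) ω) P :=
      ((hYint.const_mul _).indicator hA)
    rw [integral_add hind (hYint.const_mul δ), integral_indicator hA,
      integral_const_mul, integral_const_mul]
  have hsetint : (M - ε / 2) * a ≤ ∫ ω in A, Y ω ∂P := by
    have hA' : ∫ ω in A, Y ω ∂P = ∫ ω in A, Y' ω ∂P :=
      integral_congr_ae (ae_restrict_of_ae hYY')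
    rw [hA']
    have hconst : ∫ _ in A, (M - ε / 2) ∂P = (M - ε / 2) * a := by
      rw [setIntegral_const]
      simp [hadef, measureReal_def, smul_eq_mul, mul_comm]
    rw [← hconst]
    refine setIntegral_mono_on (integrable_const _).integrableOn
      ((hYint.congr hYY').integrableOn) hA ?_
    intro ω hω
    exact le_of_lt hω
  have hYlow : -K ≤ ∫ ω, Y ω ∂P := by
    have h1 : |∫ ω, Y ω ∂P| ≤ K := by
      calc |∫ ω, Y ω ∂P| ≤ ∫ ω, |Y ω| ∂P := by
            simpa [Real.norm_eq_abs] using norm_integral_le_integral_norm Y (μ := P)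
        _ ≤ ∫ _, K ∂P := integral_mono_ae hYint.abs (integrable_const K)
            (by filter_upwards [hbK] with ω h using by simpa [Real.norm_eq_abs] using h)
        _ = K := by simp
    linarith [abs_le.1 h1]
  have hone : (1 - δ) / a * ((M - ε / 2) * a) = (1 - δ) * (M - ε / 2) := by
    field_simp
  have hterm1 : (1 - δ) * (M - ε / 2) ≤ (1 - δ) / a * ∫ ω in A, Y ω ∂P := by
    rw [← hone]
    exact mul_le_mul_of_nonneg_left hsetint (div_nonneg (by linarith) ha0.le)
  have hterm2 : δ * (-K) ≤ δ * ∫ ω, Y ω ∂P := mul_le_mul_of_nonneg_left hYlow hδ0.le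
  have hδD : δ * (M - ε / 2 + K) ≤ ε / 2 := by
    have h1 : M - ε / 2 + K ≤ D := by
      rw [hDdef]
      have := le_abs_self (M - ε / 2)
      linarith
    have h2 : δ * (M - ε / 2 + K) ≤ δ * D := by
      rcases le_or_gt (M - ε / 2 + K) D with h | h
      · exact mul_le_mul_of_nonneg_left h hδ0.le
      · linarith
    have h3 : δ ≤ ε / (2 * D) := min_le_right _ _
    have h4 : δ * D ≤ ε / (2 * D) * D := mul_le_mul_of_nonneg_right h3 hD0.le
    have h5 : ε / (2 * D) * D = ε / 2 := by field_simp
    linarith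
  rw [hsplit]
  have : (1 - δ) * (M - ε / 2) + δ * (-K) ≥ M - ε := by nlinarith [hδ0.le, hδ1.le]
  linarith [hterm1, hterm2, this]

/-- monotonicity in the conjugate order. For `p₁' < 0 < p₂' < 1 ≤ p₃' ≤ p₄'`
and conjugates `pᵢ = pᵢ'/(pᵢ'-1)` (so that `EVaR_α^{pᵢ} = EVaRd` at dual order `pᵢ'`, the
order `p₃' = 1` corresponding to `p₃ = ∞`, i.e. `EVaR_α^∞ = EVaRd` at dual order `1`):
`AVaR_α(Y) ≤ EVaR_α^{p₄}(Y) ≤ EVaR_α^{p₃}(Y) ≤ EVaR_α^∞(Y) ≤ EVaR_α^{p₂}(Y)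
  ≤ EVaR_α^{p₁}(Y) = ess sup Y` for bounded `Y`. -/
theorem evar_monotone (P : Measure Ω) [IsProbabilityMeasure P]
    (α : ℝ) (hα : α ∈ Set.Ioo (0 : ℝ) 1)
    (p₁' p₂' p₃' p₄' : ℝ) (h₁ : p₁' < 0) (h₂ : 0 < p₂') (h₃ : p₂' < 1)
    (h₄ : 1 ≤ p₃') (h₅ : p₃' ≤ p₄')
    (Y : Ω → ℝ) (hY : MemLp Y ⊤ P) :
    AVaR P α Y ≤ EVaRd P α p₄' Y ∧
    EVaRd P α p₄' Y ≤ EVaRd P α p₃' Y ∧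
    EVaRd P α p₃' Y ≤ EVaRd P α 1 Y ∧
    EVaRd P α 1 Y ≤ EVaRd P α p₂' Y ∧
    EVaRd P α p₂' Y ≤ EVaRd P α p₁' Y ∧
    EVaRd P α p₁' Y = ((essSup Y P : ℝ) : EReal) := by
  obtain ⟨hα0, hα1⟩ := hα
  have hcgt : (1:ℝ) < 1 / (1 - α) :=
    one_lt_one_div (by linarith) (by linarith)
  have h₃0 : (0:ℝ) < p₃' := lt_of_lt_of_le zero_lt_one h₄
  have h₄4 : (1:ℝ) ≤ p₄' := le_trans h₄ h₅
  have hup : ∀ q : ℝ, EVaRd P α q Y ≤ ((essSup Y P : ℝ) : EReal) := by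
    intro q
    rw [EVaRd]
    refine sSup_le ?_
    rintro x ⟨Z, hd, -, -, hint, rfl⟩
    exact EReal.coe_le_coe_iff.2 (integral_mul_density_le_essSup hY hd hint)
  have hmono : ∀ q₁ q₂ : ℝ, 0 < q₁ → q₁ ≤ q₂ → 1 ≤ q₂ → (q₁ < 1 → q₂ = 1) →
      EVaRd P α q₂ Y ≤ EVaRd P α q₁ Y := by
    intro q₁ q₂ h0 h12 h2 h3
    rw [EVaRd, EVaRd]
    refine sSup_le_sSup ?_
    rintro x ⟨Z, hd, hfin, hent, hint, rfl⟩
    obtain ⟨f1, f2⟩ := feasible_mono hd h0 h12 h2 h3 hfin hent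
    exact ⟨Z, hd, f1, f2, hint, rfl⟩
  have heq : EVaRd P α p₁' Y = ((essSup Y P : ℝ) : EReal) := by
    refine le_antisymm (hup p₁') ?_
    rw [← EReal.le_of_forall_lt_iff_le]
    intro z hz
    by_contra hzM
    push_neg at hzM
    have hzM' : z < essSup Y P := by exact_mod_cast hzM
    have hε : (0:ℝ) < essSup Y P - z := by linarith
    obtain ⟨Z, hd, hfin, hent, hint, hlow⟩ :=
      exists_feasible_close ⟨hα0, hα1⟩ h₁ hY hε
    have hmem : ((∫ ω, Y ω * Z ω ∂P : ℝ) : EReal) ∈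
        {x : EReal | ∃ Z : Ω → ℝ, IsDensity P Z ∧ RenyiFinite P Z p₁' ∧
          renyiEntropy P Z p₁' ≤ Real.log (1 / (1 - α)) ∧
          Integrable (fun ω => Y ω * Z ω) P ∧
          x = ((∫ ω, Y ω * Z ω ∂P : ℝ) : EReal)} :=
      ⟨Z, hd, hfin, hent, hint, rfl⟩
    have hss : ((∫ ω, Y ω * Z ω ∂P : ℝ) : EReal) ≤ EVaRd P α p₁' Y := by
      rw [EVaRd]; exact le_sSup hmem
    have h2 : (z:ℝ) ≤ ∫ ω, Y ω * Z ω ∂P := by linarith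
    have h3 : ((z:ℝ) : EReal) ≤ EVaRd P α p₁' Y :=
      le_trans (EReal.coe_le_coe_iff.2 h2) hss
    exact absurd (lt_of_le_of_lt h3 hz) (lt_irrefl _)
  refine ⟨?_, ?_, ?_, ?_, ?_, heq⟩
  · rw [AVaR, EVaRd]
    refine sSup_le_sSup ?_
    rintro x ⟨Z, hd, hb, hint, rfl⟩
    obtain ⟨f1, f2⟩ := avar_feasible hd hcgt hb h₄4
    exact ⟨Z, hd, f1, f2, hint, rfl⟩
  · exact hmono p₃' p₄' h₃0 h₅ h₄4 (fun h => absurd h (not_lt.2 h₄))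
  · exact hmono 1 p₃' one_pos h₄ h₄ (fun h => absurd h (lt_irrefl 1))
  · exact hmono p₂' 1 h₂ h₃.le (le_refl 1) (fun _ => rfl)
  · calc EVaRd P α p₂' Y ≤ ((essSup Y P : ℝ) : EReal) := hup p₂'
      _ = EVaRd P α p₁' Y := heq.symm

end
end

section
/- Let 0 < α' ≤ α < 1 and let Y ≥ 0 be a random variable on (Ω, 𝓕, P). If p > 1 and Y ∈ L^p(P), then EVaR_α^p(Y) ≤ ( ((1-α)/(1-α'))^{1/(p-1)} − (1/(1-α))^{1/(1-p)} )^{(1-p)/p} · EVaR_{α'}^p(Y). If p < 0 and Y is essentially bounded, then EVaR_α^p(Y) ≤ (1 − (1-α')^{-1/p})^{-1} · EVaR_{α'}^p(Y). -/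
open MeasureTheory Real Filter

noncomputable section

variable {Ω : Type*} [MeasurableSpace Ω]

/-! ### Auxiliary lemmas -/

private lemma max_rpow_le_aux {z ρ q : ℝ} (hz : 0 ≤ z) (hρ : 0 ≤ ρ) :
    max z ρ ^ q ≤ z ^ q + ρ ^ q := by
  rcases le_total z ρ with h | h
  · rw [max_eq_right h]
    exact le_add_of_nonneg_left (Real.rpow_nonneg hz q)
  · rw [max_eq_left h]
    exact le_add_of_nonneg_right (Real.rpow_nonneg hρ q)

private lemma rpow_le_one_add_aux {w q : ℝ} (hw : 0 ≤ w) (hq0 : 0 ≤ q) (hq1 : q ≤ 1) :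
    w ^ q ≤ 1 + w := by
  rcases le_total w 1 with h | h
  · have := Real.rpow_le_one hw h hq0
    linarith
  · calc w ^ q ≤ w ^ (1 : ℝ) := Real.rpow_le_rpow_of_exponent_le h hq1
      _ = w := Real.rpow_one w
      _ ≤ 1 + w := by linarith

private lemma moment_le_of_entropy_aux {β S q : ℝ} (hβ0 : 0 < β) (hβ1 : β ≤ 1) (hq : 1 < q)
    (hS0 : 0 ≤ S) (h : (q - 1)⁻¹ * Real.log S ≤ Real.log (1 / β)) : S ≤ β ^ (1 - q) := by
  have hq0 : (0 : ℝ) < q - 1 := by linarith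
  have hT1 : (1 : ℝ) ≤ β ^ (1 - q) :=
    Real.one_le_rpow_of_pos_of_le_one_of_nonpos hβ0 hβ1 (by linarith)
  rcases le_or_gt S 1 with h1 | h1
  · linarith
  · have hlog : Real.log S ≤ (q - 1) * Real.log (1 / β) := by
      have h2 := mul_le_mul_of_nonneg_left h (le_of_lt hq0)
      rwa [← mul_assoc, mul_inv_cancel₀ (ne_of_gt hq0), one_mul] at h2
    calc S = Real.exp (Real.log S) := (Real.exp_log (by linarith)).symm
      _ ≤ Real.exp ((q - 1) * Real.log (1 / β)) := Real.exp_le_exp.mpr hlog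
      _ = (1 / β) ^ (q - 1) := by
          rw [Real.rpow_def_of_pos (by positivity), mul_comm]
      _ = β ^ (1 - q) := by
          rw [one_div, Real.inv_rpow hβ0.le, ← Real.rpow_neg hβ0.le]
          congr 1; ring

private lemma entropy_le_of_moment_gt_one_aux {β S q : ℝ} (hβ0 : 0 < β) (hβ1 : β ≤ 1)
    (hq : 1 < q) (hS0 : 0 ≤ S) (hS : S ≤ β ^ (1 - q)) :
    (q - 1)⁻¹ * Real.log S ≤ Real.log (1 / β) := by
  have hL0 : 0 ≤ Real.log (1 / β) := by
    rw [one_div, Real.log_inv]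
    linarith [Real.log_nonpos hβ0.le hβ1]
  rcases le_or_gt S 1 with h1 | h1
  · have hls : Real.log S ≤ 0 := Real.log_nonpos hS0 h1
    have : (q - 1)⁻¹ * Real.log S ≤ 0 :=
      mul_nonpos_of_nonneg_of_nonpos (inv_nonneg.mpr (by linarith)) hls
    linarith
  · have hne : q - 1 ≠ 0 := by intro h'; rw [sub_eq_zero] at h'; exact absurd h'.symm (ne_of_lt hq)
    have hlog : Real.log S ≤ Real.log (β ^ (1 - q)) := Real.log_le_log (by linarith) hS
    rw [Real.log_rpow hβ0] at hlog
    have h2 : (q - 1)⁻¹ * Real.log S ≤ (q - 1)⁻¹ * ((1 - q) * Real.log β) :=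
      mul_le_mul_of_nonneg_left hlog (inv_nonneg.mpr (by linarith))
    have h3 : (q - 1)⁻¹ * ((1 - q) * Real.log β) = -Real.log β := by
      field_simp
      ring
    rw [one_div, Real.log_inv]
    linarith

private lemma entropy_le_of_moment_lt_one_aux {β S q : ℝ} (hβ0 : 0 < β) (hq : q < 1)
    (hS : β ^ (1 - q) ≤ S) : (q - 1)⁻¹ * Real.log S ≤ Real.log (1 / β) := by
  have hT0 : (0 : ℝ) < β ^ (1 - q) := Real.rpow_pos_of_pos hβ0 _
  have hne : q - 1 ≠ 0 := by intro h'; rw [sub_eq_zero] at h'; exact absurd h' (ne_of_lt hq)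
  have hlog : Real.log (β ^ (1 - q)) ≤ Real.log S := Real.log_le_log hT0 hS
  rw [Real.log_rpow hβ0] at hlog
  have h2 : (q - 1)⁻¹ * Real.log S ≤ (q - 1)⁻¹ * ((1 - q) * Real.log β) :=
    mul_le_mul_of_nonpos_left hlog (inv_nonpos.mpr (by linarith))
  have h3 : (q - 1)⁻¹ * ((1 - q) * Real.log β) = -Real.log β := by
    field_simp
    ring
  rw [one_div, Real.log_inv]
  linarith

/-- Comparison principle: if every feasible density at level `α` is dominated (in value,
up to the factor `c`) by some feasible density at level `α'`, then
`EVaRd α ≤ c * EVaRd α'`. -/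
private lemma EVaRd_le_mul_aux {P : Measure Ω} {α α' q : ℝ} {Y : Ω → ℝ} {c : ℝ} (hc : 0 < c)
    (h : ∀ Z : Ω → ℝ, IsDensity P Z → RenyiFinite P Z q →
      renyiEntropy P Z q ≤ Real.log (1 / (1 - α)) →
      Integrable (fun ω => Y ω * Z ω) P →
      ∃ W : Ω → ℝ, IsDensity P W ∧ RenyiFinite P W q ∧
        renyiEntropy P W q ≤ Real.log (1 / (1 - α')) ∧
        Integrable (fun ω => Y ω * W ω) P ∧
        (∫ ω, Y ω * Z ω ∂P) ≤ c * ∫ ω, Y ω * W ω ∂P) :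
    EVaRd P α q Y ≤ (c : EReal) * EVaRd P α' q Y := by
  rw [EVaRd, EVaRd]
  refine sSup_le ?_
  rintro x ⟨Z, hZd, hZf, hZe, hZi, rfl⟩
  obtain ⟨W, hWd, hWf, hWe, hWi, hle⟩ := h Z hZd hZf hZe hZi
  calc ((∫ ω, Y ω * Z ω ∂P : ℝ) : EReal)
      ≤ ((c * ∫ ω, Y ω * W ω ∂P : ℝ) : EReal) := by exact_mod_cast hle
    _ = (c : EReal) * ((∫ ω, Y ω * W ω ∂P : ℝ) : EReal) := EReal.coe_mul _ _
    _ ≤ (c : EReal) * sSup {x : EReal | ∃ Z : Ω → ℝ, IsDensity P Z ∧ RenyiFinite P Z q ∧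
          renyiEntropy P Z q ≤ Real.log (1 / (1 - α')) ∧
          Integrable (fun ω => Y ω * Z ω) P ∧
          x = ((∫ ω, Y ω * Z ω ∂P : ℝ) : EReal)} := by
        refine mul_le_mul_of_nonneg_left (le_sSup ⟨W, hWd, hWf, hWe, hWi, rfl⟩) ?_
        exact_mod_cast hc.le


/-- comparison of the Entropic Value-at-Risk for different confidence
levels `0 < α' ≤ α < 1`, for nonnegative `Y`. -/
theorem evar_level_compare (P : Measure Ω) [IsProbabilityMeasure P]
    (α α' p : ℝ) (h0 : 0 < α') (h1 : α' ≤ α) (h2 : α < 1)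
    (Y : Ω → ℝ) (hY : 0 ≤ᵐ[P] Y) :
    (1 < p → MemLp Y (ENNReal.ofReal p) P →
      EVaR P α p Y ≤
        (((((1 - α) / (1 - α')) ^ (1 / (p - 1)) - (1 / (1 - α)) ^ (1 / (1 - p))) ^
            ((1 - p) / p) : ℝ) : EReal) * EVaR P α' p Y) ∧
    (p < 0 → MemLp Y ⊤ P →
      EVaR P α p Y ≤
        (((1 - (1 - α') ^ (-(1 / p)))⁻¹ : ℝ) : EReal) * EVaR P α' p Y) := by
  constructor
  · -- Case `1 < p`
    intro hp hYp
    have hpne1 : p ≠ 1 := by intro h'; rw [h'] at hp; exact lt_irrefl 1 hp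
    have hpm1 : (0 : ℝ) < p - 1 := by linarith
    have hβ0 : (0 : ℝ) < 1 - α := by linarith
    have hβ'0 : (0 : ℝ) < 1 - α' := by linarith
    have hβ'1 : 1 - α' < 1 := by linarith
    have hββ' : 1 - α ≤ 1 - α' := by linarith
    obtain ⟨q, hqdef⟩ : ∃ q : ℝ, q = p / (p - 1) := ⟨_, rfl⟩
    have hqpos : 0 < q := by rw [hqdef]; exact div_pos (by linarith) hpm1
    have hq1 : 1 < q := by
      rw [hqdef, lt_div_iff₀ hpm1]; linarith
    have hq0ne : q ≠ 0 := hqpos.ne'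
    have hq1ne : q ≠ 1 := ne_of_gt hq1
    obtain ⟨A, hAdef⟩ : ∃ x : ℝ, x = (1 - α) ^ (1 / (p - 1)) := ⟨_, rfl⟩
    obtain ⟨B, hBdef⟩ : ∃ x : ℝ, x = (1 - α') ^ (1 / (p - 1)) := ⟨_, rfl⟩
    have hA0 : 0 < A := hAdef ▸ Real.rpow_pos_of_pos hβ0 _
    have hB0 : 0 < B := hBdef ▸ Real.rpow_pos_of_pos hβ'0 _
    have hB1 : B < 1 := hBdef ▸ Real.rpow_lt_one hβ'0.le hβ'1 (by positivity)
    have hAB : A ≤ B := by rw [hAdef, hBdef]; exact Real.rpow_le_rpow hβ0.le hββ' (by positivity)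
    obtain ⟨I, hIdef⟩ : ∃ x : ℝ, x = ((1 - α) / (1 - α')) ^ (1 / (p - 1)) - (1 / (1 - α)) ^ (1 / (1 - p)) := ⟨_, rfl⟩
    have hA' : (1 / (1 - α)) ^ (1 / (1 - p)) = A := by
      rw [one_div, Real.inv_rpow hβ0.le, ← Real.rpow_neg hβ0.le, hAdef]
      congr 1
      rw [show p - 1 = -(1 - p) by ring, one_div, one_div, inv_neg]
    have hIeq : I = A / B - A := by
      rw [hIdef, Real.div_rpow hβ0.le hβ'0.le, hA', ← hAdef, ← hBdef]
    have hI0 : 0 < I := by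
      rw [hIeq]
      have : A < A / B := by rw [lt_div_iff₀ hB0]; nlinarith
      linarith
    have hI1 : I < 1 := by
      rw [hIeq]
      have h1 : A / B ≤ 1 := (div_le_one hB0).mpr hAB
      linarith
    obtain ⟨c, hcdef⟩ : ∃ x : ℝ, x = I ^ ((1 - p) / p) := ⟨_, rfl⟩
    have hc0 : 0 < c := hcdef ▸ Real.rpow_pos_of_pos hI0 _
    have hexp_nonpos : (1 - p) / p ≤ 0 := by
      have h' : (1 - p) / p = -((p - 1) / p) := by ring
      rw [h']
      have := div_nonneg (by linarith : (0:ℝ) ≤ p - 1) (by linarith : (0:ℝ) ≤ p)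
      linarith
    have hc1 : 1 ≤ c := hcdef ▸
      Real.one_le_rpow_of_pos_of_le_one_of_nonpos hI0 hI1.le hexp_nonpos
    have hcq : c ^ q = I⁻¹ := by
      rw [hcdef, ← Real.rpow_mul hI0.le]
      have hexp : (1 - p) / p * q = -1 := by
        rw [hqdef]; field_simp; ring
      rw [hexp, Real.rpow_neg_one]
    obtain ⟨T, hTdef⟩ : ∃ x : ℝ, x = (1 - α) ^ (1 - q) := ⟨_, rfl⟩
    obtain ⟨T', hT'def⟩ : ∃ x : ℝ, x = (1 - α') ^ (1 - q) := ⟨_, rfl⟩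
    have h1q : 1 - q = -(1 / (p - 1)) := by
      rw [hqdef]; field_simp; ring
    have hTA : T = A⁻¹ := by rw [hTdef, hAdef, h1q, Real.rpow_neg hβ0.le]
    have hT'B : T' = B⁻¹ := by rw [hT'def, hBdef, h1q, Real.rpow_neg hβ'0.le]
    have hIne' : A / B - A ≠ 0 := by rw [← hIeq]; exact hI0.ne'
    have hkey : T + c ^ q = T' * c ^ q := by
      rw [hcq, hTA, hT'B]
      have hAne : A ≠ 0 := hA0.ne'
      have hBne : B ≠ 0 := hB0.ne'
      have h1B0 : (0:ℝ) < 1 - B := by linarith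
      have hIval : I = A * (1 - B) / B := by
        rw [hIeq]; field_simp
      rw [hIval]
      field_simp
      ring
    simp only [EVaR, if_neg hpne1]
    rw [← hqdef, ← hIdef, ← hcdef]
    refine EVaRd_le_mul_aux hc0 ?_
    intro Z hZd hZf hZe hZi
    obtain ⟨hZint, hZnn, hZone⟩ := hZd
    have hZaesm := hZint.aestronglyMeasurable
    have hZq_int : Integrable (fun ω => Z ω ^ q) P := hZf.2.1 hq0ne hq1ne
    have hS0 : 0 ≤ ∫ ω, Z ω ^ q ∂P :=
      integral_nonneg_of_ae (hZnn.mono fun ω h => Real.rpow_nonneg h q)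
    have hSle : (∫ ω, Z ω ^ q ∂P) ≤ T := by
      rw [hTdef]
      refine moment_le_of_entropy_aux hβ0 (by linarith) hq1 hS0 ?_
      have he := hZe
      rw [renyiEntropy, if_neg hq0ne, if_neg hq1ne] at he
      exact he
    -- integrability of the positive parts
    have hsubint : ∀ ρ : ℝ, Integrable (fun ω => max (Z ω - ρ) 0) P := by
      intro ρ
      refine Integrable.mono' (hZint.abs.add (integrable_const |ρ|))
        ((hZaesm.sub aestronglyMeasurable_const).sup aestronglyMeasurable_const) ?_
      refine Eventually.of_forall fun ω => ?_
      rw [Real.norm_eq_abs, abs_of_nonneg (le_max_right _ _)]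
      refine max_le ?_ (add_nonneg (abs_nonneg _) (abs_nonneg _))
      calc Z ω - ρ ≤ |Z ω - ρ| := le_abs_self _
        _ ≤ |Z ω| + |ρ| := abs_sub _ _
    -- continuity of ψ
    have hgcont : Continuous (fun ρ : ℝ => ∫ ω, max (Z ω - ρ) 0 ∂P) := by
      refine (LipschitzWith.of_dist_le_mul (K := 1) ?_).continuous
      intro x y
      rw [Real.dist_eq, Real.dist_eq]
      have hsub : (∫ ω, max (Z ω - x) 0 ∂P) - (∫ ω, max (Z ω - y) 0 ∂P)
          = ∫ ω, (max (Z ω - x) 0 - max (Z ω - y) 0) ∂P :=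
        (integral_sub (hsubint x) (hsubint y)).symm
      rw [hsub]
      have h1 : |∫ ω, (max (Z ω - x) 0 - max (Z ω - y) 0) ∂P|
          ≤ ∫ ω, |max (Z ω - x) 0 - max (Z ω - y) 0| ∂P := by
        simpa [Real.norm_eq_abs] using
          norm_integral_le_integral_norm (μ := P)
            (fun ω => max (Z ω - x) 0 - max (Z ω - y) 0)
      have h2 : (∫ ω, |max (Z ω - x) 0 - max (Z ω - y) 0| ∂P) ≤ ∫ ω, |x - y| ∂P := by
        refine integral_mono_ae ((hsubint x).sub (hsubint y)).abs (integrable_const _)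
          (Eventually.of_forall fun ω => ?_)
        calc |max (Z ω - x) 0 - max (Z ω - y) 0| ≤ |(Z ω - x) - (Z ω - y)| :=
              abs_max_sub_max_le_abs _ _ _
          _ = |y - x| := by congr 1; ring
          _ = |x - y| := abs_sub_comm _ _
      have h3 : (∫ _ω : Ω, |x - y| ∂P) = |x - y| := by
        rw [integral_const, probReal_univ, one_smul]
      calc |(∫ ω, (max (Z ω - x) 0 - max (Z ω - y) 0) ∂P)|
          ≤ ∫ ω, |x - y| ∂P := le_trans h1 h2
        _ = 1 * |x - y| := by rw [h3, one_mul]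
        _ ≤ (1 : NNReal) * |x - y| := by norm_num
    have hψcont : Continuous (fun ρ : ℝ => ρ + ∫ ω, max (Z ω - ρ) 0 ∂P) :=
      continuous_id.add hgcont
    have hint0 : (∫ ω, max (Z ω) 0 ∂P) = 1 := by
      rw [← hZone]
      refine integral_congr_ae (hZnn.mono fun ω h => ?_)
      exact max_eq_left h
    have hψc : c ≤ (fun ρ : ℝ => ρ + ∫ ω, max (Z ω - ρ) 0 ∂P) c := by
      have h' : 0 ≤ ∫ ω, max (Z ω - c) 0 ∂P :=
        integral_nonneg fun ω => le_max_right _ _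
      simpa using h'
    obtain ⟨ρ, hρmem, hρeq⟩ := intermediate_value_Icc (by linarith : (0:ℝ) ≤ c)
      hψcont.continuousOn ⟨by simpa [hint0] using hc1, hψc⟩
    obtain ⟨hρ0, hρc⟩ := hρmem
    simp only at hρeq
    have hmax_eq : ∀ ω, max (Z ω) ρ = ρ + max (Z ω - ρ) 0 := by
      intro ω
      rcases le_total (Z ω) ρ with h | h
      · rw [max_eq_right h, max_eq_right (by linarith : Z ω - ρ ≤ 0)]; ring
      · rw [max_eq_left h, max_eq_left (by linarith : (0:ℝ) ≤ Z ω - ρ)]; ring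
    have hmax_int : Integrable (fun ω => max (Z ω) ρ) P :=
      ((integrable_const ρ).add (hsubint ρ)).congr
        (Eventually.of_forall fun ω => (hmax_eq ω).symm)
    have hNeq : (∫ ω, max (Z ω) ρ ∂P) = c := by
      calc ∫ ω, max (Z ω) ρ ∂P = ∫ ω, (ρ + max (Z ω - ρ) 0) ∂P :=
            integral_congr_ae (Eventually.of_forall fun ω => hmax_eq ω)
        _ = ρ + ∫ ω, max (Z ω - ρ) 0 ∂P := by
            rw [integral_add (integrable_const ρ) (hsubint ρ), integral_const,
              probReal_univ, one_smul]
        _ = c := hρeq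
    set W : Ω → ℝ := fun ω => max (Z ω) ρ / c with hWdef
    have hWnn : ∀ ω, 0 ≤ W ω := fun ω =>
      div_nonneg (le_trans hρ0 (le_max_right _ _)) hc0.le
    have hWint : Integrable W P := hmax_int.div_const c
    have hWone : (∫ ω, W ω ∂P) = 1 := by
      rw [hWdef]
      rw [integral_div, hNeq, div_self hc0.ne']
    have hWd : IsDensity P W := ⟨hWint, Eventually.of_forall hWnn, hWone⟩
    have hWaesm : AEStronglyMeasurable W P := hWint.aestronglyMeasurable
    have hWq_aesm : AEStronglyMeasurable (fun ω => W ω ^ q) P :=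
      (hWaesm.aemeasurable.pow_const q).aestronglyMeasurable
    have hWq_bound : ∀ᵐ ω ∂P, W ω ^ q ≤ (Z ω ^ q + ρ ^ q) / c ^ q := by
      filter_upwards [hZnn] with ω h
      simp only [hWdef]
      rw [Real.div_rpow (le_trans hρ0 (le_max_right _ _)) hc0.le]
      exact (div_le_div_iff_of_pos_right (Real.rpow_pos_of_pos hc0 q)).mpr (max_rpow_le_aux h hρ0)
    have hdom_int : Integrable (fun ω => (Z ω ^ q + ρ ^ q) / c ^ q) P :=
      (hZq_int.add (integrable_const _)).div_const _
    have hWq_int : Integrable (fun ω => W ω ^ q) P := by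
      refine Integrable.mono' hdom_int hWq_aesm ?_
      filter_upwards [hWq_bound] with ω hb
      rw [Real.norm_eq_abs, abs_of_nonneg (Real.rpow_nonneg (hWnn ω) q)]
      exact hb
    have hWf : RenyiFinite P W q :=
      ⟨fun h => absurd h hq1ne, fun _ _ => hWq_int,
        fun h => absurd h (not_lt.mpr hqpos.le)⟩
    have hSW_nonneg : 0 ≤ ∫ ω, W ω ^ q ∂P :=
      integral_nonneg fun ω => Real.rpow_nonneg (hWnn ω) q
    have hcqpos : 0 < c ^ q := Real.rpow_pos_of_pos hc0 q
    have hSW_le : (∫ ω, W ω ^ q ∂P) ≤ T' := by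
      have h1 : (∫ ω, W ω ^ q ∂P) ≤ ∫ ω, (Z ω ^ q + ρ ^ q) / c ^ q ∂P :=
        integral_mono_ae hWq_int hdom_int hWq_bound
      have h2 : (∫ ω, (Z ω ^ q + ρ ^ q) / c ^ q ∂P)
          = ((∫ ω, Z ω ^ q ∂P) + ρ ^ q) / c ^ q := by
        rw [integral_div, integral_add hZq_int (integrable_const _), integral_const,
          probReal_univ, one_smul]
      have hρq : ρ ^ q ≤ c ^ q := Real.rpow_le_rpow hρ0 hρc hqpos.le
      have h3 : ((∫ ω, Z ω ^ q ∂P) + ρ ^ q) / c ^ q ≤ (T + c ^ q) / c ^ q :=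
        (div_le_div_iff_of_pos_right hcqpos).mpr (add_le_add hSle hρq)
      have h4 : (T + c ^ q) / c ^ q = T' := by
        rw [hkey, mul_div_cancel_right₀ _ hcqpos.ne']
      calc (∫ ω, W ω ^ q ∂P) ≤ ((∫ ω, Z ω ^ q ∂P) + ρ ^ q) / c ^ q := h1.trans (le_of_eq h2)
        _ ≤ (T + c ^ q) / c ^ q := h3
        _ = T' := h4
    have hWe : renyiEntropy P W q ≤ Real.log (1 / (1 - α')) := by
      rw [renyiEntropy, if_neg hq0ne, if_neg hq1ne]
      refine entropy_le_of_moment_gt_one_aux hβ'0 (by linarith) hq1 hSW_nonneg ?_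
      rw [← hT'def]; exact hSW_le
    have hYint : Integrable Y P := hYp.integrable (ENNReal.one_le_ofReal.mpr (le_of_lt hp))
    have hYaesm := hYint.aestronglyMeasurable
    have hsplit : ∀ ω, Y ω * max (Z ω) ρ = Y ω * Z ω + Y ω * max (ρ - Z ω) 0 := by
      intro ω
      have h' : max (Z ω) ρ = Z ω + max (ρ - Z ω) 0 := by
        rcases le_total (Z ω) ρ with h | h
        · rw [max_eq_right h, max_eq_left (by linarith : (0:ℝ) ≤ ρ - Z ω)]; ring
        · rw [max_eq_left h, max_eq_right (by linarith : ρ - Z ω ≤ 0)]; ring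
      rw [h']; ring
    have hY2_int : Integrable (fun ω => Y ω * max (ρ - Z ω) 0) P := by
      refine Integrable.mono' (hYint.abs.const_mul ρ)
        (hYaesm.mul ((aestronglyMeasurable_const.sub hZaesm).sup aestronglyMeasurable_const)) ?_
      filter_upwards [hZnn] with ω hz
      have hz' : (0:ℝ) ≤ Z ω := hz
      rw [Real.norm_eq_abs, abs_mul, abs_of_nonneg (le_max_right (ρ - Z ω) 0)]
      have h1 : max (ρ - Z ω) 0 ≤ ρ := max_le (by linarith) hρ0
      calc |Y ω| * max (ρ - Z ω) 0 ≤ |Y ω| * ρ :=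
            mul_le_mul_of_nonneg_left h1 (abs_nonneg _)
        _ = ρ * |Y ω| := mul_comm _ _
    have hYmax_int : Integrable (fun ω => Y ω * max (Z ω) ρ) P :=
      (hZi.add hY2_int).congr (Eventually.of_forall fun ω => (hsplit ω).symm)
    have hYW_eq : (fun ω => Y ω * W ω) = fun ω => (Y ω * max (Z ω) ρ) / c := by
      funext ω; rw [hWdef]; ring
    have hYW_int : Integrable (fun ω => Y ω * W ω) P := by
      rw [hYW_eq]; exact hYmax_int.div_const c
    refine ⟨W, hWd, hWf, hWe, hYW_int, ?_⟩
    have hmono : (∫ ω, Y ω * Z ω ∂P) ≤ ∫ ω, Y ω * max (Z ω) ρ ∂P := by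
      refine integral_mono_ae hZi hYmax_int ?_
      filter_upwards [hY] with ω hy
      exact mul_le_mul_of_nonneg_left (le_max_left _ _) hy
    have hint_eq : (∫ ω, Y ω * W ω ∂P) = (∫ ω, Y ω * max (Z ω) ρ ∂P) / c := by
      rw [hYW_eq, integral_div]
    rw [hint_eq, mul_div_cancel₀ _ hc0.ne']
    exact hmono
  · -- Case `p < 0`
    intro hp hYtop
    have hpne1 : p ≠ 1 := by linarith
    have hβ'0 : (0 : ℝ) < 1 - α' := by linarith
    have hβ'1 : 1 - α' < 1 := by linarith
    obtain ⟨q, hqdef⟩ : ∃ q : ℝ, q = p / (p - 1) := ⟨_, rfl⟩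
    have hpm1 : p - 1 < 0 := by linarith
    have hpne0 : p ≠ 0 := ne_of_lt hp
    have hpm1ne : p - 1 ≠ 0 := ne_of_lt hpm1
    have hqpos : 0 < q := by
      rw [hqdef]
      exact div_pos_iff.mpr (Or.inr ⟨hp, hpm1⟩)
    have hq1sub : q - 1 = 1 / (p - 1) := by
      rw [hqdef]; field_simp; ring
    have hqlt1 : q < 1 := by
      have h' : 1 / (p - 1) < 0 := one_div_neg.mpr hpm1
      linarith [hq1sub]
    have hq0ne : q ≠ 0 := hqpos.ne'
    have hq1ne : q ≠ 1 := ne_of_lt hqlt1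
    obtain ⟨μ, hμdef⟩ : ∃ x : ℝ, x = (1 - α') ^ (-(1 / p)) := ⟨_, rfl⟩
    have hexp_pos : 0 < -(1 / p) := by
      have : 1 / p < 0 := one_div_neg.mpr hp
      linarith
    have hμ0 : 0 < μ := hμdef ▸ Real.rpow_pos_of_pos hβ'0 _
    have hμ1 : μ < 1 := hμdef ▸ Real.rpow_lt_one hβ'0.le hβ'1 hexp_pos
    obtain ⟨lam, hlamdef⟩ : ∃ x : ℝ, x = 1 - μ := ⟨_, rfl⟩
    have hlam0 : 0 < lam := by rw [hlamdef]; linarith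
    simp only [EVaR, if_neg hpne1]
    rw [← hqdef, ← hμdef, ← hlamdef]
    refine EVaRd_le_mul_aux (inv_pos.mpr hlam0) ?_
    intro Z hZd hZf hZe hZi
    obtain ⟨hZint, hZnn, hZone⟩ := hZd
    set W : Ω → ℝ := fun ω => lam * Z ω + μ with hWdef
    have hWint : Integrable W P := (hZint.const_mul lam).add (integrable_const μ)
    have hWone : (∫ ω, W ω ∂P) = 1 := by
      rw [hWdef, integral_add (hZint.const_mul lam) (integrable_const μ),
        integral_const_mul, hZone, integral_const, probReal_univ,
        one_smul, hlamdef]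
      ring
    have hWge : ∀ᵐ ω ∂P, μ ≤ W ω := by
      filter_upwards [hZnn] with ω h
      have h' : (0:ℝ) ≤ Z ω := h
      simp only [hWdef]
      nlinarith [mul_nonneg hlam0.le h']
    have hWnn : 0 ≤ᵐ[P] W := by
      filter_upwards [hWge] with ω h
      exact le_trans hμ0.le h
    have hWd : IsDensity P W := ⟨hWint, hWnn, hWone⟩
    have hWq_aesm : AEStronglyMeasurable (fun ω => W ω ^ q) P :=
      (hWint.aestronglyMeasurable.aemeasurable.pow_const q).aestronglyMeasurable
    have hWq_int : Integrable (fun ω => W ω ^ q) P := by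
      refine Integrable.mono' ((integrable_const (1:ℝ)).add hWint) hWq_aesm ?_
      filter_upwards [hWnn] with ω h
      rw [Real.norm_eq_abs, abs_of_nonneg (Real.rpow_nonneg h q)]
      exact rpow_le_one_add_aux h hqpos.le hqlt1.le
    have hWf : RenyiFinite P W q :=
      ⟨fun h => absurd h hq1ne, fun _ _ => hWq_int,
        fun h => absurd h (not_lt.mpr hqpos.le)⟩
    have hμq : μ ^ q = (1 - α') ^ (1 - q) := by
      rw [hμdef, ← Real.rpow_mul hβ'0.le]
      congr 1
      rw [hqdef]
      field_simp
      ring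
    have hSW_ge : (1 - α') ^ (1 - q) ≤ ∫ ω, W ω ^ q ∂P := by
      rw [← hμq]
      have hconst : (∫ _ω : Ω, μ ^ q ∂P) = μ ^ q := by
        rw [integral_const, probReal_univ, one_smul]
      rw [← hconst]
      refine integral_mono_ae (integrable_const _) hWq_int ?_
      filter_upwards [hWge] with ω h
      exact Real.rpow_le_rpow hμ0.le h hqpos.le
    have hWe : renyiEntropy P W q ≤ Real.log (1 / (1 - α')) := by
      rw [renyiEntropy, if_neg hq0ne, if_neg hq1ne]
      exact entropy_le_of_moment_lt_one_aux hβ'0 hqlt1 hSW_ge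
    have hYint : Integrable Y P := hYtop.integrable le_top
    have hYW_eq : (fun ω => Y ω * W ω) = fun ω => lam * (Y ω * Z ω) + μ * Y ω := by
      funext ω; rw [hWdef]; ring
    have hYW_int : Integrable (fun ω => Y ω * W ω) P := by
      rw [hYW_eq]
      exact (hZi.const_mul lam).add (hYint.const_mul μ)
    refine ⟨W, hWd, hWf, hWe, hYW_int, ?_⟩
    have hint : (∫ ω, Y ω * W ω ∂P)
        = lam * (∫ ω, Y ω * Z ω ∂P) + μ * ∫ ω, Y ω ∂P := by
      rw [hYW_eq, integral_add (hZi.const_mul lam) (hYint.const_mul μ),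
        integral_const_mul, integral_const_mul]
    have hEY : 0 ≤ ∫ ω, Y ω ∂P := integral_nonneg_of_ae hY
    rw [hint]
    have h1 : lam⁻¹ * (lam * (∫ ω, Y ω * Z ω ∂P) + μ * ∫ ω, Y ω ∂P)
        = (∫ ω, Y ω * Z ω ∂P) + lam⁻¹ * (μ * ∫ ω, Y ω ∂P) := by
      field_simp
    have h2 : 0 ≤ lam⁻¹ * (μ * ∫ ω, Y ω ∂P) :=
      mul_nonneg (inv_nonneg.mpr hlam0.le) (mul_nonneg hμ0.le hEY)
    rw [h1]
    linarith

end
end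

section
/- Let α ∈ (0,1) and let either p > 1 or p < 0, with p' = p/(p-1). Then the Entropic Value-at-Risk has the alternative dual representation EVaR_α^p(Y) = sup{ E[YZ] : Z ≥ 0 a.s., E[Z] = 1, ‖Z‖*_{α,p'} ≤ 1 } for Y ∈ L^p(P) (for p > 1), respectively Y ∈ L^∞(P) (for p < 0). -/
open MeasureTheory Real Filter Topology

noncomputable section

variable {Ω : Type*} [MeasurableSpace Ω]

/-- Membership in the domain of `EVaR_α^p`: `L^p` for `p > 1`, `L^∞` for `p < 0`. -/
def MemDom (P : Measure Ω) (p : ℝ) (Y : Ω → ℝ) : Prop :=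
  if 1 < p then MemLp Y (ENNReal.ofReal p) P else MemLp Y ⊤ P

/-- The dual norm of `Y ↦ EVaR_α^p(|Y|)`, the supremum being taken over `Y` in the
domain of `EVaR_α^p`. -/
def dualNorm (P : Measure Ω) (α p : ℝ) (Z : Ω → ℝ) : EReal :=
  sSup {x : EReal | ∃ Y : Ω → ℝ, MemDom P p Y ∧
    EVaR P α p (fun ω => |Y ω|) ≤ (1 : EReal) ∧
    Integrable (fun ω => Y ω * Z ω) P ∧
    x = ((∫ ω, Y ω * Z ω ∂P : ℝ) : EReal)}

variable {P : Measure Ω}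

lemma le_EVaRd {α q : ℝ} {Y₀ Z : Ω → ℝ} (h1 : IsDensity P Z) (h2 : RenyiFinite P Z q)
    (h3 : renyiEntropy P Z q ≤ Real.log (1 / (1 - α)))
    (h4 : Integrable (fun ω => Y₀ ω * Z ω) P) :
    ((∫ ω, Y₀ ω * Z ω ∂P : ℝ) : EReal) ≤ EVaRd P α q Y₀ :=
  le_sSup ⟨Z, h1, h2, h3, h4, rfl⟩

lemma EVaRd_le {α q b : ℝ} {Y₀ : Ω → ℝ}
    (h : ∀ Z : Ω → ℝ, IsDensity P Z → RenyiFinite P Z q →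
      renyiEntropy P Z q ≤ Real.log (1 / (1 - α)) →
      Integrable (fun ω => Y₀ ω * Z ω) P → ∫ ω, Y₀ ω * Z ω ∂P ≤ b) :
    EVaRd P α q Y₀ ≤ ((b : ℝ) : EReal) := by
  refine sSup_le ?_
  rintro x ⟨Z, h1, h2, h3, h4, rfl⟩
  exact EReal.coe_le_coe_iff.2 (h Z h1 h2 h3 h4)

lemma feas_one [IsProbabilityMeasure P] {α q : ℝ} (hq0 : q ≠ 0) (hq1 : q ≠ 1)
    (hL : 0 ≤ Real.log (1 / (1 - α))) :
    IsDensity P (fun _ => (1 : ℝ)) ∧ RenyiFinite P (fun _ => (1 : ℝ)) q ∧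
      renyiEntropy P (fun _ => (1 : ℝ)) q ≤ Real.log (1 / (1 - α)) := by
  refine ⟨⟨integrable_const 1, Eventually.of_forall fun _ => zero_le_one, by simp⟩,
    ⟨fun _ => by simp only [Real.log_one, mul_zero]; exact integrable_const 0,
     fun _ _ => by simp only [Real.one_rpow]; exact integrable_const 1,
     fun _ => Eventually.of_forall fun _ => one_pos⟩, ?_⟩
  rw [renyiEntropy, if_neg hq0, if_neg hq1]
  simp only [Real.one_rpow, integral_const, measure_univ, ENNReal.toReal_one, probReal_univ, smul_eq_mul,
    one_mul, Real.log_one, mul_zero]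
  exact hL

lemma memDom_of_le [IsFiniteMeasure P] {p : ℝ} {f g : Ω → ℝ} (hg : MemDom P p g)
    (hf : AEStronglyMeasurable f P) (h : ∀ᵐ ω ∂P, ‖f ω‖ ≤ ‖g ω‖) : MemDom P p f := by
  unfold MemDom at hg ⊢
  split_ifs at hg ⊢ <;> exact hg.of_le hf h

lemma memDom_norm_add_const [IsFiniteMeasure P] {p : ℝ} {f : Ω → ℝ} (hf : MemDom P p f)
    (c : ℝ) : MemDom P p (fun ω => ‖f ω‖ + c) := by
  unfold MemDom at hf ⊢
  split_ifs at hf ⊢ <;> exact hf.norm.add (memLp_const c)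

lemma memDom_const_mul {p : ℝ} {f : Ω → ℝ} (hf : MemDom P p f) (c : ℝ) :
    MemDom P p (fun ω => c * f ω) := by
  unfold MemDom at hf ⊢
  split_ifs at hf ⊢ <;> exact hf.const_mul c

lemma step_bound [IsProbabilityMeasure P] {α p : ℝ} (hα : α ∈ Set.Ioo (0 : ℝ) 1)
    (hp1 : p ≠ 1) (hq0 : p / (p - 1) ≠ 0) (hq1 : p / (p - 1) ≠ 1)
    {Y : Ω → ℝ} (hY : MemDom P p Y) (hYint : Integrable Y P)
    {r : ℝ} (hr : EVaRd P α (p / (p - 1)) Y = ((r : ℝ) : EReal))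
    {Z : Ω → ℝ} (hZint : Integrable Z P) (hZpos : 0 ≤ᵐ[P] Z) (hZone : ∫ ω, Z ω ∂P = 1)
    (hZdual : dualNorm P α p Z ≤ (1 : EReal)) (hYZ : Integrable (fun ω => Y ω * Z ω) P)
    {n : ℝ} (hn : 0 ≤ n) {ε : ℝ} (hε : 0 ≤ ε)
    (hεb : ∀ Z' : Ω → ℝ, IsDensity P Z' → RenyiFinite P Z' (p / (p - 1)) →
      renyiEntropy P Z' (p / (p - 1)) ≤ Real.log (1 / (1 - α)) →
      Integrable (fun ω => (max (Y ω) (-n) - Y ω) * Z' ω) P ∧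
      ∫ ω, (max (Y ω) (-n) - Y ω) * Z' ω ∂P ≤ ε) :
    ∫ ω, Y ω * Z ω ∂P ≤ r + ε := by
  have hL : 0 ≤ Real.log (1 / (1 - α)) := by
    have h1 : (0 : ℝ) < 1 - α := by linarith [hα.2]
    refine Real.log_nonneg ?_
    rw [le_div_iff₀ h1]; nlinarith [hα.1]
  set g : Ω → ℝ := fun ω => max (Y ω) (-n) + n with hg_def
  set f : Ω → ℝ := fun ω => max (Y ω) (-n) - Y ω with hf_def
  have hg0 : ∀ ω, 0 ≤ g ω := fun ω => by
    have := le_max_right (Y ω) (-n); simp only [hg_def]; linarith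
  have hYgf : ∀ ω, Y ω = g ω - f ω - n := fun ω => by
    simp only [hg_def, hf_def]; ring
  have hgle : ∀ ω, g ω ≤ |Y ω| + 2 * n := fun ω => by
    have h1 : max (Y ω) (-n) ≤ |Y ω| + n :=
      max_le ((le_abs_self _).trans (by linarith)) (by linarith [abs_nonneg (Y ω)])
    simp only [hg_def]; linarith
  have hgmeas : AEStronglyMeasurable g P :=
    ((hYint.aemeasurable.max aemeasurable_const).add_const n).aestronglyMeasurable
  have hgint : Integrable g P := by
    refine (hYint.abs.add (integrable_const (2 * n))).mono hgmeas
      (Eventually.of_forall fun ω => ?_)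
    simp only [Pi.add_apply]
    rw [Real.norm_eq_abs, Real.norm_eq_abs, abs_of_nonneg (hg0 ω),
      abs_of_nonneg (by linarith [abs_nonneg (Y ω)] : (0:ℝ) ≤ |Y ω| + 2 * n)]
    exact hgle ω
  -- Part 1 : EVaRd of g is bounded above
  have hT_le : EVaRd P α (p / (p - 1)) g ≤ ((r + ε + n : ℝ) : EReal) := by
    refine EVaRd_le fun Z' h1 h2 h3 h4 => ?_
    obtain ⟨hfZ'int, hfZ'le⟩ := hεb Z' h1 h2 h3
    have hZ'int := h1.1
    have hYZ'int : Integrable (fun ω => Y ω * Z' ω) P := by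
      refine ((h4.sub hfZ'int).sub (hZ'int.const_mul n)).congr
        (Eventually.of_forall fun ω => ?_)
      simp only [Pi.sub_apply]
      simp only [hg_def]; ring
    have hYZ'le : ∫ ω, Y ω * Z' ω ∂P ≤ r := by
      have h5 := le_EVaRd h1 h2 h3 hYZ'int
      rw [hr] at h5
      exact EReal.coe_le_coe_iff.1 h5
    have hsplit : (fun ω => g ω * Z' ω)
        = fun ω => Y ω * Z' ω + f ω * Z' ω + n * Z' ω := by
      funext ω; rw [hYgf ω]; ring
    rw [hsplit]
    have e1 : ∫ ω, (Y ω * Z' ω + f ω * Z' ω + n * Z' ω) ∂P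
        = (∫ ω, (Y ω * Z' ω + f ω * Z' ω) ∂P) + ∫ ω, n * Z' ω ∂P :=
      integral_add (hYZ'int.add hfZ'int) (hZ'int.const_mul n)
    have e2 : ∫ ω, (Y ω * Z' ω + f ω * Z' ω) ∂P
        = (∫ ω, Y ω * Z' ω ∂P) + ∫ ω, f ω * Z' ω ∂P :=
      integral_add hYZ'int hfZ'int
    have e3 : ∫ ω, n * Z' ω ∂P = n := by
      rw [integral_const_mul, h1.2.2, mul_one]
    rw [e1, e2, e3]
    linarith
  -- Part 2 : EVaRd of g is bounded below by E g
  have hT_ge : ((∫ ω, g ω ∂P : ℝ) : EReal) ≤ EVaRd P α (p / (p - 1)) g := by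
    obtain ⟨hd1, hd2, hd3⟩ := feas_one (P := P) hq0 hq1 hL
    have h5 := le_EVaRd (Y₀ := g) hd1 hd2 hd3 (by simpa using hgint)
    simpa using h5
  have hTne_top : EVaRd P α (p / (p - 1)) g ≠ ⊤ :=
    (hT_le.trans_lt (EReal.coe_lt_top _)).ne
  have hTne_bot : EVaRd P α (p / (p - 1)) g ≠ ⊥ :=
    ((EReal.bot_lt_coe _).trans_le hT_ge).ne'
  set c : ℝ := (EVaRd P α (p / (p - 1)) g).toReal with hc_def
  have hcT : EVaRd P α (p / (p - 1)) g = ((c : ℝ) : EReal) :=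
    (EReal.coe_toReal hTne_top hTne_bot).symm
  have hc_le : c ≤ r + ε + n := by
    rw [hcT] at hT_le; exact EReal.coe_le_coe_iff.1 hT_le
  have hc_ge : ∫ ω, g ω ∂P ≤ c := by
    rw [hcT] at hT_ge; exact EReal.coe_le_coe_iff.1 hT_ge
  have hc0 : 0 ≤ c := le_trans (integral_nonneg hg0) hc_ge
  have hgZmeas : AEStronglyMeasurable (fun ω => g ω * Z ω) P :=
    hgmeas.mul hZint.aestronglyMeasurable
  have hgZint : Integrable (fun ω => g ω * Z ω) P := by
    refine (hYZ.abs.add (hZint.abs.const_mul (2 * n))).mono hgZmeas ?_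
    refine Eventually.of_forall fun ω => ?_
    have h1 : |Y ω * Z ω| = |Y ω| * |Z ω| := abs_mul _ _
    have h2 : (0:ℝ) ≤ |Y ω * Z ω| + 2 * n * |Z ω| := by positivity
    simp only [Pi.add_apply]
    rw [Real.norm_eq_abs, Real.norm_eq_abs, abs_of_nonneg h2, abs_mul,
      abs_of_nonneg (hg0 ω), h1]
    have := hgle ω
    nlinarith [abs_nonneg (Z ω), abs_nonneg (Y ω)]
  -- Part 3 : E[g Z] ≤ c via the dual-norm constraint
  have hgZle : ∫ ω, g ω * Z ω ∂P ≤ c := by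
    rcases hc0.eq_or_lt with hc | hc
    · have hg_int_zero : ∫ ω, g ω ∂P = 0 :=
        le_antisymm (by linarith) (integral_nonneg hg0)
      have hgzero : g =ᵐ[P] 0 := (integral_eq_zero_iff_of_nonneg hg0 hgint).1 hg_int_zero
      have h1 : (fun ω => g ω * Z ω) =ᵐ[P] 0 := by
        filter_upwards [hgzero] with ω hω
        simp [hω]
      rw [integral_congr_ae h1]
      simp only [Pi.zero_apply, integral_zero]
      linarith
    · set Y' : Ω → ℝ := fun ω => c⁻¹ * g ω with hY'_def
      have hY'0 : ∀ ω, 0 ≤ Y' ω := fun ω => mul_nonneg (inv_nonneg.2 hc0) (hg0 ω)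
      have hY'abs : (fun ω => |Y' ω|) = Y' := funext fun ω => abs_of_nonneg (hY'0 ω)
      have hgdom : MemDom P p g := by
        refine memDom_of_le (memDom_norm_add_const hY (2 * n)) hgmeas
          (Eventually.of_forall fun ω => ?_)
        rw [Real.norm_eq_abs, abs_of_nonneg (hg0 ω), Real.norm_eq_abs, Real.norm_eq_abs,
          abs_of_nonneg (by linarith [abs_nonneg (Y ω)] : (0:ℝ) ≤ |Y ω| + 2 * n)]
        exact hgle ω
      have hY'dom : MemDom P p Y' := memDom_const_mul hgdom c⁻¹
      have hEg_le : ∀ Z'' : Ω → ℝ, IsDensity P Z'' → RenyiFinite P Z'' (p / (p - 1)) →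
          renyiEntropy P Z'' (p / (p - 1)) ≤ Real.log (1 / (1 - α)) →
          Integrable (fun ω => g ω * Z'' ω) P → ∫ ω, g ω * Z'' ω ∂P ≤ c := by
        intro Z'' h1 h2 h3 h4
        have h5 := le_EVaRd h1 h2 h3 h4
        rw [hcT] at h5
        exact EReal.coe_le_coe_iff.1 h5
      have hY'evar : EVaR P α p (fun ω => |Y' ω|) ≤ (1 : EReal) := by
        rw [hY'abs, EVaR, if_neg hp1]
        have h6 : EVaRd P α (p / (p - 1)) Y' ≤ (((1:ℝ) : ℝ) : EReal) := by
          refine EVaRd_le fun Z'' h1 h2 h3 h4 => ?_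
          have hgZ'' : Integrable (fun ω => g ω * Z'' ω) P := by
            refine (h4.const_mul c).congr (Eventually.of_forall fun ω => ?_)
            simp only [hY'_def]
            field_simp
          have h7 : ∫ ω, g ω * Z'' ω ∂P ≤ c := hEg_le Z'' h1 h2 h3 hgZ''
          have h8 : ∫ ω, Y' ω * Z'' ω ∂P = c⁻¹ * ∫ ω, g ω * Z'' ω ∂P := by
            rw [← integral_const_mul]
            refine integral_congr_ae (Eventually.of_forall fun ω => ?_)
            simp only [hY'_def]; ring
          rw [h8]
          calc c⁻¹ * ∫ ω, g ω * Z'' ω ∂P ≤ c⁻¹ * c :=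
                mul_le_mul_of_nonneg_left h7 (inv_nonneg.2 hc0)
            _ = 1 := inv_mul_cancel₀ hc.ne'
        simpa using h6
      have hY'Zint : Integrable (fun ω => Y' ω * Z ω) P := by
        refine (hgZint.const_mul c⁻¹).congr (Eventually.of_forall fun ω => ?_)
        simp only [hY'_def]; ring
      have hmem : ((∫ ω, Y' ω * Z ω ∂P : ℝ) : EReal) ≤ dualNorm P α p Z :=
        le_sSup ⟨Y', hY'dom, hY'evar, hY'Zint, rfl⟩
      have h7 : ∫ ω, Y' ω * Z ω ∂P ≤ 1 := by
        have h8 := hmem.trans hZdual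
        have h9 : ((1:ℝ) : EReal) = (1 : EReal) := rfl
        rw [← h9] at h8
        exact EReal.coe_le_coe_iff.1 h8
      have h8 : ∫ ω, Y' ω * Z ω ∂P = c⁻¹ * ∫ ω, g ω * Z ω ∂P := by
        rw [← integral_const_mul]
        refine integral_congr_ae (Eventually.of_forall fun ω => ?_)
        simp only [hY'_def]; ring
      rw [h8] at h7
      have h9 := mul_le_mul_of_nonneg_left h7 hc0
      rw [mul_one, ← mul_assoc, mul_inv_cancel₀ hc.ne', one_mul] at h9
      exact h9
  -- Part 4 : conclude
  have hYnZint : Integrable (fun ω => (Y ω + n) * Z ω) P := by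
    refine (hYZ.add (hZint.const_mul n)).congr (Eventually.of_forall fun ω => ?_)
    simp only [Pi.add_apply]; ring
  have hmono : ∫ ω, (Y ω + n) * Z ω ∂P ≤ ∫ ω, g ω * Z ω ∂P := by
    refine integral_mono_ae hYnZint hgZint ?_
    filter_upwards [hZpos] with ω hω
    refine mul_le_mul_of_nonneg_right ?_ hω
    simp only [hg_def]
    linarith [le_max_left (Y ω) (-n)]
  have hsplit2 : ∫ ω, (Y ω + n) * Z ω ∂P = (∫ ω, Y ω * Z ω ∂P) + n := by
    have h1 : (fun ω => (Y ω + n) * Z ω) = fun ω => Y ω * Z ω + n * Z ω := by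
      funext ω; ring
    rw [h1]
    have e1 : ∫ ω, (Y ω * Z ω + n * Z ω) ∂P
        = (∫ ω, Y ω * Z ω ∂P) + ∫ ω, n * Z ω ∂P := integral_add hYZ (hZint.const_mul n)
    have e2 : ∫ ω, n * Z ω ∂P = n := by rw [integral_const_mul, hZone, mul_one]
    rw [e1, e2]
  linarith

lemma holder_piece [IsProbabilityMeasure P] {α p : ℝ} (hp : 1 < p)
    {Y : Ω → ℝ} (hYp : MemLp Y (ENNReal.ofReal p) P) {n : ℝ} (hn : 0 ≤ n) :
    ∀ Z' : Ω → ℝ, IsDensity P Z' → RenyiFinite P Z' (p / (p - 1)) →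
      renyiEntropy P Z' (p / (p - 1)) ≤ Real.log (1 / (1 - α)) →
      Integrable (fun ω => (max (Y ω) (-n) - Y ω) * Z' ω) P ∧
      ∫ ω, (max (Y ω) (-n) - Y ω) * Z' ω ∂P ≤
        (∫ ω, (max (Y ω) (-n) - Y ω) ^ p ∂P) ^ (1 / p) *
          (Real.exp ((p / (p - 1) - 1) * Real.log (1 / (1 - α)))) ^ (1 / (p / (p - 1))) := by
  intro Z' h1 h2 h3
  have hpq : p.HolderConjugate (p / (p - 1)) :=
    (Real.holderConjugate_iff_eq_conjExponent hp).2 rfl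
  set q : ℝ := p / (p - 1) with hq_def
  have hq_gt : 1 < q := hpq.symm.lt
  have hq0 : q ≠ 0 := hpq.symm.ne_zero
  have hq1 : q ≠ 1 := hq_gt.ne'
  set f : Ω → ℝ := fun ω => max (Y ω) (-n) - Y ω with hf_def
  have hf0 : ∀ ω, 0 ≤ f ω := fun ω => by
    simp only [hf_def]; linarith [le_max_left (Y ω) (-n)]
  have hfle : ∀ ω, f ω ≤ |Y ω| := fun ω => by
    simp only [hf_def]
    rcases le_or_gt (-n) (Y ω) with h | h
    · rw [max_eq_left h]; simp [abs_nonneg]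
    · rw [max_eq_right h.le]
      have : Y ω < 0 := by linarith
      rw [abs_of_neg this]; linarith
  have hfmeas : AEStronglyMeasurable f P :=
    ((hYp.aestronglyMeasurable.aemeasurable.max aemeasurable_const).sub
      hYp.aestronglyMeasurable.aemeasurable).aestronglyMeasurable
  have hf_mem : MemLp f (ENNReal.ofReal p) P := by
    refine hYp.of_le hfmeas (Eventually.of_forall fun ω => ?_)
    rw [Real.norm_eq_abs, Real.norm_eq_abs, abs_of_nonneg (hf0 ω)]
    exact hfle ω
  -- Z' is in L^q with controlled norm
  have hZ'pos := h1.2.1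
  have hZ'q_int : Integrable (fun ω => Z' ω ^ q) P := h2.2.1 hq0 hq1
  have e1 : (ENNReal.ofReal q) ≠ 0 := by
    simp only [ne_eq, ENNReal.ofReal_eq_zero, not_le]
    linarith
  have e2 : (ENNReal.ofReal q) ≠ ⊤ := ENNReal.ofReal_ne_top
  have hZ'mem : MemLp Z' (ENNReal.ofReal q) P := by
    have h9 : MemLp (fun x => ‖Z' x‖ ^ (ENNReal.ofReal q).toReal)
        ((ENNReal.ofReal q) / (ENNReal.ofReal q)) P := by
      rw [ENNReal.div_self e1 e2, ENNReal.toReal_ofReal (by linarith : (0:ℝ) ≤ q)]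
      refine memLp_one_iff_integrable.2 (hZ'q_int.congr ?_)
      filter_upwards [hZ'pos] with ω hω
      rw [Real.norm_eq_abs, abs_of_nonneg hω]
    exact (memLp_norm_rpow_iff h1.1.aestronglyMeasurable e1 e2).1 h9
  -- entropy constraint gives the L^q-norm bound
  have hI_nonneg : 0 ≤ ∫ ω, Z' ω ^ q ∂P :=
    integral_nonneg_of_ae (hZ'pos.mono fun ω hω => Real.rpow_nonneg hω q)
  set B : ℝ := Real.exp ((q - 1) * Real.log (1 / (1 - α))) with hB_def
  have hIB : ∫ ω, Z' ω ^ q ∂P ≤ B := by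
    rw [renyiEntropy, if_neg hq0, if_neg hq1] at h3
    have hq1' : (0:ℝ) < q - 1 := by linarith
    have h4 : Real.log (∫ ω, Z' ω ^ q ∂P) ≤ (q - 1) * Real.log (1 / (1 - α)) := by
      have h5 := (inv_mul_le_iff₀ hq1').1 h3
      linarith [h5]
    rcases hI_nonneg.eq_or_lt with h6 | h6
    · rw [← h6]; positivity
    · calc ∫ ω, Z' ω ^ q ∂P = Real.exp (Real.log (∫ ω, Z' ω ^ q ∂P)) :=
            (Real.exp_log h6).symm
        _ ≤ B := Real.exp_le_exp.2 h4
  -- integrability of the product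
  have hprod : Integrable (fun ω => f ω * Z' ω) P := by
    have h10 : MemLp (f • Z') 1 P := by
      haveI : ENNReal.HolderTriple (ENNReal.ofReal p) (ENNReal.ofReal q) 1 :=
        ⟨by rw [inv_one]; exact hpq.inv_add_inv_ennreal⟩
      exact hZ'mem.smul hf_mem
    exact (memLp_one_iff_integrable.1 h10).congr (Eventually.of_forall fun ω => rfl)
  refine ⟨hprod, ?_⟩
  calc ∫ ω, f ω * Z' ω ∂P
      ≤ (∫ ω, f ω ^ p ∂P) ^ (1 / p) * (∫ ω, Z' ω ^ q ∂P) ^ (1 / q) :=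
        integral_mul_le_Lp_mul_Lq_of_nonneg hpq (Eventually.of_forall hf0) hZ'pos hf_mem hZ'mem
    _ ≤ (∫ ω, f ω ^ p ∂P) ^ (1 / p) * B ^ (1 / q) := by
        refine mul_le_mul_of_nonneg_left ?_ ?_
        · exact Real.rpow_le_rpow hI_nonneg hIB (by positivity)
        · exact Real.rpow_nonneg (integral_nonneg fun ω => Real.rpow_nonneg (hf0 ω) p) _

lemma tendsto_piece [IsProbabilityMeasure P] {p : ℝ} (hp : 1 < p)
    {Y : Ω → ℝ} (hYp : MemLp Y (ENNReal.ofReal p) P) :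
    Tendsto (fun n : ℕ => ∫ ω, (max (Y ω) (-(n:ℝ)) - Y ω) ^ p ∂P) atTop (𝓝 0) := by
  have hp0 : (0:ℝ) < p := by linarith
  have hbint : Integrable (fun ω => |Y ω| ^ p) P := by
    have h1 := hYp.integrable_norm_rpow (by simp [ENNReal.ofReal_eq_zero]; linarith)
      ENNReal.ofReal_ne_top
    simpa [ENNReal.toReal_ofReal hp0.le, Real.norm_eq_abs] using h1
  have h2 : Tendsto (fun n : ℕ => ∫ ω, (max (Y ω) (-(n:ℝ)) - Y ω) ^ p ∂P) atTop
      (𝓝 (∫ ω, (0:ℝ) ∂P)) := by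
    refine tendsto_integral_of_dominated_convergence (fun ω => |Y ω| ^ p) ?_ hbint ?_ ?_
    · intro n
      exact (((hYp.aestronglyMeasurable.aemeasurable.max aemeasurable_const).sub
        hYp.aestronglyMeasurable.aemeasurable).pow_const p).aestronglyMeasurable
    · intro n
      refine Eventually.of_forall fun ω => ?_
      have hf0 : 0 ≤ max (Y ω) (-(n:ℝ)) - Y ω := by linarith [le_max_left (Y ω) (-(n:ℝ))]
      have hfle : max (Y ω) (-(n:ℝ)) - Y ω ≤ |Y ω| := by
        rcases le_or_gt (-(n:ℝ)) (Y ω) with h | h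
        · rw [max_eq_left h]; simp [abs_nonneg]
        · rw [max_eq_right h.le]
          have h3 : Y ω < 0 := by
            have : (0:ℝ) ≤ (n:ℝ) := n.cast_nonneg
            linarith
          rw [abs_of_neg h3]
          have : (0:ℝ) ≤ (n:ℝ) := n.cast_nonneg
          linarith
      rw [Real.norm_eq_abs, abs_of_nonneg (Real.rpow_nonneg hf0 p)]
      exact Real.rpow_le_rpow hf0 hfle hp0.le
    · refine Eventually.of_forall fun ω => ?_
      have hev : ∀ᶠ n : ℕ in atTop, (max (Y ω) (-(n:ℝ)) - Y ω) ^ p = 0 := by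
        filter_upwards [eventually_ge_atTop ⌈|Y ω|⌉₊] with n hn
        have h1 : -(n:ℝ) ≤ Y ω := by
          have h2 : |Y ω| ≤ (n:ℝ) := le_trans (Nat.le_ceil _) (by exact_mod_cast hn)
          linarith [neg_abs_le (Y ω)]
        rw [max_eq_left h1, sub_self, Real.zero_rpow hp0.ne']
      exact Tendsto.congr' (by filter_upwards [hev] with n hn; exact hn.symm) tendsto_const_nhds
  simpa using h2

/-- alternative dual representation of the Entropic Value-at-Risk for
`p > 1` or `p < 0`: `EVaR_α^p(Y) = sup { E[YZ] : Z ≥ 0, E[Z] = 1, ‖Z‖*_{α,p'} ≤ 1 }`. -/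
theorem evar_alt_dual_repr (P : Measure Ω) [IsProbabilityMeasure P]
    (α p : ℝ) (hα : α ∈ Set.Ioo (0 : ℝ) 1) (hp : 1 < p ∨ p < 0)
    (Y : Ω → ℝ) (hY : MemDom P p Y) :
    EVaR P α p Y =
      sSup {x : EReal | ∃ Z : Ω → ℝ, Integrable Z P ∧ 0 ≤ᵐ[P] Z ∧
        (∫ ω, Z ω ∂P) = 1 ∧ dualNorm P α p Z ≤ (1 : EReal) ∧
        Integrable (fun ω => Y ω * Z ω) P ∧
        x = ((∫ ω, Y ω * Z ω ∂P : ℝ) : EReal)} := by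
  have hp1 : p ≠ 1 := by rcases hp with h | h <;> linarith
  have hq0 : p / (p - 1) ≠ 0 := by
    rcases hp with h | h
    · exact (div_pos (by linarith) (by linarith)).ne'
    · exact (div_pos_iff.2 (Or.inr ⟨by linarith, by linarith⟩)).ne'
  have hq1 : p / (p - 1) ≠ 1 := by
    intro h
    have h2 : p = p - 1 := (div_eq_one_iff_eq (by intro h3; apply hp1; linarith)).1 h
    linarith
  have hL : 0 ≤ Real.log (1 / (1 - α)) := by
    have h1 : (0 : ℝ) < 1 - α := by linarith [hα.2]
    refine Real.log_nonneg ?_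
    rw [le_div_iff₀ h1]; nlinarith [hα.1]
  have hYint : Integrable Y P := by
    unfold MemDom at hY
    split_ifs at hY with h
    · exact hY.integrable (ENNReal.one_le_ofReal.2 (by linarith))
    · exact hY.integrable le_top
  have hYdom : MemDom P p Y := by
    unfold MemDom; exact hY
  rw [EVaR, if_neg hp1]
  apply le_antisymm
  · refine sSup_le_sSup ?_
    rintro x ⟨Z, hd, hrf, hent, hint, rfl⟩
    refine ⟨Z, hd.1, hd.2.1, hd.2.2, ?_, hint, rfl⟩
    refine sSup_le ?_
    rintro y ⟨Y', hY'dom, hY'evar, hY'Zint, rfl⟩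
    have hZpos := hd.2.1
    have habs : Integrable (fun ω => |Y' ω| * Z ω) P := by
      refine hY'Zint.abs.congr ?_
      filter_upwards [hZpos] with ω hω
      rw [abs_mul, abs_of_nonneg hω]
    have h1 : ∫ ω, Y' ω * Z ω ∂P ≤ ∫ ω, |Y' ω| * Z ω ∂P := by
      refine integral_mono_ae hY'Zint habs ?_
      filter_upwards [hZpos] with ω hω
      exact mul_le_mul_of_nonneg_right (le_abs_self _) hω
    have h2 := le_EVaRd (Y₀ := fun ω => |Y' ω|) hd hrf hent habs
    rw [EVaR, if_neg hp1] at hY'evar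
    calc ((∫ ω, Y' ω * Z ω ∂P : ℝ) : EReal)
        ≤ ((∫ ω, |Y' ω| * Z ω ∂P : ℝ) : EReal) := EReal.coe_le_coe_iff.2 h1
      _ ≤ EVaRd P α (p / (p - 1)) fun ω => |Y' ω| := h2
      _ ≤ 1 := hY'evar
  · refine sSup_le ?_
    rintro x ⟨Z, hZint, hZpos, hZone, hZdual, hYZ, rfl⟩
    by_cases hT : EVaRd P α (p / (p - 1)) Y = ⊤
    · rw [hT]; exact le_top
    obtain ⟨hd1, hd2, hd3⟩ := feas_one (P := P) hq0 hq1 hL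
    have hge : ((∫ ω, Y ω ∂P : ℝ) : EReal) ≤ EVaRd P α (p / (p - 1)) Y := by
      have h5 := le_EVaRd (Y₀ := Y) hd1 hd2 hd3 (by simpa using hYint)
      simpa using h5
    set r : ℝ := (EVaRd P α (p / (p - 1)) Y).toReal with hr_def
    have hr : EVaRd P α (p / (p - 1)) Y = ((r : ℝ) : EReal) :=
      (EReal.coe_toReal hT ((EReal.bot_lt_coe _).trans_le hge).ne').symm
    rw [hr]
    refine EReal.coe_le_coe_iff.2 ?_
    rcases hp with hp' | hp'
    · -- case 1 < p
      have hYp : MemLp Y (ENNReal.ofReal p) P := by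
        have h6 := hYdom; unfold MemDom at h6; rwa [if_pos hp'] at h6
      set C : ℝ := (Real.exp ((p / (p - 1) - 1) * Real.log (1 / (1 - α)))) ^ (1 / (p / (p - 1)))
        with hC_def
      have hC0 : 0 ≤ C := Real.rpow_nonneg (Real.exp_pos _).le _
      set F : ℕ → ℝ := fun n => ∫ ω, (max (Y ω) (-(n:ℝ)) - Y ω) ^ p ∂P with hF_def
      have hF0 : ∀ n : ℕ, 0 ≤ F n := fun n =>
        integral_nonneg fun ω => Real.rpow_nonneg
          (by linarith [le_max_left (Y ω) (-(n:ℝ))]) p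
      have hbound : ∀ n : ℕ, ∫ ω, Y ω * Z ω ∂P ≤ r + F n ^ (1 / p) * C := by
        intro n
        exact step_bound hα hp1 hq0 hq1 hYdom hYint hr hZint hZpos hZone hZdual hYZ
          (n := (n : ℝ)) n.cast_nonneg
          (mul_nonneg (Real.rpow_nonneg (hF0 n) _) hC0)
          (holder_piece hp' hYp n.cast_nonneg)
      have hFlim : Tendsto F atTop (𝓝 0) := tendsto_piece hp' hYp
      have hεlim : Tendsto (fun n : ℕ => r + F n ^ (1 / p) * C) atTop (𝓝 r) := by
        have h1 : Tendsto (fun n : ℕ => F n ^ (1 / p)) atTop (𝓝 0) := by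
          have h2 := hFlim.rpow_const (p := 1 / p) (Or.inr (by positivity))
          rwa [Real.zero_rpow (by positivity : (1:ℝ) / p ≠ 0)] at h2
        have h3 : Tendsto (fun n : ℕ => F n ^ (1 / p) * C) atTop (𝓝 0) := by
          simpa using h1.mul_const C
        simpa using tendsto_const_nhds.add h3
      exact ge_of_tendsto hεlim (Eventually.of_forall hbound)
    · -- case p < 0
      have hYtop : MemLp Y ⊤ P := by
        have h6 := hYdom; unfold MemDom at h6; rwa [if_neg (by linarith)] at h6
      have hMtop : eLpNormEssSup Y P ≠ ⊤ := by
        have h7 := hYtop.2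
        rw [eLpNorm_exponent_top] at h7
        exact h7.ne
      have hMae : ∀ᵐ ω ∂P, |Y ω| ≤ (eLpNormEssSup Y P).toReal := by
        filter_upwards [ae_le_eLpNormEssSup (f := Y) (μ := P)] with ω hω
        have h2 := ENNReal.toReal_mono hMtop hω
        rwa [toReal_enorm, Real.norm_eq_abs] at h2
      set M : ℝ := (eLpNormEssSup Y P).toReal with hM_def
      have hbound : ∫ ω, Y ω * Z ω ∂P ≤ r + 0 := by
        refine step_bound hα hp1 hq0 hq1 hYdom hYint hr hZint hZpos hZone hZdual hYZ
          (n := ((⌈M⌉₊ : ℕ) : ℝ)) (Nat.cast_nonneg _) le_rfl ?_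
        intro Z' h1 h2 h3
        have hfz : (fun ω => (max (Y ω) (-((⌈M⌉₊ : ℕ) : ℝ)) - Y ω) * Z' ω) =ᵐ[P] 0 := by
          filter_upwards [hMae] with ω hω
          have h4 : -(((⌈M⌉₊ : ℕ) : ℝ)) ≤ Y ω := by
            have h5 : M ≤ ((⌈M⌉₊ : ℕ) : ℝ) := Nat.le_ceil M
            have h6 := neg_abs_le (Y ω)
            linarith
          simp [max_eq_left h4]
        constructor
        · exact (integrable_zero _ _ _).congr hfz.symm
        · rw [integral_congr_ae hfz]
          simp
      linarith [hbound]

end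
end
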